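/- arXiv:2011.11990 — 4 statements merged into one kernel-verified Lean document; each statement's English description precedes it below -/
import Mathlib

section
/- Divergence identity for the weighted multiplier. Let m ≥ 0, γ > 0, and let φ be a smooth function on an open subset of ℝ^{1+2}; set f := ∂_t²φ − ∂_1²φ − ∂_2²φ + m²φ. Then at every point with 0 < r < t the following pointwise identity holds: (1/2) ∂_t [ (t − r)^{−γ} ( (∂_t φ)² + Σ_{a=1,2} (∂_a φ)² + m² φ² ) ] − Σ_{a=1,2} ∂_a [ (t − r)^{−γ} ∂_t φ ∂_a φ ] + (γ/2) (t − r)^{−γ−1} [ Σ_{a=1,2} ( (x^a/r) ∂_t φ + ∂_a φ )² + m² φ² ] = (t − r)^{−γ} f ∂_t φ. -/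
noncomputable section

open MeasureTheory

/-- A point of `ℝ^{1+2}`; coordinate `0` is the time `t`, coordinates `1, 2` are spatial. -/
abbrev Pt : Type := Fin 3 → ℝ

/-- The spatial radius `r = |x| = √((x¹)² + (x²)²)`. -/
def rad (p : Pt) : ℝ := Real.sqrt ((p 1)^2 + (p 2)^2)

/-- The coordinate partial derivative `∂_i` (with `∂_0 = ∂_t`). -/
def pd (i : Fin 3) (φ : Pt → ℝ) (p : Pt) : ℝ := fderiv ℝ φ p (Pi.single i 1)

/-- `−□φ = ∂_t²φ − ∂_1²φ − ∂_2²φ`. -/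
def negBox (φ : Pt → ℝ) (p : Pt) : ℝ :=
  pd 0 (pd 0 φ) p - pd 1 (pd 1 φ) p - pd 2 (pd 2 φ) p

/-- The Lorentz boost `L_a = x^a ∂_t + t ∂_a`, for `a ∈ {1,2}` (indexed by `Fin 2`,
with `a : Fin 2` corresponding to the spatial coordinate `a.succ`). -/
def boost (a : Fin 2) (φ : Pt → ℝ) (p : Pt) : ℝ :=
  p a.succ * pd 0 φ p + p 0 * pd a.succ φ p

/-- The semi-hyperboloidal derivative `∂̲_a = (x^a/t) ∂_t + ∂_a`, `a ∈ {1,2}` (indexed by `Fin 2`). -/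
def ubd (a : Fin 2) (φ : Pt → ℝ) (p : Pt) : ℝ :=
  (p a.succ / p 0) * pd 0 φ p + pd a.succ φ p

/-- `∂̲_β` for `β ∈ {0,1,2}`, with `∂̲_0 = ∂_t`. -/
def ubar (β : Fin 3) (φ : Pt → ℝ) (p : Pt) : ℝ :=
  if β = 0 then pd 0 φ p else (p β / p 0) * pd 0 φ p + pd β φ p

/-- Iterated coordinate derivatives `∂^I`. -/
def pdSeq : List (Fin 3) → (Pt → ℝ) → Pt → ℝ
  | [], φ => φ
  | i :: I, φ => pd i (pdSeq I φ)

/-- Iterated boosts `L^J`. -/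
def boostSeq : List (Fin 2) → (Pt → ℝ) → Pt → ℝ
  | [], φ => φ
  | a :: J, φ => boost a (boostSeq J φ)

/-- The interior of the light cone, `K = {(t,x) : r < t − 1}`. -/
def coneK : Set Pt := {p | rad p < p 0 - 1}

/-- The slab `K_{[s0,s1]} = {(t,x) ∈ K : s0² ≤ t² − r² ≤ s1²}`. -/
def slab (s0 s1 : ℝ) : Set Pt :=
  {p | rad p < p 0 - 1 ∧ s0^2 ≤ (p 0)^2 - (rad p)^2 ∧ (p 0)^2 - (rad p)^2 ≤ s1^2}

/-- The parametrization `x ↦ (√(s² + |x|²), x)` of the hyperboloid `H_s`. -/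
def hyp (s : ℝ) (x : Fin 2 → ℝ) : Pt :=
  ![Real.sqrt (s^2 + (x 0)^2 + (x 1)^2), x 0, x 1]

/-- The flat `L²` norm on the hyperboloid `H_s`. -/
def L2f (s : ℝ) (g : Pt → ℝ) : ℝ :=
  Real.sqrt (∫ x : Fin 2 → ℝ, (g (hyp s x))^2)

/-- `φ` vanishes near the conical boundary `∂K_{[s0,s1]}` (i.e. on a neighbourhood of
`r = t − 1` within the slab, in particular outside the cone on the slab). -/
def VanishNearBdry (s0 s1 : ℝ) (φ : Pt → ℝ) : Prop :=
  ∃ ε > (0:ℝ), ∀ p : Pt, 0 < p 0 → s0^2 ≤ (p 0)^2 - (rad p)^2 →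
    (p 0)^2 - (rad p)^2 ≤ s1^2 → p 0 - 1 - ε < rad p → φ p = 0

/-- The hyperboloidal energy functional `E_m(s, φ)`. -/
def energyE (m s : ℝ) (φ : Pt → ℝ) : ℝ :=
  ∫ x : Fin 2 → ℝ,
    ((pd 0 φ (hyp s x))^2 + (pd 1 φ (hyp s x))^2 + (pd 2 φ (hyp s x))^2
      + 2 * (hyp s x 1 / hyp s x 0) * pd 0 φ (hyp s x) * pd 1 φ (hyp s x)
      + 2 * (hyp s x 2 / hyp s x 0) * pd 0 φ (hyp s x) * pd 2 φ (hyp s x)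
      + m^2 * (φ (hyp s x))^2)

/-- The weighted inverted time translation `Kφ = (t + r²/t) ∂_t φ + 2 x^a ∂_a φ`. -/
def Kvf (φ : Pt → ℝ) (p : Pt) : ℝ :=
  (p 0 + (rad p)^2 / p 0) * pd 0 φ p + 2 * (p 1 * pd 1 φ p + p 2 * pd 2 φ p)

/-- The conformal energy `E_con(s, φ)`. -/
def Econ (s : ℝ) (φ : Pt → ℝ) : ℝ :=
  ∫ x : Fin 2 → ℝ,
    ((s * ubd 0 φ (hyp s x))^2 + (s * ubd 1 φ (hyp s x))^2
      + (Kvf φ (hyp s x) + φ (hyp s x))^2)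


/-- Evaluate a partial derivative from a `HasFDerivAt` fact. -/
lemma pd_eval {F : Pt → ℝ} {L : Pt →L[ℝ] ℝ} {p : Pt} (h : HasFDerivAt F L p) (i : Fin 3) :
    pd i F p = L (Pi.single i 1) := by
  unfold pd; rw [h.fderiv]
/-- **Divergence identity for the weighted multiplier.** For `m ≥ 0`, `γ > 0`, a smooth `φ`
on an open set, and `f := ∂_t²φ − ∂_1²φ − ∂_2²φ + m²φ`, at every point with `0 < r < t`:
`½ ∂_t[(t−r)^{−γ}((∂_tφ)² + Σ(∂_aφ)² + m²φ²)] − Σ_a ∂_a[(t−r)^{−γ}∂_tφ ∂_aφ]`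
`+ (γ/2)(t−r)^{−γ−1}[Σ_a((x^a/r)∂_tφ + ∂_aφ)² + m²φ²] = (t−r)^{−γ} f ∂_tφ`. -/
theorem weighted_multiplier_divergence_identity
    (m γ : ℝ) (hm : 0 ≤ m) (hγ : 0 < γ)
    (U : Set Pt) (hU : IsOpen U) (φ : Pt → ℝ) (hφ : ContDiffOn ℝ (⊤ : ℕ∞) φ U)
    (p : Pt) (hp : p ∈ U) (hr : 0 < rad p) (hrt : rad p < p 0) :
    (1/2) * pd 0 (fun q => (q 0 - rad q) ^ (-γ)
          * ((pd 0 φ q)^2 + (pd 1 φ q)^2 + (pd 2 φ q)^2 + m^2 * (φ q)^2)) p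
      - pd 1 (fun q => (q 0 - rad q) ^ (-γ) * (pd 0 φ q * pd 1 φ q)) p
      - pd 2 (fun q => (q 0 - rad q) ^ (-γ) * (pd 0 φ q * pd 2 φ q)) p
      + (γ/2) * (p 0 - rad p) ^ (-γ - 1) *
          (((p 1 / rad p) * pd 0 φ p + pd 1 φ p)^2
            + ((p 2 / rad p) * pd 0 φ p + pd 2 φ p)^2
            + m^2 * (φ p)^2)
      = (p 0 - rad p) ^ (-γ) * (negBox φ p + m^2 * φ p) * pd 0 φ p := by
  -- smoothness facts
  have hUp : U ∈ nhds p := hU.mem_nhds hp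
  have hφ' := hφ.contDiffAt hUp
  have hφd : DifferentiableAt ℝ φ p := hφ'.differentiableAt (by simp)
  have hΦ' : ContDiffAt ℝ (1:ℕ∞) (fderiv ℝ φ) p := hφ'.fderiv_right (by exact_mod_cast le_top)
  have hΦ'd : DifferentiableAt ℝ (fderiv ℝ φ) p := hΦ'.differentiableAt (by simp)
  have hpd : ∀ j : Fin 3, DifferentiableAt ℝ (pd j φ) p := fun j =>
    hΦ'd.clm_apply (differentiableAt_const _)
  have hev : ∀ᶠ y in nhds p, HasFDerivAt φ (fderiv ℝ φ y) y := by
    filter_upwards [hUp] with y hy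
    exact ((hφ.contDiffAt (hU.mem_nhds hy)).differentiableAt (by simp)).hasFDerivAt
  have hsymm := second_derivative_symmetric_of_eventually hev hΦ'd.hasFDerivAt
  have hflip : ∀ j : Fin 3, fderiv ℝ (pd j φ) p =
      (fderiv ℝ (fderiv ℝ φ) p).flip (Pi.single j 1) := by
    intro j
    have := fderiv_clm_apply (c := fderiv ℝ φ) (u := fun _ : Pt => Pi.single j (1:ℝ))
      hΦ'd (differentiableAt_const _)
    rw [show pd j φ = fun y => fderiv ℝ φ y (Pi.single j 1) from rfl]
    simpa using this
  have hswap : ∀ i j : Fin 3, pd i (pd j φ) p = pd j (pd i φ) p := by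
    intro i j
    show fderiv ℝ (pd j φ) p (Pi.single i 1) = fderiv ℝ (pd i φ) p (Pi.single j 1)
    rw [hflip, hflip]
    simpa using hsymm (Pi.single i 1) (Pi.single j 1)
  -- geometry of the weight
  have hup : (0:ℝ) < (p 1)^2 + (p 2)^2 := Real.sqrt_pos.mp hr
  have h0 := hasFDerivAt_apply (𝕜 := ℝ) (F' := fun _ : Fin 3 => ℝ) 0 p
  have h1 := hasFDerivAt_apply (𝕜 := ℝ) (F' := fun _ : Fin 3 => ℝ) 1 p
  have h2 := hasFDerivAt_apply (𝕜 := ℝ) (F' := fun _ : Fin 3 => ℝ) 2 p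
  have hu : HasFDerivAt (fun q : Pt => (q 1)^2 + (q 2)^2)
      ((p 1 • (ContinuousLinearMap.proj 1 : Pt →L[ℝ] ℝ) + p 1 • ContinuousLinearMap.proj 1)
        + (p 2 • (ContinuousLinearMap.proj 2 : Pt →L[ℝ] ℝ) + p 2 • ContinuousLinearMap.proj 2)) p := by
    have := (h1.mul h1).add (h2.mul h2)
    exact this.congr_of_eventuallyEq (Filter.Eventually.of_forall fun q => by simp [pow_two])
  have hradF : HasFDerivAt rad ((1 / (2 * rad p)) •
      ((p 1 • (ContinuousLinearMap.proj 1 : Pt →L[ℝ] ℝ) + p 1 • ContinuousLinearMap.proj 1)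
        + (p 2 • (ContinuousLinearMap.proj 2 : Pt →L[ℝ] ℝ) + p 2 • ContinuousLinearMap.proj 2))) p :=
    (Real.hasDerivAt_sqrt hup.ne').comp_hasFDerivAt p hu
  have htr : (0:ℝ) < p 0 - rad p := sub_pos.mpr hrt
  have hg : HasFDerivAt (fun q : Pt => q 0 - rad q) (ContinuousLinearMap.proj 0 - (1 / (2 * rad p)) •
      ((p 1 • (ContinuousLinearMap.proj 1 : Pt →L[ℝ] ℝ) + p 1 • ContinuousLinearMap.proj 1)
        + (p 2 • (ContinuousLinearMap.proj 2 : Pt →L[ℝ] ℝ) + p 2 • ContinuousLinearMap.proj 2))) p :=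
    h0.sub hradF
  have hwF : HasFDerivAt (fun q : Pt => (q 0 - rad q) ^ (-γ))
      ((-γ * (p 0 - rad p) ^ (-γ - 1)) • (ContinuousLinearMap.proj 0 - (1 / (2 * rad p)) •
      ((p 1 • (ContinuousLinearMap.proj 1 : Pt →L[ℝ] ℝ) + p 1 • ContinuousLinearMap.proj 1)
        + (p 2 • (ContinuousLinearMap.proj 2 : Pt →L[ℝ] ℝ) + p 2 • ContinuousLinearMap.proj 2)))) p :=
    by have := (Real.hasDerivAt_rpow_const (p := -γ) (Or.inl htr.ne')).comp_hasFDerivAt p hg; exact this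
  -- rewrite squares as products
  simp only [pow_two]
  -- derivatives of the three flux terms
  have hq0 := (hpd 0).hasFDerivAt
  have hq1 := (hpd 1).hasFDerivAt
  have hq2 := (hpd 2).hasFDerivAt
  have hB1 : HasFDerivAt (fun q : Pt => pd 0 φ q * pd 0 φ q + pd 1 φ q * pd 1 φ q
      + pd 2 φ q * pd 2 φ q + m * m * (φ q * φ q)) _ p :=
    (((hq0.mul hq0).add (hq1.mul hq1)).add (hq2.mul hq2)).add
      ((hφd.hasFDerivAt.mul hφd.hasFDerivAt).const_mul (m * m))
  have hF1 : HasFDerivAt (fun q : Pt => (q 0 - rad q) ^ (-γ) * (pd 0 φ q * pd 0 φ q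
      + pd 1 φ q * pd 1 φ q + pd 2 φ q * pd 2 φ q + m * m * (φ q * φ q))) _ p := hwF.mul hB1
  have hF2 : HasFDerivAt (fun q : Pt => (q 0 - rad q) ^ (-γ) * (pd 0 φ q * pd 1 φ q)) _ p :=
    hwF.mul (hq0.mul hq1)
  have hF3 : HasFDerivAt (fun q : Pt => (q 0 - rad q) ^ (-γ) * (pd 0 φ q * pd 2 φ q)) _ p :=
    hwF.mul (hq0.mul hq2)
  rw [pd_eval hF1 0, pd_eval hF2 1, pd_eval hF3 2]
  have hPd : ∀ i : Fin 3, fderiv ℝ φ p (Pi.single i (1:ℝ)) = pd i φ p := fun _ => rfl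
  have hH : ∀ i j : Fin 3, fderiv ℝ (pd j φ) p (Pi.single i (1:ℝ)) = pd i (pd j φ) p :=
    fun _ _ => rfl
  simp only [ContinuousLinearMap.add_apply, ContinuousLinearMap.smul_apply,
    ContinuousLinearMap.sub_apply, ContinuousLinearMap.coe_smul', Pi.smul_apply,
    ContinuousLinearMap.proj_apply, Pi.single_apply, smul_eq_mul, hPd, hH, negBox]
  norm_num
  rw [hswap 1 0, hswap 2 0]
  have hrr : rad p * rad p = p 1 * p 1 + p 2 * p 2 := by
    rw [show rad p = Real.sqrt ((p 1)^2 + (p 2)^2) from rfl, Real.mul_self_sqrt hup.le]; ring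
  have hrne : rad p ≠ 0 := ne_of_gt hr
  norm_num [Fin.ext_iff]
  field_simp
  ring_nf
  rw [show -rad p + p 0 = p 0 - rad p by ring]
  linear_combination (-γ * pd 0 φ p ^ 2 * (p 0 - rad p) ^ (-1 - γ)) * hrr
end
end

section
/- L² estimate for the undifferentiated wave field via the conformal energy. There exists a universal constant C > 0 such that for every smooth function φ defined on a neighbourhood of K_{[s₀, s₁]} and vanishing near the conical boundary ∂K_{[s₀, s₁]}, and all s₀ ≤ s ≤ s₁: ‖(s/t) φ‖_{L²_f(H_s)} ≤ C ‖(s₀/t) φ‖_{L²_f(H_{s₀})} + C ∫_{s₀}^{s} τ^{−1} E_con(τ, φ)^{1/2} dτ. -/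
noncomputable section

open MeasureTheory

lemma hyp_zero (s : ℝ) (x : Fin 2 → ℝ) : hyp s x 0 = Real.sqrt (s^2 + (x 0)^2 + (x 1)^2) := rfl
lemma hyp_one (s : ℝ) (x : Fin 2 → ℝ) : hyp s x 1 = x 0 := rfl
lemma hyp_two (s : ℝ) (x : Fin 2 → ℝ) : hyp s x 2 = x 1 := rfl

lemma hypT_pos {s : ℝ} (hs : 0 < s) (x : Fin 2 → ℝ) : 0 < hyp s x 0 := by
  rw [hyp_zero]
  apply Real.sqrt_pos.2; nlinarith [sq_nonneg (x 0), sq_nonneg (x 1)]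

lemma le_hypT {s : ℝ} (hs : 0 ≤ s) (x : Fin 2 → ℝ) : s ≤ hyp s x 0 := by
  rw [hyp_zero]
  calc s = Real.sqrt (s^2) := (Real.sqrt_sq hs).symm
    _ ≤ _ := Real.sqrt_le_sqrt (by nlinarith [sq_nonneg (x 0), sq_nonneg (x 1)])

lemma hypT_mono {s τ : ℝ} (h0 : 0 ≤ τ) (h : τ ≤ s) (x : Fin 2 → ℝ) : hyp τ x 0 ≤ hyp s x 0 := by
  rw [hyp_zero, hyp_zero]
  exact Real.sqrt_le_sqrt (by nlinarith)

lemma abs_coord_le_hypT (s : ℝ) (x : Fin 2 → ℝ) (i : Fin 2) : |x i| ≤ hyp s x 0 := by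
  rw [hyp_zero, ← Real.sqrt_sq_eq_abs]
  refine Real.sqrt_le_sqrt ?_
  have h0 : (x 0)^2 ≤ s^2 + (x 0)^2 + (x 1)^2 := by nlinarith [sq_nonneg s, sq_nonneg (x 1)]
  have h1 : (x 1)^2 ≤ s^2 + (x 0)^2 + (x 1)^2 := by nlinarith [sq_nonneg s, sq_nonneg (x 0)]
  fin_cases i
  · exact h0
  · exact h1

lemma hypT_sq (s : ℝ) (x : Fin 2 → ℝ) : (hyp s x 0)^2 = s^2 + (x 0)^2 + (x 1)^2 := by
  rw [hyp_zero]; exact Real.sq_sqrt (by positivity)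

lemma rad_hyp (s : ℝ) (x : Fin 2 → ℝ) : rad (hyp s x) = Real.sqrt ((x 0)^2 + (x 1)^2) := rfl

lemma rad_hyp_sq (s : ℝ) (x : Fin 2 → ℝ) : (rad (hyp s x))^2 = (x 0)^2 + (x 1)^2 := by
  rw [rad_hyp]; exact Real.sq_sqrt (by positivity)

lemma ubd_zero_eq (φ : Pt → ℝ) (p : Pt) : ubd 0 φ p = (p 1 / p 0) * pd 0 φ p + pd 1 φ p := rfl
lemma ubd_one_eq (φ : Pt → ℝ) (p : Pt) : ubd 1 φ p = (p 2 / p 0) * pd 0 φ p + pd 2 φ p := rfl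

lemma hasDerivAt_key (φ : Pt → ℝ) (hφ : ContDiff ℝ (⊤ : ℕ∞) φ) (x : Fin 2 → ℝ) {τ : ℝ}
    (hτ : 0 < τ) :
    HasDerivAt (fun σ => σ * φ (hyp σ x))
      (φ (hyp τ x) + (τ^2 / hyp τ x 0) * pd 0 φ (hyp τ x)) τ := by
  set T : ℝ := hyp τ x 0 with hT
  have hTpos : 0 < T := hypT_pos hτ x
  have hne : τ^2 + (x 0)^2 + (x 1)^2 ≠ 0 := by positivity
  -- derivative of σ ↦ √(σ² + |x|²)
  have hinner : HasDerivAt (fun σ : ℝ => σ^2 + (x 0)^2 + (x 1)^2) (2*τ) τ := by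
    have := ((hasDerivAt_pow 2 τ).add_const ((x 0)^2)).add_const ((x 1)^2)
    simpa using this
  have hsqrt : HasDerivAt (fun σ : ℝ => Real.sqrt (σ^2 + (x 0)^2 + (x 1)^2)) (τ / T) τ := by
    have h := (Real.hasDerivAt_sqrt hne).comp τ hinner
    refine h.congr_deriv ?_
    rw [hT, hyp_zero]
    field_simp
  -- the affine map F
  set F : ℝ → Pt := fun t => t • (Pi.single (0 : Fin 3) (1:ℝ) : Pt) + ![0, x 0, x 1] with hFdef
  have hFeq : ∀ σ, hyp σ x = F (Real.sqrt (σ^2 + (x 0)^2 + (x 1)^2)) := by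
    intro σ
    funext i
    fin_cases i <;> simp [hFdef, hyp, Matrix.vecHead, Matrix.vecTail, Pi.single, Function.update]
  have hFder : ∀ t : ℝ, HasDerivAt F ((Pi.single (0:Fin 3) (1:ℝ) : Pt)) t := by
    intro t
    have h1 : HasDerivAt (fun t : ℝ => t • (Pi.single (0 : Fin 3) (1:ℝ) : Pt))
        ((1:ℝ) • (Pi.single (0:Fin 3) (1:ℝ) : Pt)) t := (hasDerivAt_id t).smul_const _
    simpa [hFdef] using h1.add_const (![0, x 0, x 1] : Pt)
  have hphiF : HasDerivAt (fun t => φ (F t)) (pd 0 φ (hyp τ x)) T := by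
    have hd : HasFDerivAt φ (fderiv ℝ φ (F T)) (F T) :=
      (hφ.differentiable (by simp)).differentiableAt.hasFDerivAt
    have h := hd.comp_hasDerivAt T (hFder T)
    have hFT : hyp τ x = F T := by rw [hFeq τ, hT, hyp_zero]
    rw [← hFT] at h
    exact h
  have hcomp : HasDerivAt (fun σ => φ (hyp σ x)) (pd 0 φ (hyp τ x) * (τ / T)) τ := by
    have h := hphiF.comp τ hsqrt
    have : (fun σ => φ (F (Real.sqrt (σ^2 + (x 0)^2 + (x 1)^2)))) = fun σ => φ (hyp σ x) := by
      funext σ; rw [hFeq σ]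
    rw [← this]
    exact h
  have h := (hasDerivAt_id τ).mul hcomp
  refine h.congr_deriv ?_
  simp only [id]
  field_simp

def hdens (φ : Pt → ℝ) (τ : ℝ) (x : Fin 2 → ℝ) : ℝ :=
  |Kvf φ (hyp τ x) + φ (hyp τ x)| + 2*|τ * ubd 0 φ (hyp τ x)| + 2*|τ * ubd 1 φ (hyp τ x)|

lemma hdens_nonneg (φ : Pt → ℝ) (τ : ℝ) (x : Fin 2 → ℝ) : 0 ≤ hdens φ τ x := by
  unfold hdens; positivity

set_option maxHeartbeats 1000000 in
lemma alg_bound (τ T p1 p2 A B C ψ : ℝ) (hτ : 0 < τ) (hτT : τ ≤ T)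
    (hx1 : |p1| ≤ T) (hx2 : |p2| ≤ T) (hT2 : T^2 = τ^2 + p1^2 + p2^2) :
    |ψ + (τ^2 / T) * A| / T
      ≤ τ⁻¹ * (|((T + (p1^2 + p2^2) / T) * A + 2*(p1*B + p2*C)) + ψ|
          + 2*|τ * ((p1/T)*A + B)| + 2*|τ * ((p2/T)*A + C)|) := by
  have hTpos : 0 < T := lt_of_lt_of_le hτ hτT
  have hTne : T ≠ 0 := ne_of_gt hTpos
  set K : ℝ := ((T + (p1^2 + p2^2) / T) * A + 2*(p1*B + p2*C)) + ψ with hK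
  set U0 : ℝ := (p1/T)*A + B with hU0
  set U1 : ℝ := (p2/T)*A + C with hU1
  have hid : (ψ + (τ^2 / T) * A) / T = K / T - (2 * p1 / T) * U0 - (2 * p2 / T) * U1 := by
    rw [hK, hU0, hU1]
    field_simp
    linear_combination (-A) * hT2
  have habs : |ψ + (τ^2 / T) * A| / T = |(ψ + (τ^2 / T) * A) / T| := by
    rw [abs_div, abs_of_pos hTpos]
  rw [habs, hid]
  have step1 : |K / T - (2 * p1 / T) * U0 - (2 * p2 / T) * U1|
      ≤ |K / T| + |(2 * p1 / T) * U0| + |(2 * p2 / T) * U1| := by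
    have a1 := abs_sub (K / T - (2 * p1 / T) * U0) ((2 * p2 / T) * U1)
    have a2 := abs_sub (K / T) ((2 * p1 / T) * U0)
    linarith
  have h1 : |K / T| ≤ τ⁻¹ * |K| := by
    rw [abs_div, abs_of_pos hTpos, div_eq_inv_mul]
    have : T⁻¹ ≤ τ⁻¹ := by
      exact inv_anti₀ hτ hτT
    nlinarith [abs_nonneg K]
  have h2 : |(2 * p1 / T) * U0| ≤ τ⁻¹ * (2 * |τ * U0|) := by
    rw [abs_mul, abs_mul, abs_of_pos hτ]
    have hb : |2 * p1 / T| ≤ 2 := by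
      rw [abs_div, abs_of_pos hTpos, div_le_iff₀ hTpos, abs_mul]
      have h2' : |(2:ℝ)| = 2 := by norm_num
      rw [h2']
      nlinarith
    have : τ⁻¹ * (2 * (τ * |U0|)) = 2 * |U0| := by field_simp
    rw [this]
    nlinarith [abs_nonneg U0, abs_nonneg (2 * p1 / T)]
  have h3 : |(2 * p2 / T) * U1| ≤ τ⁻¹ * (2 * |τ * U1|) := by
    rw [abs_mul, abs_mul, abs_of_pos hτ]
    have hb : |2 * p2 / T| ≤ 2 := by
      rw [abs_div, abs_of_pos hTpos, div_le_iff₀ hTpos, abs_mul]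
      have h2' : |(2:ℝ)| = 2 := by norm_num
      rw [h2']
      nlinarith
    have : τ⁻¹ * (2 * (τ * |U1|)) = 2 * |U1| := by field_simp
    rw [this]
    nlinarith [abs_nonneg U1, abs_nonneg (2 * p2 / T)]
  calc |K / T - (2 * p1 / T) * U0 - (2 * p2 / T) * U1|
      ≤ |K / T| + |(2 * p1 / T) * U0| + |(2 * p2 / T) * U1| := step1
    _ ≤ τ⁻¹ * |K| + τ⁻¹ * (2 * |τ * U0|) + τ⁻¹ * (2 * |τ * U1|) := by linarith
    _ = τ⁻¹ * (|K| + 2*|τ * U0| + 2*|τ * U1|) := by ring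

lemma pointwise_bound (φ : Pt → ℝ) (x : Fin 2 → ℝ) {τ : ℝ} (hτ : 0 < τ) :
    |φ (hyp τ x) + (τ^2 / hyp τ x 0) * pd 0 φ (hyp τ x)| / hyp τ x 0
      ≤ τ⁻¹ * hdens φ τ x := by
  have h := alg_bound τ (hyp τ x 0) (x 0) (x 1)
    (pd 0 φ (hyp τ x)) (pd 1 φ (hyp τ x)) (pd 2 φ (hyp τ x)) (φ (hyp τ x))
    hτ (le_hypT hτ.le x) (abs_coord_le_hypT τ x 0) (abs_coord_le_hypT τ x 1)
    (by rw [hypT_sq])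
  refine le_trans h (le_of_eq ?_)
  congr 1
  simp only [hdens, Kvf, ubd_zero_eq, ubd_one_eq, hyp_one, hyp_two, rad_hyp_sq]

section Vanish

variable {s0 s1 ε : ℝ} {φ : Pt → ℝ}

/-- radius beyond which everything vanishes -/
lemma phi_zero (hs0 : 1 < s0) (hε : 0 < ε)
    (hvan : ∀ p : Pt, 0 < p 0 → s0^2 ≤ (p 0)^2 - (rad p)^2 →
      (p 0)^2 - (rad p)^2 ≤ s1^2 → p 0 - 1 - ε < rad p → φ p = 0)
    {τ : ℝ} (hτ0 : s0 ≤ τ) (hτ1 : τ ≤ s1) {x : Fin 2 → ℝ}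
    (hx : s1^2/2 ≤ Real.sqrt ((x 0)^2 + (x 1)^2)) : φ (hyp τ x) = 0 := by
  have hτpos : 0 < τ := by linarith
  set r := Real.sqrt ((x 0)^2 + (x 1)^2) with hr
  have hrnn : 0 ≤ r := Real.sqrt_nonneg _
  have hr2 : r^2 = (x 0)^2 + (x 1)^2 := Real.sq_sqrt (by positivity)
  have hradp : rad (hyp τ x) = r := rad_hyp τ x
  have hP0 : 0 < hyp τ x 0 := hypT_pos hτpos x
  have hsq : (hyp τ x 0)^2 - (rad (hyp τ x))^2 = τ^2 := by
    rw [hypT_sq, rad_hyp_sq]; ring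
  apply hvan _ hP0
  · rw [hsq]; exact pow_le_pow_left₀ (by linarith) hτ0 2
  · rw [hsq]; exact pow_le_pow_left₀ (by linarith) hτ1 2
  · rw [hradp]
    have hTr : hyp τ x 0 < r + 1 + ε := by
      rw [hyp_zero]
      have h2r : s1^2 ≤ 2 * r := by linarith
      have hτs1 : τ^2 ≤ s1^2 := pow_le_pow_left₀ (by linarith) hτ1 2
      refine (Real.sqrt_lt' (by linarith)).2 ?_
      nlinarith
    linarith

lemma fderiv_zero' (hs0 : 1 < s0) (hε : 0 < ε)
    (hvan : ∀ p : Pt, 0 < p 0 → s0^2 ≤ (p 0)^2 - (rad p)^2 →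
      (p 0)^2 - (rad p)^2 ≤ s1^2 → p 0 - 1 - ε < rad p → φ p = 0)
    {τ : ℝ} (hτ0 : s0 < τ) (hτ1 : τ < s1) {x : Fin 2 → ℝ}
    (hx : s1^2/2 ≤ Real.sqrt ((x 0)^2 + (x 1)^2)) :
    fderiv ℝ φ (hyp τ x) = 0 := by
  have hτpos : 0 < τ := by linarith
  set O : Set Pt := {p | 0 < p 0} ∩ ({p | s0^2 < (p 0)^2 - (rad p)^2} ∩
      ({p | (p 0)^2 - (rad p)^2 < s1^2} ∩ {p | p 0 - 1 - ε < rad p})) with hO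
  have hrad_cont : Continuous rad := by
    unfold rad
    exact Real.continuous_sqrt.comp (by continuity)
  have hOopen : IsOpen O := by
    refine ((isOpen_lt continuous_const (continuous_apply 0)).inter
      ((isOpen_lt continuous_const ?_).inter ((isOpen_lt ?_ continuous_const).inter
        (isOpen_lt ?_ hrad_cont))))
    · exact ((continuous_apply 0).pow 2).sub (hrad_cont.pow 2)
    · exact ((continuous_apply 0).pow 2).sub (hrad_cont.pow 2)
    · exact ((continuous_apply 0).sub continuous_const).sub continuous_const
  have hOzero : ∀ p ∈ O, φ p = 0 := by
    rintro p ⟨h1, h2, h3, h4⟩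
    exact hvan p h1 (le_of_lt h2) (le_of_lt h3) h4
  have hmem : hyp τ x ∈ O := by
    set r := Real.sqrt ((x 0)^2 + (x 1)^2) with hr
    have hrnn : 0 ≤ r := Real.sqrt_nonneg _
    have hsq : (hyp τ x 0)^2 - (rad (hyp τ x))^2 = τ^2 := by
      rw [hypT_sq, rad_hyp_sq]; ring
    refine ⟨hypT_pos hτpos x, ?_, ?_, ?_⟩
    · show s0^2 < _
      rw [hsq]; exact pow_lt_pow_left₀ hτ0 (by linarith) (by norm_num)
    · show _ < s1^2
      rw [hsq]; exact pow_lt_pow_left₀ hτ1 (by linarith) (by norm_num)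
    · show hyp τ x 0 - 1 - ε < rad (hyp τ x)
      rw [rad_hyp, ← hr]
      have hTr : hyp τ x 0 < r + 1 + ε := by
        rw [hyp_zero]
        have h2r : s1^2 ≤ 2 * r := by linarith
        have hτs1 : τ^2 ≤ s1^2 := pow_le_pow_left₀ (by linarith) hτ1.le 2
        refine (Real.sqrt_lt' (by linarith)).2 ?_
        have hr2 : r^2 = (x 0)^2 + (x 1)^2 := Real.sq_sqrt (by positivity)
        nlinarith
      linarith
  have hev : φ =ᶠ[nhds (hyp τ x)] (fun _ => (0:ℝ)) := by
    filter_upwards [hOopen.mem_nhds hmem] with p hp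
    exact hOzero p hp
  rw [hev.fderiv_eq]
  exact fderiv_const_apply 0

lemma pd_zero_of_fderiv_zero {p : Pt} (h : fderiv ℝ φ p = 0) (i : Fin 3) : pd i φ p = 0 := by
  unfold pd; rw [h]; rfl

end Vanish

def g0dens (φ : Pt → ℝ) (τ : ℝ) (x : Fin 2 → ℝ) : ℝ :=
  φ (hyp τ x) + (τ^2 / hyp τ x 0) * pd 0 φ (hyp τ x)

def Edens (φ : Pt → ℝ) (τ : ℝ) (x : Fin 2 → ℝ) : ℝ :=
  (τ * ubd 0 φ (hyp τ x))^2 + (τ * ubd 1 φ (hyp τ x))^2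
    + (Kvf φ (hyp τ x) + φ (hyp τ x))^2

lemma Econ_eq (τ : ℝ) (φ : Pt → ℝ) : Econ τ φ = ∫ x : Fin 2 → ℝ, Edens φ τ x := rfl

def Sgood : Set (ℝ × (Fin 2 → ℝ)) := {z | 1 ≤ z.1}

section Cont

variable {φ : Pt → ℝ}

lemma cont_rad : Continuous rad := by
  unfold rad
  exact Real.continuous_sqrt.comp
    (((continuous_apply (1 : Fin 3)).pow 2).add ((continuous_apply (2 : Fin 3)).pow 2))

lemma cont_pd (hφ : ContDiff ℝ (⊤ : ℕ∞) φ) (i : Fin 3) : Continuous (pd i φ) := by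
  unfold pd
  exact (hφ.continuous_fderiv (by simp)).clm_apply continuous_const

lemma cont_hyp : Continuous (fun z : ℝ × (Fin 2 → ℝ) => hyp z.1 z.2) := by
  apply continuous_pi
  intro i
  have h1 : Continuous (fun z : ℝ × (Fin 2 → ℝ) => z.2 0) := by fun_prop
  have h2 : Continuous (fun z : ℝ × (Fin 2 → ℝ) => z.2 1) := by fun_prop
  have h0 : Continuous (fun z : ℝ × (Fin 2 → ℝ) =>
      Real.sqrt (z.1^2 + (z.2 0)^2 + (z.2 1)^2)) :=
    Real.continuous_sqrt.comp (((continuous_fst.pow 2).add (h1.pow 2)).add (h2.pow 2))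
  fin_cases i
  · exact h0
  · exact h1
  · exact h2

lemma contT : Continuous (fun z : ℝ × (Fin 2 → ℝ) => hyp z.1 z.2 0) :=
  (continuous_apply 0).comp cont_hyp

lemma T_ne_zero {z : ℝ × (Fin 2 → ℝ)} (hz : z ∈ Sgood) : hyp z.1 z.2 0 ≠ 0 :=
  ne_of_gt (hypT_pos (by have : 1 ≤ z.1 := hz; linarith) _)

lemma contOn_ubd (hφ : ContDiff ℝ (⊤ : ℕ∞) φ) (a : Fin 2) :
    ContinuousOn (fun z : ℝ × (Fin 2 → ℝ) => ubd a φ (hyp z.1 z.2)) Sgood := by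
  have hp : ∀ i : Fin 3, Continuous (fun z : ℝ × (Fin 2 → ℝ) => pd i φ (hyp z.1 z.2)) :=
    fun i => (cont_pd hφ i).comp cont_hyp
  have hcoord : ∀ i : Fin 3, Continuous (fun z : ℝ × (Fin 2 → ℝ) => hyp z.1 z.2 i) :=
    fun i => (continuous_apply i).comp cont_hyp
  simp only [ubd]
  exact ((((hcoord a.succ).continuousOn.div contT.continuousOn
    (fun z hz => T_ne_zero hz)).mul (hp 0).continuousOn).add (hp a.succ).continuousOn)

lemma contOn_Kvf (hφ : ContDiff ℝ (⊤ : ℕ∞) φ) :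
    ContinuousOn (fun z : ℝ × (Fin 2 → ℝ) => Kvf φ (hyp z.1 z.2)) Sgood := by
  have hp : ∀ i : Fin 3, Continuous (fun z : ℝ × (Fin 2 → ℝ) => pd i φ (hyp z.1 z.2)) :=
    fun i => (cont_pd hφ i).comp cont_hyp
  have hcoord : ∀ i : Fin 3, Continuous (fun z : ℝ × (Fin 2 → ℝ) => hyp z.1 z.2 i) :=
    fun i => (continuous_apply i).comp cont_hyp
  have hr : Continuous (fun z : ℝ × (Fin 2 → ℝ) => rad (hyp z.1 z.2)) := cont_rad.comp cont_hyp
  simp only [Kvf]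
  refine ContinuousOn.add (ContinuousOn.mul ?_ (hp 0).continuousOn) ?_
  · exact (contT.continuousOn.add ((hr.pow 2).continuousOn.div contT.continuousOn
      (fun z hz => T_ne_zero hz)))
  · exact (continuous_const.mul (((hcoord 1).mul (hp 1)).add ((hcoord 2).mul (hp 2)))).continuousOn

lemma cont_phihyp (hφ : ContDiff ℝ (⊤ : ℕ∞) φ) :
    Continuous (fun z : ℝ × (Fin 2 → ℝ) => φ (hyp z.1 z.2)) :=
  hφ.continuous.comp cont_hyp

lemma contOn_hdens (hφ : ContDiff ℝ (⊤ : ℕ∞) φ) :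
    ContinuousOn (fun z : ℝ × (Fin 2 → ℝ) => hdens φ z.1 z.2) Sgood := by
  simp only [hdens]
  refine ContinuousOn.add (ContinuousOn.add ?_ ?_) ?_
  · exact ((contOn_Kvf hφ).add (cont_phihyp hφ).continuousOn).abs
  · exact (continuous_const.continuousOn.mul
      ((continuous_fst.continuousOn.mul (contOn_ubd hφ 0)).abs))
  · exact (continuous_const.continuousOn.mul
      ((continuous_fst.continuousOn.mul (contOn_ubd hφ 1)).abs))

lemma contOn_kdens (hφ : ContDiff ℝ (⊤ : ℕ∞) φ) :
    ContinuousOn (fun z : ℝ × (Fin 2 → ℝ) => z.1⁻¹ * hdens φ z.1 z.2) Sgood := by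
  refine ContinuousOn.mul (ContinuousOn.inv₀ continuous_fst.continuousOn ?_) (contOn_hdens hφ)
  intro z hz
  have : (1:ℝ) ≤ z.1 := hz
  linarith

lemma contOn_g0dens (hφ : ContDiff ℝ (⊤ : ℕ∞) φ) :
    ContinuousOn (fun z : ℝ × (Fin 2 → ℝ) => g0dens φ z.1 z.2) Sgood := by
  simp only [g0dens]
  refine (cont_phihyp hφ).continuousOn.add (ContinuousOn.mul ?_ ?_)
  · exact ((continuous_fst.pow 2).continuousOn.div contT.continuousOn
      (fun z hz => T_ne_zero hz))
  · exact (((cont_pd hφ 0).comp cont_hyp)).continuousOn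

lemma contOn_Edens (hφ : ContDiff ℝ (⊤ : ℕ∞) φ) :
    ContinuousOn (fun z : ℝ × (Fin 2 → ℝ) => Edens φ z.1 z.2) Sgood := by
  simp only [Edens]
  refine ContinuousOn.add (ContinuousOn.add ?_ ?_) ?_
  · exact ((continuous_fst.continuousOn.mul (contOn_ubd hφ 0)).pow 2)
  · exact ((continuous_fst.continuousOn.mul (contOn_ubd hφ 1)).pow 2)
  · exact (((contOn_Kvf hφ).add (cont_phihyp hφ).continuousOn).pow 2)

lemma meas_ubd (hφ : ContDiff ℝ (⊤ : ℕ∞) φ) (a : Fin 2) :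
    Measurable (fun z : ℝ × (Fin 2 → ℝ) => ubd a φ (hyp z.1 z.2)) := by
  have hp : ∀ i : Fin 3, Continuous (fun z : ℝ × (Fin 2 → ℝ) => pd i φ (hyp z.1 z.2)) :=
    fun i => (cont_pd hφ i).comp cont_hyp
  have hcoord : ∀ i : Fin 3, Continuous (fun z : ℝ × (Fin 2 → ℝ) => hyp z.1 z.2 i) :=
    fun i => (continuous_apply i).comp cont_hyp
  simp only [ubd]
  exact ((((hcoord a.succ).measurable.div contT.measurable).mul
    (hp 0).measurable).add (hp a.succ).measurable)

lemma meas_Kvf (hφ : ContDiff ℝ (⊤ : ℕ∞) φ) :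
    Measurable (fun z : ℝ × (Fin 2 → ℝ) => Kvf φ (hyp z.1 z.2)) := by
  have hp : ∀ i : Fin 3, Continuous (fun z : ℝ × (Fin 2 → ℝ) => pd i φ (hyp z.1 z.2)) :=
    fun i => (cont_pd hφ i).comp cont_hyp
  have hcoord : ∀ i : Fin 3, Continuous (fun z : ℝ × (Fin 2 → ℝ) => hyp z.1 z.2 i) :=
    fun i => (continuous_apply i).comp cont_hyp
  have hr : Continuous (fun z : ℝ × (Fin 2 → ℝ) => rad (hyp z.1 z.2)) := cont_rad.comp cont_hyp
  simp only [Kvf]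
  refine Measurable.add (Measurable.mul ?_ (hp 0).measurable) ?_
  · exact (contT.measurable.add ((hr.pow 2).measurable.div contT.measurable))
  · exact (continuous_const.mul
      (((hcoord 1).mul (hp 1)).add ((hcoord 2).mul (hp 2)))).measurable

lemma meas_hdens (hφ : ContDiff ℝ (⊤ : ℕ∞) φ) :
    Measurable (fun z : ℝ × (Fin 2 → ℝ) => hdens φ z.1 z.2) := by
  simp only [hdens]
  refine Measurable.add (Measurable.add ?_ ?_) ?_
  · exact ((meas_Kvf hφ).add (cont_phihyp hφ).measurable).abs
  · exact (measurable_const.mul ((measurable_fst.mul (meas_ubd hφ 0)).abs))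
  · exact (measurable_const.mul ((measurable_fst.mul (meas_ubd hφ 1)).abs))

lemma meas_kdens (hφ : ContDiff ℝ (⊤ : ℕ∞) φ) :
    Measurable (fun z : ℝ × (Fin 2 → ℝ) => z.1⁻¹ * hdens φ z.1 z.2) :=
  (measurable_fst.inv).mul (meas_hdens hφ)

lemma meas_Edens (hφ : ContDiff ℝ (⊤ : ℕ∞) φ) :
    Measurable (fun z : ℝ × (Fin 2 → ℝ) => Edens φ z.1 z.2) := by
  simp only [Edens]
  refine Measurable.add (Measurable.add ?_ ?_) ?_
  · exact ((measurable_fst.mul (meas_ubd hφ 0)).pow_const 2)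
  · exact ((measurable_fst.mul (meas_ubd hφ 1)).pow_const 2)
  · exact (((meas_Kvf hφ).add (cont_phihyp hφ).measurable).pow_const 2)

lemma meas_Econ (hφ : ContDiff ℝ (⊤ : ℕ∞) φ) : Measurable (fun τ : ℝ => Econ τ φ) := by
  have h : StronglyMeasurable (fun z : ℝ × (Fin 2 → ℝ) => Edens φ z.1 z.2) :=
    (meas_Edens hφ).stronglyMeasurable
  exact h.integral_prod_right'.measurable

end Cont

section CS

variable {α : Type*} [MeasurableSpace α] {μ : Measure α}

lemma my_cauchy_schwarz {f g : α → ℝ} (hf0 : ∀ x, 0 ≤ f x) (hg0 : ∀ x, 0 ≤ g x)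
    (hf : Integrable (fun x => f x^2) μ) (hg : Integrable (fun x => g x^2) μ)
    (hfm : AEStronglyMeasurable f μ) (hgm : AEStronglyMeasurable g μ) :
    ∫ x, f x * g x ∂μ ≤ Real.sqrt (∫ x, f x^2 ∂μ) * Real.sqrt (∫ x, g x^2 ∂μ) := by
  have hIf : 0 ≤ ∫ x, f x^2 ∂μ := integral_nonneg (fun x => sq_nonneg _)
  have hIg : 0 ≤ ∫ x, g x^2 ∂μ := integral_nonneg (fun x => sq_nonneg _)
  set F := Real.sqrt (∫ x, f x^2 ∂μ) with hF
  set G := Real.sqrt (∫ x, g x^2 ∂μ) with hG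
  have hF2 : F^2 = ∫ x, f x^2 ∂μ := Real.sq_sqrt hIf
  have hG2 : G^2 = ∫ x, g x^2 ∂μ := Real.sq_sqrt hIg
  have hFnn : 0 ≤ F := Real.sqrt_nonneg _
  have hGnn : 0 ≤ G := Real.sqrt_nonneg _
  have hfg : Integrable (fun x => f x * g x) μ := by
    refine Integrable.mono' ((hf.add hg).div_const 2) (hfm.mul hgm) (ae_of_all _ ?_)
    intro x
    have h1 : ‖f x * g x‖ = f x * g x := by
      rw [Real.norm_eq_abs, abs_of_nonneg (mul_nonneg (hf0 x) (hg0 x))]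
    rw [h1]
    have := sq_nonneg (f x - g x)
    simp only [Pi.add_apply]
    nlinarith
  rcases eq_or_lt_of_le hFnn with hF0 | hFpos
  · have hf2zero : (fun x => f x^2) =ᵐ[μ] 0 := by
      have : ∫ x, f x^2 ∂μ = 0 := by
        have := Real.sqrt_eq_zero hIf |>.1 hF0.symm
        exact this
      exact (integral_eq_zero_iff_of_nonneg (fun x => sq_nonneg _) hf).1 this
    have hfzero : f =ᵐ[μ] 0 := by
      filter_upwards [hf2zero] with x hx
      have : f x ^ 2 = 0 := hx
      exact pow_eq_zero_iff (n := 2) (by norm_num) |>.1 this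
    have : ∫ x, f x * g x ∂μ = 0 := by
      rw [integral_eq_zero_iff_of_nonneg (fun x => mul_nonneg (hf0 x) (hg0 x)) hfg]
      filter_upwards [hfzero] with x hx
      simp [hx]
    rw [this, ← hF0]
    simp
  rcases eq_or_lt_of_le hGnn with hG0 | hGpos
  · have hg2zero : (fun x => g x^2) =ᵐ[μ] 0 := by
      have : ∫ x, g x^2 ∂μ = 0 := by
        have := Real.sqrt_eq_zero hIg |>.1 hG0.symm
        exact this
      exact (integral_eq_zero_iff_of_nonneg (fun x => sq_nonneg _) hg).1 this
    have hgzero : g =ᵐ[μ] 0 := by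
      filter_upwards [hg2zero] with x hx
      have : g x ^ 2 = 0 := hx
      exact pow_eq_zero_iff (n := 2) (by norm_num) |>.1 this
    have : ∫ x, f x * g x ∂μ = 0 := by
      rw [integral_eq_zero_iff_of_nonneg (fun x => mul_nonneg (hf0 x) (hg0 x)) hfg]
      filter_upwards [hgzero] with x hx
      simp [hx]
    rw [this, ← hG0]
    simp
  -- main case
  have key : ∀ x, f x * g x ≤ ((G/F) * f x^2 + (F/G) * g x^2)/2 := by
    intro x
    rw [le_div_iff₀ (by norm_num : (0:ℝ) < 2), div_mul_eq_mul_div, div_mul_eq_mul_div,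
      div_add_div _ _ (ne_of_gt hFpos) (ne_of_gt hGpos), le_div_iff₀ (mul_pos hFpos hGpos)]
    nlinarith [sq_nonneg (G * f x - F * g x)]
  have hInt2 : Integrable (fun x => ((G/F) * f x^2 + (F/G) * g x^2)/2) μ :=
    ((hf.const_mul _).add (hg.const_mul _)).div_const 2
  have hmono := integral_mono hfg hInt2 key
  have heval : ∫ x, ((G/F) * f x^2 + (F/G) * g x^2)/2 ∂μ = F * G := by
    rw [integral_div, integral_add (hf.const_mul _) (hg.const_mul _),
      integral_const_mul, integral_const_mul, ← hF2, ← hG2]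
    field_simp
    ring
  rw [heval] at hmono
  exact hmono

end CS

lemma integrable_of_bdd_supp {f : (Fin 2 → ℝ) → ℝ} (hm : AEStronglyMeasurable f volume)
    {R M : ℝ}
    (h : ∀ x, |f x| ≤ Set.indicator (Metric.closedBall (0 : Fin 2 → ℝ) R) (fun _ => M) x) :
    Integrable f volume := by
  have hind : Integrable
      (Set.indicator (Metric.closedBall (0 : Fin 2 → ℝ) R) (fun _ => M)) volume := by
    rw [integrable_indicator_iff measurableSet_closedBall]
    exact integrableOn_const measure_closedBall_lt_top.ne
  exact Integrable.mono' hind hm (ae_of_all _ (by simpa [Real.norm_eq_abs] using h))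

lemma fix_cont {f : ℝ × (Fin 2 → ℝ) → ℝ} (hf : ContinuousOn f Sgood) {τ : ℝ} (hτ : 1 ≤ τ) :
    Continuous fun x => f (τ, x) := by
  rw [← continuousOn_univ]
  exact hf.comp (Continuous.prodMk_right τ).continuousOn (fun x _ => hτ)

lemma fix_contOn {f : ℝ × (Fin 2 → ℝ) → ℝ} (hf : ContinuousOn f Sgood) (x : Fin 2 → ℝ)
    {A : Set ℝ} (hA : ∀ τ ∈ A, 1 ≤ τ) : ContinuousOn (fun τ => f (τ, x)) A :=
  hf.comp (continuous_id.prodMk continuous_const).continuousOn (fun τ hτ => hA τ hτ)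

lemma integrable_sq_of_supp {f : (Fin 2 → ℝ) → ℝ} (hc : Continuous f) {R : ℝ}
    (h0 : ∀ x ∉ Metric.closedBall (0 : Fin 2 → ℝ) R, f x = 0) :
    Integrable (fun x => (f x)^2) volume := by
  refine (hc.pow 2).integrable_of_hasCompactSupport ?_
  exact HasCompactSupport.intro (isCompact_closedBall 0 R)
    (fun x hx => by rw [Pi.pow_apply, h0 x hx]; ring)

lemma integrable_of_supp {f : (Fin 2 → ℝ) → ℝ} (hc : Continuous f) {R : ℝ}
    (h0 : ∀ x ∉ Metric.closedBall (0 : Fin 2 → ℝ) R, f x = 0) :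
    Integrable f volume := by
  refine hc.integrable_of_hasCompactSupport ?_
  exact HasCompactSupport.intro (isCompact_closedBall 0 R) h0

lemma contOn_vdens {φ : Pt → ℝ} (hφ : ContDiff ℝ (⊤ : ℕ∞) φ) :
    ContinuousOn (fun z : ℝ × (Fin 2 → ℝ) => (z.1 / hyp z.1 z.2 0) * φ (hyp z.1 z.2)) Sgood :=
  (continuous_fst.continuousOn.div contT.continuousOn (fun z hz => T_ne_zero hz)).mul
    (cont_phihyp hφ).continuousOn

/-- Off the ball of radius `R`, the spatial radius is at least `R`. -/
lemma R_le_r {R : ℝ} {x : Fin 2 → ℝ} (hR : 0 ≤ R)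
    (hx : x ∉ Metric.closedBall (0 : Fin 2 → ℝ) R) :
    R ≤ Real.sqrt ((x 0)^2 + (x 1)^2) := by
  have hxn : R < ‖x‖ := by
    simpa [Metric.mem_closedBall, dist_zero_right, not_le] using hx
  have h : ‖x‖ ≤ Real.sqrt ((x 0)^2 + (x 1)^2) := by
    refine (pi_norm_le_iff_of_nonneg (Real.sqrt_nonneg _)).2 ?_
    intro i
    rw [Real.norm_eq_abs, ← Real.sqrt_sq_eq_abs]
    refine Real.sqrt_le_sqrt ?_
    have h0 : (x 0)^2 ≤ (x 0)^2 + (x 1)^2 := by nlinarith [sq_nonneg (x 1)]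
    have h1 : (x 1)^2 ≤ (x 0)^2 + (x 1)^2 := by nlinarith [sq_nonneg (x 0)]
    fin_cases i
    · exact h0
    · exact h1
  linarith

lemma sqrt_nine : Real.sqrt 9 = 3 := by
  rw [show (9:ℝ) = 3^2 by norm_num, Real.sqrt_sq (by norm_num)]

set_option maxHeartbeats 2000000 in
/-- **`L²` estimate for the undifferentiated wave field via the conformal energy**
(Proposition 4.3, second part). There is a universal constant `C > 0` such that
`‖(s/t)φ‖_{L²_f(H_s)} ≤ C ‖(s₀/t)φ‖_{L²_f(H_{s₀})} + C ∫_{s₀}^s τ^{−1} E_con(τ,φ)^{1/2} dτ`. -/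
theorem conformal_L2_estimate :
    ∃ C : ℝ, 0 < C ∧
      ∀ s0 s1 : ℝ, 1 < s0 → s0 ≤ s1 →
      ∀ φ : Pt → ℝ, ContDiff ℝ (⊤ : ℕ∞) φ → VanishNearBdry s0 s1 φ →
      ∀ s : ℝ, s0 ≤ s → s ≤ s1 →
        L2f s (fun p => (s / p 0) * φ p)
          ≤ C * L2f s0 (fun p => (s0 / p 0) * φ p)
            + C * ∫ τ in s0..s, τ⁻¹ * Real.sqrt (Econ τ φ) := by
  refine ⟨3, by norm_num, ?_⟩
  intro s0 s1 hs0 hs01 φ hφ hvan s hss hs_le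
  obtain ⟨ε, hε, hv⟩ := hvan
  have hs1 : 1 < s1 := lt_of_lt_of_le hs0 (le_trans hss hs_le)
  have hs0pos : (0:ℝ) < s0 := by linarith
  have hspos : (0:ℝ) < s := by linarith
  set cB := Metric.closedBall (0 : Fin 2 → ℝ) (s1^2/2) with hcB
  have hRnn : (0:ℝ) ≤ s1^2/2 := by positivity
  set I := Set.Ioc s0 s with hI
  set k : ℝ → (Fin 2 → ℝ) → ℝ := fun τ x => τ⁻¹ * hdens φ τ x with hk
  set Bf : (Fin 2 → ℝ) → ℝ := fun x => ∫ τ in I, k τ x with hBf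
  set af : (Fin 2 → ℝ) → ℝ := fun x => (s0 / hyp s0 x 0) * φ (hyp s0 x) with haf
  set vf : (Fin 2 → ℝ) → ℝ := fun x => (s / hyp s x 0) * φ (hyp s x) with hvf
  -- basic support facts
  have hphiz : ∀ τ, s0 ≤ τ → τ ≤ s1 → ∀ x, x ∉ cB → φ (hyp τ x) = 0 := by
    intro τ h1 h2 x hx
    exact phi_zero hs0 hε hv h1 h2 (R_le_r hRnn hx)
  have hpdz : ∀ τ, τ ∈ Set.Ioo s0 s1 → ∀ x, x ∉ cB →
      (∀ i, pd i φ (hyp τ x) = 0) ∧ φ (hyp τ x) = 0 := by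
    intro τ hτ x hx
    have hf0 := fderiv_zero' hs0 hε hv hτ.1 hτ.2 (R_le_r hRnn hx)
    exact ⟨fun i => pd_zero_of_fderiv_zero hf0 i, hphiz τ hτ.1.le hτ.2.le x hx⟩
  have hhd0 : ∀ τ, τ ∈ Set.Ioo s0 s1 → ∀ x, x ∉ cB →
      hdens φ τ x = 0 ∧ Edens φ τ x = 0 := by
    intro τ hτ x hx
    obtain ⟨hpd, hph⟩ := hpdz τ hτ x hx
    constructor <;>
      simp [hdens, Edens, ubd_zero_eq, ubd_one_eq, Kvf, hph, hpd 0, hpd 1, hpd 2]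
  -- continuity of the sections
  have hacont : Continuous af := fix_cont (contOn_vdens hφ) hs0.le
  have hvcont : Continuous vf := fix_cont (contOn_vdens hφ) (by linarith)
  have hasupp : ∀ x, x ∉ cB → af x = 0 := by
    intro x hx
    have h := hphiz s0 le_rfl hs01 x hx
    simp [haf, h]
  have hvsupp : ∀ x, x ∉ cB → vf x = 0 := by
    intro x hx
    have h := hphiz s (by linarith) hs_le x hx
    simp [hvf, h]
  have ha2int : Integrable (fun x => (af x)^2) volume := integrable_sq_of_supp hacont hasupp
  have hv2int : Integrable (fun x => (vf x)^2) volume := integrable_sq_of_supp hvcont hvsupp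
  -- bound for k on the compact slab
  obtain ⟨Mk0, hMk0⟩ := ((isCompact_Icc (a := s0) (b := s)).prod
    (isCompact_closedBall (0 : Fin 2 → ℝ) (s1^2/2))).exists_bound_of_continuousOn
    ((contOn_kdens hφ).mono (by
      rintro ⟨τ, x⟩ ⟨hτ, -⟩
      exact le_trans hs0.le hτ.1))
  set Mk := max Mk0 0 with hMk'
  have hMknn : (0:ℝ) ≤ Mk := le_max_right _ _
  have hMk : ∀ τ, τ ∈ Set.Icc s0 s → ∀ x ∈ cB, |k τ x| ≤ Mk := by
    intro τ hτ x hx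
    have := hMk0 (τ, x) ⟨hτ, hx⟩
    rw [Real.norm_eq_abs] at this
    exact le_trans this (le_max_left _ _)
  -- a.e. facts on I
  have haeI : ∀ᵐ τ ∂(volume.restrict I), τ ∈ I := ae_restrict_mem measurableSet_Ioc
  have haeIoo : ∀ᵐ τ ∂(volume.restrict I), τ ∈ Set.Ioo s0 s1 := by
    have h2 : ∀ᵐ τ ∂(volume.restrict I), τ ≠ s := by
      refine ae_restrict_of_ae ?_
      have hset : {τ : ℝ | ¬ τ ≠ s} = {s} := by ext τ; simp
      rw [ae_iff, hset]
      exact measure_singleton s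
    filter_upwards [haeI, h2] with τ hτ hne
    exact ⟨hτ.1, lt_of_lt_of_le (lt_of_le_of_ne hτ.2 hne) hs_le⟩
  -- B measurability, positivity, support, boundedness
  have hBSM : StronglyMeasurable Bf :=
    ((meas_kdens hφ).stronglyMeasurable).integral_prod_left'
  have hBnn : ∀ x, 0 ≤ Bf x := by
    intro x
    refine integral_nonneg_of_ae ?_
    filter_upwards [haeI] with τ hτ
    exact mul_nonneg (inv_nonneg.2 (by have := hτ.1; linarith)) (hdens_nonneg φ τ x)
  have hBsupp : ∀ x, x ∉ cB → Bf x = 0 := by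
    intro x hx
    have hz : (fun τ => k τ x) =ᵐ[volume.restrict I] (fun _ => 0) := by
      filter_upwards [haeIoo] with τ hτ
      rw [hk]; simp [(hhd0 τ hτ x hx).1]
    rw [hBf]
    exact (integral_congr_ae hz).trans (integral_zero _ _)
  have hIconst : Integrable (fun _ : ℝ => Mk) (volume.restrict I) := by
    refine integrableOn_const ?_
    exact measure_Ioc_lt_top.ne
  have hvolI : (volume I).toReal = s - s0 := by
    rw [hI, Real.volume_Ioc, ENNReal.toReal_ofReal (by linarith)]
  have hBbd : ∀ x, |Bf x| ≤ Set.indicator cB (fun _ => Mk * (s - s0)) x := by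
    intro x
    by_cases hx : x ∈ cB
    · rw [Set.indicator_of_mem hx]
      have hbd : ∀ᵐ τ ∂(volume.restrict I), ‖k τ x‖ ≤ Mk := by
        filter_upwards [haeI] with τ hτ
        rw [Real.norm_eq_abs]
        exact hMk τ (Set.Ioc_subset_Icc_self hτ) x hx
      calc |Bf x| = ‖∫ τ in I, k τ x‖ := (Real.norm_eq_abs _).symm
        _ ≤ ∫ _ in I, Mk := norm_integral_le_of_norm_le hIconst hbd
        _ = (volume I).toReal • Mk := setIntegral_const Mk
        _ = Mk * (s - s0) := by rw [hvolI, smul_eq_mul, mul_comm]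
    · rw [Set.indicator_of_notMem hx, hBsupp x hx]; simp
  have hMB : (0:ℝ) ≤ Mk * (s - s0) := mul_nonneg hMknn (by linarith)
  have hBint : Integrable Bf volume :=
    integrable_of_bdd_supp hBSM.aestronglyMeasurable hBbd
  have hB2int : Integrable (fun x => (Bf x)^2) volume := by
    refine integrable_of_bdd_supp ((hBSM.measurable.pow_const 2).aestronglyMeasurable)
      (R := s1^2/2) (M := (Mk * (s - s0))^2) ?_
    intro x
    by_cases hx : x ∈ cB
    · rw [Set.indicator_of_mem hx]
      have h1 := hBbd x
      rw [Set.indicator_of_mem hx] at h1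
      rw [abs_of_nonneg (sq_nonneg _), ← sq_abs]
      exact pow_le_pow_left₀ (abs_nonneg _) h1 2
    · rw [Set.indicator_of_notMem hx, hBsupp x hx]; simp
  -- Edens bound and Econ integrability facts
  obtain ⟨ME0, hME0⟩ := ((isCompact_Icc (a := s0) (b := s1)).prod
    (isCompact_closedBall (0 : Fin 2 → ℝ) (s1^2/2))).exists_bound_of_continuousOn
    ((contOn_Edens hφ).mono (by
      rintro ⟨τ, x⟩ ⟨hτ, -⟩
      exact le_trans hs0.le hτ.1))
  set ME := max ME0 0 with hME'
  have hMEnn : (0:ℝ) ≤ ME := le_max_right _ _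
  have hME : ∀ τ, τ ∈ Set.Icc s0 s1 → ∀ x ∈ cB, |Edens φ τ x| ≤ ME := by
    intro τ hτ x hx
    have := hME0 (τ, x) ⟨hτ, hx⟩
    rw [Real.norm_eq_abs] at this
    exact le_trans this (le_max_left _ _)
  have hEdens_nn : ∀ τ x, 0 ≤ Edens φ τ x := by
    intro τ x; simp only [Edens]; positivity
  have hEcon_nn : ∀ τ, 0 ≤ Econ τ φ := by
    intro τ; rw [Econ_eq]; exact integral_nonneg (fun x => hEdens_nn τ x)
  have hEdens_int : ∀ τ, τ ∈ Set.Ioo s0 s1 → Integrable (fun x => Edens φ τ x) volume := by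
    intro τ hτ
    exact integrable_of_supp (fix_cont (contOn_Edens hφ) (by have := hτ.1; linarith))
      (fun x hx => (hhd0 τ hτ x hx).2)
  have hh2_int : ∀ τ, τ ∈ Set.Ioo s0 s1 → Integrable (fun x => (hdens φ τ x)^2) volume := by
    intro τ hτ
    exact integrable_sq_of_supp (fix_cont (contOn_hdens hφ) (by have := hτ.1; linarith))
      (fun x hx => (hhd0 τ hτ x hx).1)
  have hkcont_x : ∀ τ, τ ∈ Set.Ioo s0 s1 → Continuous (fun x => k τ x) := by
    intro τ hτ
    exact fix_cont (contOn_kdens hφ) (by have := hτ.1; linarith)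
  have hk2int : ∀ τ, τ ∈ Set.Ioo s0 s1 → Integrable (fun x => (k τ x)^2) volume := by
    intro τ hτ
    refine integrable_sq_of_supp (R := s1^2/2) (hkcont_x τ hτ) (fun x hx => ?_)
    rw [hk]; simp [(hhd0 τ hτ x hx).1]
  have hEcon_bd : ∀ τ, τ ∈ Set.Ioo s0 s1 → Econ τ φ ≤ ME * (volume cB).toReal := by
    intro τ hτ
    rw [Econ_eq]
    have hind : Integrable (Set.indicator cB (fun _ => ME)) volume := by
      rw [integrable_indicator_iff measurableSet_closedBall]
      exact integrableOn_const measure_closedBall_lt_top.ne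
    refine le_trans (integral_mono (hEdens_int τ hτ) hind ?_) ?_
    · intro x
      by_cases hx : x ∈ cB
      · rw [Set.indicator_of_mem hx]
        exact le_trans (le_abs_self _) (hME τ (Set.mem_Icc.2 ⟨hτ.1.le, hτ.2.le⟩) x hx)
      · rw [Set.indicator_of_notMem hx, (hhd0 τ hτ x hx).2]
    · rw [integral_indicator_const ME measurableSet_closedBall, smul_eq_mul]
      rw [mul_comm]
      exact le_of_eq rfl
  have hCEnn : (0:ℝ) ≤ ME * (volume cB).toReal := mul_nonneg hMEnn ENNReal.toReal_nonneg
  have hEint : Integrable (fun τ => τ⁻¹ * Real.sqrt (Econ τ φ)) (volume.restrict I) := by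
    have hm : AEStronglyMeasurable (fun τ => τ⁻¹ * Real.sqrt (Econ τ φ))
        (volume.restrict I) := by
      exact ((measurable_id.inv.mul
        (Real.continuous_sqrt.measurable.comp (meas_Econ hφ)))).aestronglyMeasurable
    refine Integrable.mono' (g := fun _ => Real.sqrt (ME * (volume cB).toReal))
      (integrableOn_const measure_Ioc_lt_top.ne) hm ?_
    filter_upwards [haeI, haeIoo] with τ hτI hτ
    have hτ1 : (1:ℝ) ≤ τ := le_trans hs0.le hτI.1.le
    have h1 : τ⁻¹ ≤ 1 := inv_le_one_of_one_le₀ hτ1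
    have h2 : Real.sqrt (Econ τ φ) ≤ Real.sqrt (ME * (volume cB).toReal) :=
      Real.sqrt_le_sqrt (hEcon_bd τ hτ)
    rw [Real.norm_eq_abs, abs_of_nonneg (mul_nonneg (inv_nonneg.2 (by linarith)) (Real.sqrt_nonneg _))]
    calc τ⁻¹ * Real.sqrt (Econ τ φ) ≤ 1 * Real.sqrt (ME * (volume cB).toReal) :=
          mul_le_mul h1 h2 (Real.sqrt_nonneg _) (by norm_num)
      _ = _ := one_mul _
  -- the product function and its integrability
  set Fp : ℝ × (Fin 2 → ℝ) → ℝ := fun z => k z.1 z.2 * Bf z.2 with hFp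
  have hFSM : AEStronglyMeasurable Fp ((volume.restrict I).prod (volume : Measure (Fin 2 → ℝ))) := by
    exact ((meas_kdens hφ).mul (hBSM.measurable.comp measurable_snd)).aestronglyMeasurable
  have hprodae : ∀ᵐ z ∂((volume.restrict I).prod (volume : Measure (Fin 2 → ℝ))), z.1 ∈ Set.Ioo s0 s1 ∧ z.1 ∈ I := by
    rw [ae_iff]
    have hsub : {z : ℝ × (Fin 2 → ℝ) | ¬ (z.1 ∈ Set.Ioo s0 s1 ∧ z.1 ∈ I)}
        = {τ : ℝ | ¬ (τ ∈ Set.Ioo s0 s1 ∧ τ ∈ I)} ×ˢ (Set.univ : Set (Fin 2 → ℝ)) := by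
      ext z; simp
    rw [hsub, Measure.prod_prod]
    have h0 : (volume.restrict I) {τ : ℝ | ¬ (τ ∈ Set.Ioo s0 s1 ∧ τ ∈ I)} = 0 := by
      rw [Measure.restrict_apply' measurableSet_Ioc]
      refine measure_mono_null ?_ (measure_singleton s)
      rintro τ ⟨hτnot, hτI⟩
      simp only [Set.mem_setOf_eq, not_and] at hτnot
      have hτIoc : τ ∈ Set.Ioc s0 s := hτI
      by_cases hcase : τ ∈ Set.Ioo s0 s1
      · exact absurd hτIoc (hτnot hcase)
      · simp only [Set.mem_Ioo, not_and, not_lt] at hcase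
        have := hcase hτIoc.1
        have hτs : τ = s := le_antisymm hτIoc.2 (le_trans (le_trans hs_le this) le_rfl)
        simp [hτs]
    rw [h0, zero_mul]
  have hFbd : ∀ᵐ z ∂((volume.restrict I).prod (volume : Measure (Fin 2 → ℝ))),
      ‖Fp z‖ ≤ Set.indicator ((Set.univ : Set ℝ) ×ˢ cB)
        (fun _ => Mk * (Mk * (s - s0))) z := by
    filter_upwards [hprodae] with z hz
    by_cases hx : z.2 ∈ cB
    · rw [Set.indicator_of_mem (by exact ⟨trivial, hx⟩)]
      have h1 : |k z.1 z.2| ≤ Mk := hMk z.1 (Set.Ioc_subset_Icc_self hz.2) z.2 hx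
      have h2 : |Bf z.2| ≤ Mk * (s - s0) := by
        have := hBbd z.2; rwa [Set.indicator_of_mem hx] at this
      rw [Real.norm_eq_abs, hFp, abs_mul]
      exact mul_le_mul h1 h2 (abs_nonneg _) hMknn
    · have hzmem : z ∉ (Set.univ : Set ℝ) ×ˢ cB := by simp [Set.mem_prod, hx]
      have hk0 : k z.1 z.2 = 0 := by rw [hk]; simp [(hhd0 z.1 hz.1 z.2 hx).1]
      rw [Set.indicator_of_notMem hzmem]
      have hFz : Fp z = 0 := by rw [hFp]; simp [hk0]
      simp [hFz]
  have hFint : Integrable Fp ((volume.restrict I).prod (volume : Measure (Fin 2 → ℝ))) := by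
    refine Integrable.mono' ?_ hFSM hFbd
    rw [integrable_indicator_iff (MeasurableSet.univ.prod measurableSet_closedBall)]
    refine integrableOn_const (ne_of_lt ?_)
    rw [Measure.prod_prod]
    exact ENNReal.mul_lt_top (by simpa using measure_Ioc_lt_top) measure_closedBall_lt_top
  -- Fubini
  have hswap := integral_integral_swap (f := fun τ x => k τ x * Bf x) hFint
  have hBB : ∫ x, (Bf x)^2 = ∫ τ in I, ∫ x, k τ x * Bf x := by
    have h1 : ∀ x, (Bf x)^2 = ∫ τ in I, k τ x * Bf x := by
      intro x
      rw [sq]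
      conv_lhs => rw [hBf]
      exact (integral_mul_const (Bf x) (fun τ => k τ x)).symm
    calc ∫ x, (Bf x)^2 = ∫ x, ∫ τ in I, k τ x * Bf x := by
          exact integral_congr_ae (Filter.Eventually.of_forall h1)
      _ = ∫ τ in I, ∫ x, k τ x * Bf x := hswap.symm
  -- inner Cauchy-Schwarz
  have hinner : ∀ᵐ τ ∂(volume.restrict I),
      (∫ x, k τ x * Bf x) ≤ (τ⁻¹ * (3 * Real.sqrt (Econ τ φ)))
        * Real.sqrt (∫ x, (Bf x)^2) := by
    filter_upwards [haeIoo] with τ hτ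
    have hτpos : 0 < τ := lt_trans hs0pos hτ.1
    have hknn : ∀ x, 0 ≤ k τ x := fun x =>
      mul_nonneg (inv_nonneg.2 hτpos.le) (hdens_nonneg φ τ x)
    have hcs := my_cauchy_schwarz (μ := volume) hknn hBnn (hk2int τ hτ) hB2int
      ((hkcont_x τ hτ).aestronglyMeasurable) hBSM.aestronglyMeasurable
    refine le_trans hcs (mul_le_mul_of_nonneg_right ?_ (Real.sqrt_nonneg _))
    have h1 : ∫ x, (k τ x)^2 = (τ⁻¹)^2 * ∫ x, (hdens φ τ x)^2 := by
      rw [← integral_const_mul]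
      refine integral_congr_ae (Filter.Eventually.of_forall fun x => ?_)
      rw [hk]; ring
    have h2 : ∫ x, (hdens φ τ x)^2 ≤ 9 * Econ τ φ := by
      rw [Econ_eq, ← integral_const_mul]
      refine integral_mono (hh2_int τ hτ) ((hEdens_int τ hτ).const_mul 9) fun x => ?_
      show (hdens φ τ x)^2 ≤ 9 * Edens φ τ x
      simp only [hdens, Edens]
      rw [← sq_abs (τ * ubd 0 φ (hyp τ x)), ← sq_abs (τ * ubd 1 φ (hyp τ x)),
        ← sq_abs (Kvf φ (hyp τ x) + φ (hyp τ x))]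
      set a := |Kvf φ (hyp τ x) + φ (hyp τ x)|
      set b := |τ * ubd 0 φ (hyp τ x)|
      set c := |τ * ubd 1 φ (hyp τ x)|
      nlinarith [sq_nonneg (2*a - b), sq_nonneg (2*a - c), sq_nonneg (b - c)]
    calc Real.sqrt (∫ x, (k τ x)^2) = τ⁻¹ * Real.sqrt (∫ x, (hdens φ τ x)^2) := by
          rw [h1, Real.sqrt_mul (sq_nonneg _), Real.sqrt_sq (inv_nonneg.2 hτpos.le)]
      _ ≤ τ⁻¹ * Real.sqrt (9 * Econ τ φ) :=
          mul_le_mul_of_nonneg_left (Real.sqrt_le_sqrt h2) (inv_nonneg.2 hτpos.le)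
      _ = τ⁻¹ * (3 * Real.sqrt (Econ τ φ)) := by
          rw [Real.sqrt_mul (by norm_num : (0:ℝ) ≤ 9), sqrt_nine]
  -- outer integral
  have hout : (∫ τ in I, ∫ x, k τ x * Bf x)
      ≤ (∫ τ in I, τ⁻¹ * (3 * Real.sqrt (Econ τ φ))) * Real.sqrt (∫ x, (Bf x)^2) := by
    rw [← integral_mul_const]
    refine integral_mono_ae hFint.integral_prod_left ?_ hinner
    have heq : (fun τ => (τ⁻¹ * (3 * Real.sqrt (Econ τ φ))) * Real.sqrt (∫ x, (Bf x)^2))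
        = fun τ => (τ⁻¹ * Real.sqrt (Econ τ φ)) * (3 * Real.sqrt (∫ x, (Bf x)^2)) := by
      funext τ; ring
    rw [heq]
    exact hEint.mul_const _
  set D := ∫ τ in I, τ⁻¹ * (3 * Real.sqrt (Econ τ φ)) with hD
  have hDeq : D = 3 * ∫ τ in I, τ⁻¹ * Real.sqrt (Econ τ φ) := by
    rw [hD, ← integral_const_mul]
    refine integral_congr_ae (Filter.Eventually.of_forall fun τ => ?_)
    ring
  have hDnn : 0 ≤ D := by
    rw [hD]
    refine integral_nonneg_of_ae ?_
    filter_upwards [haeI] with τ hτ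
    have : (0:ℝ) < τ := lt_trans hs0pos hτ.1
    positivity
  have hBle : Real.sqrt (∫ x, (Bf x)^2) ≤ D := by
    set X := Real.sqrt (∫ x, (Bf x)^2) with hX
    have hXnn : 0 ≤ X := Real.sqrt_nonneg _
    have hX2 : X^2 = ∫ x, (Bf x)^2 :=
      Real.sq_sqrt (integral_nonneg fun x => sq_nonneg _)
    have hineq : X^2 ≤ D * X := by
      rw [hX2, hBB]
      exact le_trans hout (by rw [hD])
    rcases eq_or_lt_of_le hXnn with h0 | hpos
    · rw [← h0]; exact hDnn
    · nlinarith
  -- FTC and pointwise bound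
  have hftc : ∀ x, s * φ (hyp s x) = s0 * φ (hyp s0 x) + ∫ τ in I, g0dens φ τ x := by
    intro x
    have hderiv : ∀ τ ∈ Set.uIcc s0 s,
        HasDerivAt (fun σ => σ * φ (hyp σ x)) (g0dens φ τ x) τ := by
      intro τ hτ
      rw [Set.uIcc_of_le hss] at hτ
      exact hasDerivAt_key φ hφ x (by have := hτ.1; linarith)
    have hintg : IntervalIntegrable (fun τ => g0dens φ τ x) volume s0 s := by
      apply ContinuousOn.intervalIntegrable
      rw [Set.uIcc_of_le hss]
      exact fix_contOn (contOn_g0dens hφ) x (fun τ hτ => by have := hτ.1; linarith)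
    have h := intervalIntegral.integral_eq_sub_of_hasDerivAt hderiv hintg
    rw [intervalIntegral.integral_of_le hss] at h
    rw [hI]
    linarith [h]
  have hg0int1 : ∀ x, IntegrableOn (fun τ => |g0dens φ τ x| / hyp s x 0) I volume := by
    intro x
    refine ((ContinuousOn.integrableOn_compact isCompact_Icc ?_).mono_set
      Set.Ioc_subset_Icc_self)
    exact ((fix_contOn (contOn_g0dens hφ) x
      (fun τ hτ => by have := hτ.1; linarith)).abs).div_const _
  have hg0int2 : ∀ x, IntegrableOn (fun τ => k τ x) I volume := by
    intro x
    refine ((ContinuousOn.integrableOn_compact isCompact_Icc ?_).mono_set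
      Set.Ioc_subset_Icc_self)
    exact fix_contOn (contOn_kdens hφ) x (fun τ hτ => by have := hτ.1; linarith)
  have hvb : ∀ x, |vf x| ≤ |af x| + Bf x := by
    intro x
    have hTs : 0 < hyp s x 0 := hypT_pos hspos x
    have hT0 : 0 < hyp s0 x 0 := hypT_pos hs0pos x
    have hv1 : |vf x| = |s * φ (hyp s x)| / hyp s x 0 := by
      show |s / hyp s x 0 * φ (hyp s x)| = _
      rw [div_mul_eq_mul_div, abs_div, abs_of_pos hTs]
    have ha1 : |af x| = |s0 * φ (hyp s0 x)| / hyp s0 x 0 := by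
      show |s0 / hyp s0 x 0 * φ (hyp s0 x)| = _
      rw [div_mul_eq_mul_div, abs_div, abs_of_pos hT0]
    rw [hv1, ha1, hftc x]
    calc |s0 * φ (hyp s0 x) + ∫ τ in I, g0dens φ τ x| / hyp s x 0
        ≤ (|s0 * φ (hyp s0 x)| + |∫ τ in I, g0dens φ τ x|) / hyp s x 0 := by
          gcongr
          exact abs_add_le _ _
      _ = |s0 * φ (hyp s0 x)| / hyp s x 0 + |∫ τ in I, g0dens φ τ x| / hyp s x 0 :=
          add_div _ _ _
      _ ≤ |s0 * φ (hyp s0 x)| / hyp s0 x 0 + ∫ τ in I, |g0dens φ τ x| / hyp s x 0 := by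
          refine add_le_add ?_ ?_
          · gcongr
            exact hypT_mono hs0pos.le hss x
          · rw [integral_div]
            have hnum : |∫ τ in I, g0dens φ τ x| ≤ ∫ τ in I, |g0dens φ τ x| := by
              have h := norm_integral_le_integral_norm
                (μ := volume.restrict I) (fun τ => g0dens φ τ x)
              simpa [Real.norm_eq_abs] using h
            gcongr
      _ ≤ |s0 * φ (hyp s0 x)| / hyp s0 x 0 + ∫ τ in I, k τ x := by
          refine add_le_add_right ?_ _
          refine setIntegral_mono_on (hg0int1 x) (hg0int2 x) measurableSet_Ioc ?_
          intro τ hτ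
          have hτpos : 0 < τ := lt_trans hs0pos hτ.1
          have hTτ : 0 < hyp τ x 0 := hypT_pos hτpos x
          calc |g0dens φ τ x| / hyp s x 0 ≤ |g0dens φ τ x| / hyp τ x 0 := by
                gcongr
                exact hypT_mono hτpos.le hτ.2 x
            _ ≤ τ⁻¹ * hdens φ τ x := pointwise_bound φ x hτpos
      _ = |s0 * φ (hyp s0 x)| / hyp s0 x 0 + Bf x := by rw [hBf]
  -- Minkowski-type assembly
  have habB_int : Integrable (fun x => |af x| * Bf x) volume := by
    refine Integrable.mono' ((ha2int.add hB2int).div_const 2)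
      ((hacont.abs.aestronglyMeasurable).mul hBSM.aestronglyMeasurable)
      (Filter.Eventually.of_forall fun x => ?_)
    rw [Real.norm_eq_abs, abs_of_nonneg (mul_nonneg (abs_nonneg _) (hBnn x))]
    have h1 := sq_nonneg (|af x| - Bf x)
    have h2 := sq_abs (af x)
    simp only [Pi.add_apply]
    nlinarith
  have hsum2int : Integrable (fun x => (|af x| + Bf x)^2) volume := by
    have heq : (fun x => (|af x| + Bf x)^2)
        = fun x => (af x)^2 + ((2 : ℝ) * (|af x| * Bf x) + (Bf x)^2) := by
      funext x
      rw [add_sq, sq_abs]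
      ring
    rw [heq]
    exact ha2int.add ((habB_int.const_mul 2).add hB2int)
  have hint_mono : ∫ x, (vf x)^2 ≤ ∫ x, (|af x| + Bf x)^2 := by
    refine integral_mono hv2int hsum2int fun x => ?_
    have h := hvb x
    have h2 : |vf x|^2 ≤ (|af x| + Bf x)^2 :=
      pow_le_pow_left₀ (abs_nonneg _) h 2
    rwa [sq_abs] at h2
  have hexp : ∫ x, (|af x| + Bf x)^2
      = (∫ x, (af x)^2) + ((2:ℝ) * ∫ x, |af x| * Bf x) + ∫ x, (Bf x)^2 := by
    have heq : (fun x => (|af x| + Bf x)^2)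
        = fun x => (af x)^2 + ((2 : ℝ) * (|af x| * Bf x) + (Bf x)^2) := by
      funext x
      rw [add_sq, sq_abs]
      ring
    have e1 : Integrable (fun x => (2:ℝ) * (|af x| * Bf x) + (Bf x)^2) volume := by
      exact (habB_int.const_mul 2).add hB2int
    rw [heq, integral_add ha2int e1,
      integral_add (habB_int.const_mul 2) hB2int, integral_const_mul]
    ring
  have hcs_ab : ∫ x, |af x| * Bf x
      ≤ Real.sqrt (∫ x, (af x)^2) * Real.sqrt (∫ x, (Bf x)^2) := by
    have ha2int' : Integrable (fun x => |af x|^2) volume :=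
      ha2int.congr (Filter.Eventually.of_forall fun x => (sq_abs (af x)).symm)
    have h := my_cauchy_schwarz (μ := volume) (fun x => abs_nonneg (af x)) hBnn
      ha2int' hB2int hacont.abs.aestronglyMeasurable hBSM.aestronglyMeasurable
    have heq2 : ∫ x, |af x|^2 = ∫ x, (af x)^2 :=
      integral_congr_ae (Filter.Eventually.of_forall fun x => sq_abs (af x))
    rwa [heq2] at h
  set FA := Real.sqrt (∫ x, (af x)^2) with hFA
  set FB := Real.sqrt (∫ x, (Bf x)^2) with hFB
  have hFAnn : 0 ≤ FA := Real.sqrt_nonneg _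
  have hFBnn : 0 ≤ FB := Real.sqrt_nonneg _
  have hFA2 : FA^2 = ∫ x, (af x)^2 := Real.sq_sqrt (integral_nonneg fun x => sq_nonneg _)
  have hFB2 : FB^2 = ∫ x, (Bf x)^2 := Real.sq_sqrt (integral_nonneg fun x => sq_nonneg _)
  have hmain : Real.sqrt (∫ x, (vf x)^2) ≤ FA + FB := by
    have h1 : ∫ x, (vf x)^2 ≤ (FA + FB)^2 := by
      rw [add_sq, hFA2, hFB2]
      have := hcs_ab
      calc ∫ x, (vf x)^2 ≤ ∫ x, (|af x| + Bf x)^2 := hint_mono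
        _ = (∫ x, (af x)^2) + ((2:ℝ) * ∫ x, |af x| * Bf x) + ∫ x, (Bf x)^2 := hexp
        _ ≤ (∫ x, (af x)^2) + 2 * (FA * FB) + ∫ x, (Bf x)^2 := by nlinarith
        _ = (∫ x, (af x)^2) + 2 * FA * FB + ∫ x, (Bf x)^2 := by ring
    calc Real.sqrt (∫ x, (vf x)^2) ≤ Real.sqrt ((FA + FB)^2) := Real.sqrt_le_sqrt h1
      _ = FA + FB := Real.sqrt_sq (by linarith)
  -- identify the L2f quantities
  have hLv : L2f s (fun p => (s / p 0) * φ p) = Real.sqrt (∫ x, (vf x)^2) := rfl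
  have hLa : L2f s0 (fun p => (s0 / p 0) * φ p) = FA := rfl
  have hIval : (∫ τ in s0..s, τ⁻¹ * Real.sqrt (Econ τ φ))
      = ∫ τ in I, τ⁻¹ * Real.sqrt (Econ τ φ) := intervalIntegral.integral_of_le hss
  rw [hLv, hLa, hIval]
  have hFBD : FB ≤ 3 * ∫ τ in I, τ⁻¹ * Real.sqrt (Econ τ φ) := by
    rw [← hDeq]
    exact hBle
  linarith [hmain, hFBD, hFAnn]

end
end

section
/- Commutator estimate for products of derivatives and boosts with a partial derivative. For any finite sequence I of indices in {0,1,2} and any finite sequence J of indices in {1,2}, there exists a constant C = C(|I|, |J|) > 0 such that for every smooth function φ supported in the cone K and every α ∈ {0,1,2}, at every point of K: |[∂^I L^J, ∂_α] φ| ≤ C Σ_{|J'| < |J|} Σ_{β ∈ {0,1,2}} |∂_β ∂^I L^{J'} φ|, where the sum runs over all finite sequences J' of indices in {1,2} of length strictly less than |J|. -/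
noncomputable section

open MeasureTheory

lemma coord_smooth (j : Fin 3) : ContDiff ℝ (⊤:ℕ∞) (fun p : Pt => p j) :=
  (ContinuousLinearMap.proj j : Pt →L[ℝ] ℝ).contDiff

lemma pd_smooth {φ : Pt → ℝ} (h : ContDiff ℝ (⊤:ℕ∞) φ) (i : Fin 3) :
    ContDiff ℝ (⊤:ℕ∞) (pd i φ) :=
  (h.fderiv_right (m := (⊤:ℕ∞)) (by exact_mod_cast le_refl _)).clm_apply contDiff_const

lemma pd_add {f g : Pt → ℝ} {p : Pt} (hf : DifferentiableAt ℝ f p)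
    (hg : DifferentiableAt ℝ g p) (i : Fin 3) :
    pd i (fun q => f q + g q) p = pd i f p + pd i g p := by
  simp [pd, fderiv_fun_add hf hg]

lemma pd_const_mul {f : Pt → ℝ} {p : Pt} (hf : DifferentiableAt ℝ f p) (c : ℝ) (i : Fin 3) :
    pd i (fun q => c * f q) p = c * pd i f p := by
  simp [pd, fderiv_const_mul hf c]

lemma pd_mul {f g : Pt → ℝ} {p : Pt} (hf : DifferentiableAt ℝ f p)
    (hg : DifferentiableAt ℝ g p) (i : Fin 3) :
    pd i (fun q => f q * g q) p = pd i f p * g p + f p * pd i g p := by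
  simp [pd, fderiv_fun_mul hf hg]; ring

lemma pd_coord (i j : Fin 3) (p : Pt) : pd i (fun q => q j) p = if j = i then 1 else 0 := by
  have : (fun q : Pt => q j) = (ContinuousLinearMap.proj j : Pt →L[ℝ] ℝ) := rfl
  rw [pd, this, ContinuousLinearMap.fderiv]
  simp [Pi.single_apply]

lemma smooth_diffAt {φ : Pt → ℝ} (h : ContDiff ℝ (⊤:ℕ∞) φ) (p : Pt) :
    DifferentiableAt ℝ φ p :=
  (h.differentiable (by simp)) p

lemma pd_comm {φ : Pt → ℝ} (h : ContDiff ℝ (⊤:ℕ∞) φ) (i j : Fin 3) (p : Pt) :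
    pd i (pd j φ) p = pd j (pd i φ) p := by
  have hd : DifferentiableAt ℝ (fderiv ℝ φ) p :=
    ((h.fderiv_right (m := (⊤:ℕ∞)) (by exact_mod_cast le_refl _)).differentiable
      (by simp)) p
  have key : ∀ v w : Pt, fderiv ℝ (fun q => fderiv ℝ φ q w) p v =
      fderiv ℝ (fderiv ℝ φ) p v w := by
    intro v w
    rw [fderiv_clm_apply hd (differentiableAt_const _)]
    simp
  have h2 : (2 : WithTop ℕ∞) ≤ ((⊤:ℕ∞) : WithTop ℕ∞) := by
    rw [show ((2 : WithTop ℕ∞)) = ((2:ℕ∞) : WithTop ℕ∞) by norm_cast]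
    exact WithTop.coe_le_coe.mpr le_top
  have hsymm : IsSymmSndFDerivAt ℝ φ p := h.contDiffAt.isSymmSndFDerivAt (by simpa [minSmoothness_of_isRCLikeNormedField] using h2)
  simp only [pd]
  rw [show pd j φ = (fun q => fderiv ℝ φ q (Pi.single j 1)) from rfl,
      show pd i φ = (fun q => fderiv ℝ φ q (Pi.single i 1)) from rfl, key, key, hsymm.eq]

lemma boost_smooth {φ : Pt → ℝ} (h : ContDiff ℝ (⊤:ℕ∞) φ) (a : Fin 2) :
    ContDiff ℝ (⊤:ℕ∞) (boost a φ) := by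
  unfold boost
  exact ((coord_smooth a.succ).mul (pd_smooth h 0)).add ((coord_smooth 0).mul (pd_smooth h a.succ))

lemma boostSeq_smooth {φ : Pt → ℝ} (h : ContDiff ℝ (⊤:ℕ∞) φ) :
    ∀ J : List (Fin 2), ContDiff ℝ (⊤:ℕ∞) (boostSeq J φ)
  | [] => h
  | a :: J => boost_smooth (boostSeq_smooth h J) a

lemma pdSeq_smooth {φ : Pt → ℝ} (h : ContDiff ℝ (⊤:ℕ∞) φ) :
    ∀ I : List (Fin 3), ContDiff ℝ (⊤:ℕ∞) (pdSeq I φ)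
  | [] => h
  | i :: I => pd_smooth (pdSeq_smooth h I) i

/-- The index of the single partial derivative appearing in `[L_a, ∂_α]`. -/
def cI (a : Fin 2) (α : Fin 3) : Fin 3 := if α = 0 then a.succ else 0

/-- The coefficient of the single partial derivative appearing in `[L_a, ∂_α]`. -/
def cC (a : Fin 2) (α : Fin 3) : ℝ := if α = 0 ∨ α = a.succ then -1 else 0

lemma abs_cC_le (a : Fin 2) (α : Fin 3) : |cC a α| ≤ 1 := by
  unfold cC; split <;> norm_num

lemma boost_pd_comm {φ : Pt → ℝ} (h : ContDiff ℝ (⊤:ℕ∞) φ) (a : Fin 2) (α : Fin 3) (p : Pt) :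
    boost a (pd α φ) p = pd α (boost a φ) p + cC a α * pd (cI a α) φ p := by
  have d0 : DifferentiableAt ℝ (pd 0 φ) p := smooth_diffAt (pd_smooth h 0) p
  have ds : DifferentiableAt ℝ (pd a.succ φ) p := smooth_diffAt (pd_smooth h a.succ) p
  have dca : DifferentiableAt ℝ (fun q : Pt => q a.succ) p := smooth_diffAt (coord_smooth a.succ) p
  have dc0 : DifferentiableAt ℝ (fun q : Pt => q 0) p := smooth_diffAt (coord_smooth 0) p
  have e1 : pd α (boost a φ) p
      = (if a.succ = α then (1:ℝ) else 0) * pd 0 φ p + p a.succ * pd α (pd 0 φ) p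
        + ((if (0:Fin 3) = α then (1:ℝ) else 0) * pd a.succ φ p + p 0 * pd α (pd a.succ φ) p) := by
    have : boost a φ = fun q => q a.succ * pd 0 φ q + q 0 * pd a.succ φ q := rfl
    rw [this, pd_add (f := fun q => q a.succ * pd 0 φ q) (g := fun q => q 0 * pd a.succ φ q) (dca.mul d0) (dc0.mul ds), pd_mul dca d0, pd_mul dc0 ds,
      pd_coord, pd_coord]
  have e2 : boost a (pd α φ) p
      = p a.succ * pd α (pd 0 φ) p + p 0 * pd α (pd a.succ φ) p := by
    unfold boost
    rw [pd_comm h 0 α, pd_comm h a.succ α]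
  rw [e1, e2]
  have hs0 : a.succ ≠ (0 : Fin 3) := Fin.succ_ne_zero a
  unfold cC cI
  by_cases h0 : α = 0
  · subst h0
    simp [hs0, Ne.symm hs0]
    ring
  · by_cases hsa : α = a.succ
    · subst hsa
      simp [h0, Ne.symm h0]
      ring
    · rw [if_neg (fun h : a.succ = α => hsa h.symm), if_neg (fun h : (0:Fin 3) = α => h0 h.symm),
        if_neg (by tauto)]
      ring

lemma boost_add {f g : Pt → ℝ} (hf : ContDiff ℝ (⊤:ℕ∞) f) (hg : ContDiff ℝ (⊤:ℕ∞) g)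
    (a : Fin 2) (p : Pt) :
    boost a (fun q => f q + g q) p = boost a f p + boost a g p := by
  unfold boost
  rw [pd_add (smooth_diffAt hf p) (smooth_diffAt hg p),
    pd_add (smooth_diffAt hf p) (smooth_diffAt hg p)]
  ring

lemma boost_const_mul {f : Pt → ℝ} (hf : ContDiff ℝ (⊤:ℕ∞) f) (c : ℝ) (a : Fin 2) (p : Pt) :
    boost a (fun q => c * f q) p = c * boost a f p := by
  unfold boost
  rw [pd_const_mul (smooth_diffAt hf p), pd_const_mul (smooth_diffAt hf p)]
  ring

/-- A remainder term: coefficient, derivative index, boost list. -/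
abbrev Term := ℝ × Fin 3 × List (Fin 2)

/-- The remainder sum. -/
def rem (T : List Term) (φ : Pt → ℝ) (p : Pt) : ℝ :=
  (T.map (fun t => t.1 * pd t.2.1 (boostSeq t.2.2 φ) p)).sum

lemma rem_nil (φ : Pt → ℝ) (p : Pt) : rem [] φ p = 0 := rfl

lemma rem_cons (t : Term) (T : List Term) (φ : Pt → ℝ) (p : Pt) :
    rem (t :: T) φ p = t.1 * pd t.2.1 (boostSeq t.2.2 φ) p + rem T φ p := by
  simp [rem]

lemma rem_smooth {φ : Pt → ℝ} (h : ContDiff ℝ (⊤:ℕ∞) φ) :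
    ∀ T : List Term, ContDiff ℝ (⊤:ℕ∞) (rem T φ)
  | [] => by exact contDiff_const (c := (0:ℝ))
  | t :: T => by
    have : rem (t :: T) φ = fun p => t.1 * pd t.2.1 (boostSeq t.2.2 φ) p + rem T φ p :=
      funext fun p => rem_cons t T φ p
    rw [this]
    exact (contDiff_const.mul (pd_smooth (boostSeq_smooth h _) _)).add (rem_smooth h T)

/-- Commute `boost a` past every term of a remainder. -/
def stepList (a : Fin 2) : List Term → List Term
  | [] => []
  | t :: T => (t.1, t.2.1, a :: t.2.2) :: (t.1 * cC a t.2.1, cI a t.2.1, t.2.2) :: stepList a T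

lemma stepList_length (a : Fin 2) : ∀ T : List Term, (stepList a T).length = 2 * T.length
  | [] => rfl
  | t :: T => by simp [stepList, stepList_length a T]; ring

lemma stepList_mem {a : Fin 2} {L : ℕ} : ∀ {T : List Term},
    (∀ t ∈ T, |t.1| ≤ 1 ∧ t.2.2.length < L) →
    ∀ u ∈ stepList a T, |u.1| ≤ 1 ∧ u.2.2.length < L + 1
  | [], _, u, hu => absurd hu (by simp [stepList])
  | t :: T, hT, u, hu => by
    have ht := hT t (by simp)
    have hT' : ∀ t ∈ T, |t.1| ≤ 1 ∧ t.2.2.length < L := fun s hs => hT s (by simp [hs])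
    rw [stepList] at hu
    rcases List.mem_cons.1 hu with rfl | hu
    · exact ⟨ht.1, by simpa using Nat.add_lt_add_right ht.2 1⟩
    rcases List.mem_cons.1 hu with rfl | hu
    · refine ⟨?_, lt_trans ht.2 (Nat.lt_succ_self L)⟩
      calc |t.1 * cC a t.2.1| = |t.1| * |cC a t.2.1| := abs_mul _ _
        _ ≤ 1 * 1 := mul_le_mul ht.1 (abs_cC_le _ _) (abs_nonneg _) zero_le_one
        _ = 1 := one_mul 1
    · exact stepList_mem hT' u hu

lemma boost_rem {φ : Pt → ℝ} (h : ContDiff ℝ (⊤:ℕ∞) φ) (a : Fin 2) :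
    ∀ (T : List Term) (p : Pt), boost a (rem T φ) p = rem (stepList a T) φ p
  | [], p => by
    have : rem ([] : List Term) φ = fun _ => (0:ℝ) := rfl
    rw [this, stepList]
    have z : (fun _ : Pt => (0:ℝ)) = fun q => (0:ℝ) * (fun _ : Pt => (0:ℝ)) q := by
      funext q; ring
    rw [z, boost_const_mul contDiff_const 0 a p, rem_nil]
    ring
  | t :: T, p => by
    have e : rem (t :: T) φ = fun q => (fun q => t.1 * pd t.2.1 (boostSeq t.2.2 φ) q) q
        + rem T φ q := funext fun q => rem_cons t T φ q
    have hψ := boostSeq_smooth h t.2.2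
    rw [e, boost_add (contDiff_const.mul (pd_smooth hψ _)) (rem_smooth h T) a p,
      boost_const_mul (pd_smooth hψ _) t.1 a p, boost_pd_comm hψ a t.2.1 p,
      boost_rem h a T p, stepList, rem_cons, rem_cons]
    show t.1 * (pd t.2.1 (boost a (boostSeq t.2.2 φ)) p + _) + _ = _
    have : boost a (boostSeq t.2.2 φ) = boostSeq (a :: t.2.2) φ := rfl
    rw [this]
    ring

lemma boost_comm (J : List (Fin 2)) (α : Fin 3) :
    ∃ T : List Term, T.length + 1 ≤ 2 ^ J.length ∧
      (∀ t ∈ T, |t.1| ≤ 1 ∧ t.2.2.length < J.length) ∧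
      ∀ φ : Pt → ℝ, ContDiff ℝ (⊤:ℕ∞) φ → ∀ p : Pt,
        boostSeq J (pd α φ) p = pd α (boostSeq J φ) p + rem T φ p := by
  induction J with
  | nil =>
    exact ⟨[], by simp, by simp, fun φ h p => by simp [boostSeq, rem_nil]⟩
  | cons a J ih =>
    obtain ⟨T, hlen, hmem, heq⟩ := ih
    refine ⟨(cC a α, cI a α, J) :: stepList a T, ?_, ?_, ?_⟩
    · have : (stepList a T).length = 2 * T.length := stepList_length a T
      simp only [List.length_cons, this, List.length]
      calc 2 * T.length + 1 + 1 ≤ 2 * (T.length + 1) := by ring_nf; omega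
        _ ≤ 2 * 2 ^ J.length := Nat.mul_le_mul_left 2 hlen
        _ = 2 ^ (J.length + 1) := (pow_succ' 2 J.length).symm
    · intro t ht
      rcases List.mem_cons.1 ht with rfl | ht
      · exact ⟨abs_cC_le a α, by simp⟩
      · exact stepList_mem hmem t ht
    · intro φ h p
      have hΦ := boostSeq_smooth h J
      have e : boostSeq J (pd α φ) = fun q => pd α (boostSeq J φ) q + rem T φ q :=
        funext fun q => heq φ h q
      show boost a (boostSeq J (pd α φ)) p = _
      rw [e, boost_add (pd_smooth hΦ α) (rem_smooth h T) a p, boost_pd_comm hΦ a α p,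
        boost_rem h a T p, rem_cons]
      show pd α (boost a (boostSeq J φ)) p + _ + _ = _
      have e2 : boostSeq (a :: J) φ = boost a (boostSeq J φ) := rfl
      rw [e2]; ring

lemma pdSeq_add {f g : Pt → ℝ} (hf : ContDiff ℝ (⊤:ℕ∞) f) (hg : ContDiff ℝ (⊤:ℕ∞) g) :
    ∀ (I : List (Fin 3)) (p : Pt),
      pdSeq I (fun q => f q + g q) p = pdSeq I f p + pdSeq I g p
  | [], p => rfl
  | i :: I, p => by
    have e : pdSeq I (fun q => f q + g q) = fun q => pdSeq I f q + pdSeq I g q :=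
      funext fun q => pdSeq_add hf hg I q
    show pd i (pdSeq I fun q => f q + g q) p = _
    rw [e, pd_add (smooth_diffAt (pdSeq_smooth hf I) p) (smooth_diffAt (pdSeq_smooth hg I) p)]
    rfl

lemma pdSeq_const_mul {f : Pt → ℝ} (hf : ContDiff ℝ (⊤:ℕ∞) f) (c : ℝ) :
    ∀ (I : List (Fin 3)) (p : Pt), pdSeq I (fun q => c * f q) p = c * pdSeq I f p
  | [], p => rfl
  | i :: I, p => by
    have e : pdSeq I (fun q => c * f q) = fun q => c * pdSeq I f q :=
      funext fun q => pdSeq_const_mul hf c I q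
    show pd i (pdSeq I fun q => c * f q) p = _
    rw [e, pd_const_mul (smooth_diffAt (pdSeq_smooth hf I) p)]
    rfl

lemma pdSeq_pd {φ : Pt → ℝ} (hφ : ContDiff ℝ (⊤:ℕ∞) φ) (α : Fin 3) :
    ∀ (I : List (Fin 3)) (p : Pt), pdSeq I (pd α φ) p = pd α (pdSeq I φ) p
  | [], p => rfl
  | i :: I, p => by
    have e : pdSeq I (pd α φ) = fun q => pd α (pdSeq I φ) q :=
      funext fun q => pdSeq_pd hφ α I q
    show pd i (pdSeq I (pd α φ)) p = _
    rw [e]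
    exact pd_comm (pdSeq_smooth hφ I) i α p

lemma pdSeq_rem {φ : Pt → ℝ} (h : ContDiff ℝ (⊤:ℕ∞) φ) (I : List (Fin 3)) :
    ∀ (T : List Term) (p : Pt),
      pdSeq I (rem T φ) p
        = (T.map (fun t => t.1 * pd t.2.1 (pdSeq I (boostSeq t.2.2 φ)) p)).sum
  | [], p => by
    have : rem ([] : List Term) φ = fun q => (0:ℝ) * (fun _ : Pt => (0:ℝ)) q := by
      funext q; simp [rem_nil]
    rw [this, pdSeq_const_mul contDiff_const 0 I p]
    simp
  | t :: T, p => by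
    have hψ := boostSeq_smooth h t.2.2
    have e : rem (t :: T) φ = fun q => (fun q => t.1 * pd t.2.1 (boostSeq t.2.2 φ) q) q
        + rem T φ q := funext fun q => rem_cons t T φ q
    rw [e, pdSeq_add (contDiff_const.mul (pd_smooth hψ _)) (rem_smooth h T) I p,
      pdSeq_const_mul (pd_smooth hψ _) t.1 I p, pdSeq_pd hψ t.2.1 I p, pdSeq_rem h I T p]
    simp

lemma abs_list_sum_le {β : Type*} (f : β → ℝ) {S : ℝ} (hS : 0 ≤ S) :
    ∀ T : List β, (∀ t ∈ T, |f t| ≤ S) → |(T.map f).sum| ≤ T.length * S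
  | [], _ => by simp
  | t :: T, hT => by
    have h1 := hT t (by simp)
    have h2 := abs_list_sum_le f hS T (fun s hs => hT s (by simp [hs]))
    simp only [List.map_cons, List.sum_cons, List.length_cons]
    push_cast
    calc |f t + (T.map f).sum| ≤ |f t| + |(T.map f).sum| := abs_add_le _ _
      _ ≤ S + T.length * S := add_le_add h1 h2
      _ = (T.length + 1) * S := by ring


/-- **Commutator estimate** (Lemma 4.4, estimate (4.10a)). For sequences `I` (indices in
`{0,1,2}`) and `J` (indices in `{1,2}`), there is `C = C(|I|,|J|) > 0` such that for smooth
`φ` supported in the cone `K`, any `α` and any point of `K`: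
`|[∂^I L^J, ∂_α]φ| ≤ C Σ_{|J'|<|J|} Σ_β |∂_β ∂^I L^{J'} φ|`. -/
theorem commutator_estimate (n m : ℕ) :
    ∃ C : ℝ, 0 < C ∧
      ∀ (I : List (Fin 3)) (J : List (Fin 2)), I.length = n → J.length = m →
      ∀ φ : Pt → ℝ, ContDiff ℝ (⊤ : ℕ∞) φ → (∀ p, p ∉ coneK → φ p = 0) →
      ∀ (α : Fin 3), ∀ p ∈ coneK,
        |pdSeq I (boostSeq J (pd α φ)) p - pd α (pdSeq I (boostSeq J φ)) p|
          ≤ C * ∑ j ∈ Finset.range m, ∑ J' : Fin j → Fin 2, ∑ β : Fin 3,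
              |pd β (pdSeq I (boostSeq (List.ofFn J') φ)) p| := by
  refine ⟨(2:ℝ)^m, by positivity, ?_⟩
  intro I J hI hJ φ hφ _ α p hp
  subst hJ
  obtain ⟨T, hlen, hmem, heq⟩ := boost_comm J α
  set S := ∑ j ∈ Finset.range J.length, ∑ J' : Fin j → Fin 2, ∑ β : Fin 3,
      |pd β (pdSeq I (boostSeq (List.ofFn J') φ)) p| with hS
  have hS0 : 0 ≤ S := Finset.sum_nonneg fun _ _ => Finset.sum_nonneg fun _ _ =>
    Finset.sum_nonneg fun _ _ => abs_nonneg _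
  have hΦ := boostSeq_smooth hφ J
  -- the exact identity
  have e : boostSeq J (pd α φ) = fun q => pd α (boostSeq J φ) q + rem T φ q :=
    funext fun q => heq φ hφ q
  have eq1 : pdSeq I (boostSeq J (pd α φ)) p - pd α (pdSeq I (boostSeq J φ)) p
      = pdSeq I (rem T φ) p := by
    rw [e, pdSeq_add (pd_smooth hΦ α) (rem_smooth hφ T) I p, pdSeq_pd hΦ α I p]
    ring
  rw [eq1, pdSeq_rem hφ I T p]
  -- bound each term by S
  have hterm : ∀ t ∈ T, |t.1 * pd t.2.1 (pdSeq I (boostSeq t.2.2 φ)) p| ≤ S := by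
    intro t ht
    obtain ⟨hc, hl⟩ := hmem t ht
    have b1 : |pd t.2.1 (pdSeq I (boostSeq t.2.2 φ)) p|
        ≤ ∑ β : Fin 3, |pd β (pdSeq I (boostSeq t.2.2 φ)) p| :=
      Finset.single_le_sum (f := fun β => |pd β (pdSeq I (boostSeq t.2.2 φ)) p|)
        (fun β _ => abs_nonneg _) (Finset.mem_univ t.2.1)
    have b2 : ∑ β : Fin 3, |pd β (pdSeq I (boostSeq t.2.2 φ)) p|
        ≤ ∑ J' : Fin t.2.2.length → Fin 2, ∑ β : Fin 3,
            |pd β (pdSeq I (boostSeq (List.ofFn J') φ)) p| := by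
      have := Finset.single_le_sum
        (f := fun J' : Fin t.2.2.length → Fin 2 =>
          ∑ β : Fin 3, |pd β (pdSeq I (boostSeq (List.ofFn J') φ)) p|)
        (fun _ _ => Finset.sum_nonneg fun _ _ => abs_nonneg _)
        (Finset.mem_univ t.2.2.get)
      simpa [List.ofFn_get] using this
    have b3 : ∑ J' : Fin t.2.2.length → Fin 2, ∑ β : Fin 3,
          |pd β (pdSeq I (boostSeq (List.ofFn J') φ)) p| ≤ S := by
      exact Finset.single_le_sum
        (f := fun j => ∑ J' : Fin j → Fin 2, ∑ β : Fin 3,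
          |pd β (pdSeq I (boostSeq (List.ofFn J') φ)) p|)
        (fun _ _ => Finset.sum_nonneg fun _ _ => Finset.sum_nonneg fun _ _ => abs_nonneg _)
        (Finset.mem_range.2 hl)
    calc |t.1 * pd t.2.1 (pdSeq I (boostSeq t.2.2 φ)) p|
        = |t.1| * |pd t.2.1 (pdSeq I (boostSeq t.2.2 φ)) p| := abs_mul _ _
      _ ≤ 1 * |pd t.2.1 (pdSeq I (boostSeq t.2.2 φ)) p| :=
          mul_le_mul_of_nonneg_right hc (abs_nonneg _)
      _ = |pd t.2.1 (pdSeq I (boostSeq t.2.2 φ)) p| := one_mul _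
      _ ≤ S := le_trans b1 (le_trans b2 b3)
  have hbound := abs_list_sum_le
    (fun t : Term => t.1 * pd t.2.1 (pdSeq I (boostSeq t.2.2 φ)) p) hS0 T hterm
  refine le_trans hbound ?_
  have hT : (T.length : ℝ) ≤ (2:ℝ) ^ J.length := by
    have : (T.length : ℕ) ≤ 2 ^ J.length := le_trans (Nat.le_succ _) hlen
    exact_mod_cast this
  exact mul_le_mul_of_nonneg_right hT hS0
end
end

section
/- Null form estimate in the semi-hyperboloidal frame. Let Q be either Q₀ or one of the Q_{μν} (μ, ν ∈ {0,1,2}). For any finite sequences I (indices in {0,1,2}) and J (indices in {1,2}) there exists C > 0 such that for all smooth functions φ, ψ supported in the cone K, at every point of K: |∂^I L^J Q(φ, ψ)| ≤ C (s/t)² Σ |∂^{I₁} L^{J₁} ∂_t φ| · |∂^{I₂} L^{J₂} ∂_t ψ| + C Σ Σ_{a ∈ {1,2}, β ∈ {0,1,2}} ( |∂^{I₁} L^{J₁} ∂̲_a φ| · |∂^{I₂} L^{J₂} ∂̲_β ψ| + |∂^{I₁} L^{J₁} ∂̲_β φ| · |∂^{I₂} L^{J₂} ∂̲_a ψ| ),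 where both outer sums run over all pairs of sequences with |I₁| + |I₂| ≤ |I| and |J₁| + |J₂| ≤ |J|, and s = √(t² − r²). -/
noncomputable section

open MeasureTheory

/-- The sum `Σ_{|I₁|+|I₂|≤nI, |J₁|+|J₂|≤mJ} |∂^{I₁}L^{J₁}∂_tφ| · |∂^{I₂}L^{J₂}∂_tψ|`. -/
def nullSum1 (nI mJ : ℕ) (φ ψ : Pt → ℝ) (p : Pt) : ℝ :=
  ∑ n1 ∈ Finset.range (nI + 1), ∑ n2 ∈ Finset.range (nI + 1),
  ∑ m1 ∈ Finset.range (mJ + 1), ∑ m2 ∈ Finset.range (mJ + 1),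
    if n1 + n2 ≤ nI ∧ m1 + m2 ≤ mJ then
      ∑ I1 : Fin n1 → Fin 3, ∑ I2 : Fin n2 → Fin 3,
      ∑ J1 : Fin m1 → Fin 2, ∑ J2 : Fin m2 → Fin 2,
        |pdSeq (List.ofFn I1) (boostSeq (List.ofFn J1) (pd 0 φ)) p| *
          |pdSeq (List.ofFn I2) (boostSeq (List.ofFn J2) (pd 0 ψ)) p|
    else 0

/-- The sum `Σ_{|I₁|+|I₂|≤nI, |J₁|+|J₂|≤mJ} Σ_{a,β} (|∂^{I₁}L^{J₁}∂̲_aφ|·|∂^{I₂}L^{J₂}∂̲_βψ|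
+ |∂^{I₁}L^{J₁}∂̲_βφ|·|∂^{I₂}L^{J₂}∂̲_aψ|)`. -/
def nullSum2 (nI mJ : ℕ) (φ ψ : Pt → ℝ) (p : Pt) : ℝ :=
  ∑ n1 ∈ Finset.range (nI + 1), ∑ n2 ∈ Finset.range (nI + 1),
  ∑ m1 ∈ Finset.range (mJ + 1), ∑ m2 ∈ Finset.range (mJ + 1),
    if n1 + n2 ≤ nI ∧ m1 + m2 ≤ mJ then
      ∑ I1 : Fin n1 → Fin 3, ∑ I2 : Fin n2 → Fin 3,
      ∑ J1 : Fin m1 → Fin 2, ∑ J2 : Fin m2 → Fin 2,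
      ∑ a : Fin 2, ∑ β : Fin 3,
        (|pdSeq (List.ofFn I1) (boostSeq (List.ofFn J1) (ubd a φ)) p| *
            |pdSeq (List.ofFn I2) (boostSeq (List.ofFn J2) (ubar β ψ)) p|
          + |pdSeq (List.ofFn I1) (boostSeq (List.ofFn J1) (ubar β φ)) p| *
            |pdSeq (List.ofFn I2) (boostSeq (List.ofFn J2) (ubd a ψ)) p|)
    else 0

namespace NF

def U : Set Pt := {p | 0 < p 0}

lemma isOpen_U : IsOpen U := isOpen_lt continuous_const (continuous_apply 0)

lemma coneK_subset_U : coneK ⊆ U := by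
  intro p hp
  have h0 : 0 ≤ rad p := Real.sqrt_nonneg _
  have h1 : rad p < p 0 - 1 := hp
  show 0 < p 0
  linarith

abbrev CDU (f : Pt → ℝ) : Prop := ContDiffOn ℝ (⊤ : ℕ∞) f U

lemma pd_congr {f g : Pt → ℝ} (h : Set.EqOn f g U) {p : Pt} (hp : p ∈ U) (i : Fin 3) :
    pd i f p = pd i g p := by
  unfold pd
  rw [Filter.EventuallyEq.fderiv_eq (h.eventuallyEq_of_mem (isOpen_U.mem_nhds hp))]

lemma one_le_top' : (1 : WithTop ℕ∞) ≤ ((⊤ : ℕ∞) : WithTop ℕ∞) := by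
  exact_mod_cast (le_top : (1:ℕ∞) ≤ ⊤)

lemma top_add_one_le : ((⊤ : ℕ∞) : WithTop ℕ∞) + 1 ≤ ((⊤ : ℕ∞) : WithTop ℕ∞) := by
  norm_cast

lemma cdu_diffAt {f : Pt → ℝ} (hf : CDU f) {p : Pt} (hp : p ∈ U) : DifferentiableAt ℝ f p :=
  (hf.differentiableOn (ne_of_gt (lt_of_lt_of_le zero_lt_one one_le_top'))).differentiableAt (isOpen_U.mem_nhds hp)

lemma pd_add {f g : Pt → ℝ} {p : Pt} (hf : DifferentiableAt ℝ f p)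
    (hg : DifferentiableAt ℝ g p) (i : Fin 3) :
    pd i (fun q => f q + g q) p = pd i f p + pd i g p := by
  unfold pd
  rw [fderiv_fun_add hf hg]
  simp

lemma pd_mul {f g : Pt → ℝ} {p : Pt} (hf : DifferentiableAt ℝ f p)
    (hg : DifferentiableAt ℝ g p) (i : Fin 3) :
    pd i (fun q => f q * g q) p = pd i f p * g p + f p * pd i g p := by
  unfold pd
  rw [fderiv_fun_mul hf hg]
  simp
  ring

lemma pd_const (r : ℝ) (i : Fin 3) (p : Pt) : pd i (fun _ => r) p = 0 := by
  unfold pd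
  simp

lemma pd_coord (i j : Fin 3) (p : Pt) :
    pd i (fun q => q j) p = if i = j then 1 else 0 := by
  unfold pd
  have : fderiv ℝ (fun q : Pt => q j) p = (ContinuousLinearMap.proj j : Pt →L[ℝ] ℝ) :=
    (ContinuousLinearMap.proj j : Pt →L[ℝ] ℝ).fderiv
  rw [this]
  simp [ContinuousLinearMap.proj_apply, Pi.single_apply]
  by_cases h : i = j <;> simp [h, eq_comm]

lemma cdu_const (r : ℝ) : CDU (fun _ => r) := contDiffOn_const

lemma cdu_coord (j : Fin 3) : CDU (fun p => p j) :=
  ((ContinuousLinearMap.proj j : Pt →L[ℝ] ℝ).contDiff).contDiffOn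

lemma cdu_add {f g : Pt → ℝ} (hf : CDU f) (hg : CDU g) : CDU (fun p => f p + g p) := hf.add hg

lemma cdu_mul {f g : Pt → ℝ} (hf : CDU f) (hg : CDU g) : CDU (fun p => f p * g p) := hf.mul hg

lemma cdu_pd {f : Pt → ℝ} (hf : CDU f) (i : Fin 3) : CDU (pd i f) := by
  have h1 : ContDiffOn ℝ (⊤ : ℕ∞) (fderiv ℝ f) U := hf.fderiv_of_isOpen isOpen_U top_add_one_le
  exact (ContinuousLinearMap.apply ℝ ℝ (Pi.single i 1 : Pt)).contDiff.comp_contDiffOn h1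

lemma cdu_boost {f : Pt → ℝ} (hf : CDU f) (a : Fin 2) : CDU (boost a f) := by
  unfold boost
  exact cdu_add (cdu_mul (cdu_coord a.succ) (cdu_pd hf 0)) (cdu_mul (cdu_coord 0) (cdu_pd hf a.succ))

lemma boost_congr {f g : Pt → ℝ} (h : Set.EqOn f g U) {p : Pt} (hp : p ∈ U) (a : Fin 2) :
    boost a f p = boost a g p := by
  unfold boost
  rw [pd_congr h hp 0, pd_congr h hp a.succ]

lemma boost_add {f g : Pt → ℝ} {p : Pt} (hf : DifferentiableAt ℝ f p)
    (hg : DifferentiableAt ℝ g p) (a : Fin 2) :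
    boost a (fun q => f q + g q) p = boost a f p + boost a g p := by
  unfold boost
  rw [pd_add hf hg, pd_add hf hg]
  ring

lemma boost_mul {f g : Pt → ℝ} {p : Pt} (hf : DifferentiableAt ℝ f p)
    (hg : DifferentiableAt ℝ g p) (a : Fin 2) :
    boost a (fun q => f q * g q) p = boost a f p * g p + f p * boost a g p := by
  unfold boost
  rw [pd_mul hf hg, pd_mul hf hg]
  ring

lemma boost_const (r : ℝ) (a : Fin 2) (p : Pt) : boost a (fun _ => r) p = 0 := by
  unfold boost
  rw [pd_const, pd_const]
  ring

end NF

namespace NF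

structure DOp where
  D : (Pt → ℝ) → Pt → ℝ
  congr : ∀ {f g : Pt → ℝ}, Set.EqOn f g U → ∀ p ∈ U, D f p = D g p
  zero : ∀ p : Pt, D (fun _ => (0:ℝ)) p = 0
  add : ∀ {f g : Pt → ℝ}, CDU f → CDU g → ∀ p ∈ U,
    D (fun q => f q + g q) p = D f p + D g p
  mul : ∀ {f g : Pt → ℝ}, CDU f → CDU g → ∀ p ∈ U,
    D (fun q => f q * g q) p = D f p * g p + f p * D g p
  cdu : ∀ {f : Pt → ℝ}, CDU f → CDU (D f)

def dPd (i : Fin 3) : DOp where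
  D := pd i
  congr := fun h p hp => pd_congr h hp i
  zero := fun p => pd_const 0 i p
  add := fun hf hg p hp => pd_add (cdu_diffAt hf hp) (cdu_diffAt hg hp) i
  mul := fun hf hg p hp => pd_mul (cdu_diffAt hf hp) (cdu_diffAt hg hp) i
  cdu := fun hf => cdu_pd hf i

def dBoost (a : Fin 2) : DOp where
  D := boost a
  congr := fun h p hp => boost_congr h hp a
  zero := fun p => boost_const 0 a p
  add := fun hf hg p hp => boost_add (cdu_diffAt hf hp) (cdu_diffAt hg hp) a
  mul := fun hf hg p hp => boost_mul (cdu_diffAt hf hp) (cdu_diffAt hg hp) a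
  cdu := fun hf => cdu_boost hf a

def dseq : List DOp → (Pt → ℝ) → Pt → ℝ
  | [], f => f
  | o :: l, f => o.D (dseq l f)

lemma pdSeq_eq_dseq : ∀ (I : List (Fin 3)) (f : Pt → ℝ), pdSeq I f = dseq (I.map dPd) f
  | [], f => rfl
  | i :: I, f => by
      show pd i (pdSeq I f) = (dPd i).D (dseq (I.map dPd) f)
      rw [pdSeq_eq_dseq I f]; rfl

lemma boostSeq_eq_dseq : ∀ (J : List (Fin 2)) (f : Pt → ℝ), boostSeq J f = dseq (J.map dBoost) f
  | [], f => rfl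
  | a :: J, f => by
      show boost a (boostSeq J f) = (dBoost a).D (dseq (J.map dBoost) f)
      rw [boostSeq_eq_dseq J f]; rfl

lemma dseq_cdu : ∀ (l : List DOp) {f : Pt → ℝ}, CDU f → CDU (dseq l f)
  | [], _, hf => hf
  | o :: l, _, hf => o.cdu (dseq_cdu l hf)

lemma dseq_congr : ∀ (l : List DOp) {f g : Pt → ℝ}, Set.EqOn f g U →
    Set.EqOn (dseq l f) (dseq l g) U
  | [], f, g, h => h
  | o :: l, f, g, h => fun p hp => o.congr (dseq_congr l h) p hp

lemma dseq_zero : ∀ (l : List DOp), ∀ p ∈ U, dseq l (fun _ => (0:ℝ)) p = 0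
  | [], p, _ => rfl
  | o :: l, p, hp => by
      show (dseq (o :: l) (fun _ => (0:ℝ))) p = 0
      have h1 : Set.EqOn (dseq l (fun _ => (0:ℝ))) (fun _ => (0:ℝ)) U :=
        fun q hq => dseq_zero l q hq
      show o.D (dseq l (fun _ => (0:ℝ))) p = 0
      rw [o.congr h1 p hp]
      exact o.zero p

lemma cdu_listsum {ι : Type} : ∀ (L : List ι) (T : ι → Pt → ℝ), (∀ i ∈ L, CDU (T i)) →
    CDU (fun q => (L.map (fun i => T i q)).sum)
  | [], T, _ => by simpa using cdu_const 0
  | a :: L, T, h => by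
      have h1 : CDU (fun q => T a q + (L.map (fun i => T i q)).sum) :=
        cdu_add (h a (by simp)) (cdu_listsum L T (fun i hi => h i (by simp [hi])))
      simpa using h1

lemma DOp.listsum (o : DOp) {ι : Type} : ∀ (L : List ι) (T : ι → Pt → ℝ),
    (∀ i ∈ L, CDU (T i)) → ∀ p ∈ U,
    o.D (fun q => (L.map (fun i => T i q)).sum) p = (L.map (fun i => o.D (T i) p)).sum
  | [], T, _, p, hp => by
      simpa using o.zero p
  | a :: L, T, h, p, hp => by
      have hfun : (fun q => ((a :: L).map (fun i => T i q)).sum)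
          = (fun q => T a q + (L.map (fun i => T i q)).sum) := by
        funext q; simp
      rw [hfun, o.add (h a (by simp)) (cdu_listsum L T (fun i hi => h i (by simp [hi]))) p hp,
        o.listsum L T (fun i hi => h i (by simp [hi])) p hp]
      simp

lemma dseq_listsum : ∀ (l : List DOp) {ι : Type} (L : List ι) (T : ι → Pt → ℝ),
    (∀ i ∈ L, CDU (T i)) → ∀ p ∈ U,
    dseq l (fun q => (L.map (fun i => T i q)).sum) p = (L.map (fun i => dseq l (T i) p)).sum
  | [], ι, L, T, h, p, hp => rfl
  | o :: l, ι, L, T, h, p, hp => by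
      have h1 : Set.EqOn (dseq l (fun q => (L.map (fun i => T i q)).sum))
          (fun q => (L.map (fun i => dseq l (T i) q)).sum) U :=
        fun q hq => dseq_listsum l L T h q hq
      show o.D (dseq l (fun q => (L.map (fun i => T i q)).sum)) p = _
      rw [o.congr h1 p hp,
        o.listsum L (fun i => dseq l (T i)) (fun i hi => dseq_cdu l (h i hi)) p hp]
      rfl

def splits3 {α : Type} : List α → List (List α × List α × List α)
  | [] => [([], [], [])]
  | o :: l =>
      ((splits3 l).map fun s => (o :: s.1, s.2.1, s.2.2))
        ++ ((splits3 l).map fun s => (s.1, o :: s.2.1, s.2.2))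
        ++ ((splits3 l).map fun s => (s.1, s.2.1, o :: s.2.2))

lemma splits3_length {α : Type} : ∀ (l : List α), ∀ s ∈ splits3 l,
    s.1.length + s.2.1.length + s.2.2.length = l.length
  | [], s, hs => by simp [splits3] at hs; subst hs; simp
  | o :: l, s, hs => by
      simp only [splits3, List.mem_append, List.mem_map] at hs
      rcases hs with (⟨t, ht, rfl⟩ | ⟨t, ht, rfl⟩) | ⟨t, ht, rfl⟩ <;>
        · have := splits3_length l t ht
          simp at this ⊢
          omega

lemma splits3_map {α β : Type} (f : α → β) : ∀ (l : List α),
    splits3 (l.map f) = (splits3 l).map (fun s => (s.1.map f, s.2.1.map f, s.2.2.map f))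
  | [] => by simp [splits3]
  | o :: l => by
      simp only [List.map_cons, splits3, splits3_map f l, List.map_append, List.map_map]
      rfl

lemma list_sum_add3 {ι : Type} : ∀ (L : List ι) (A B C : ι → ℝ),
    (L.map fun i => A i + B i + C i).sum = (L.map A).sum + (L.map B).sum + (L.map C).sum
  | [], _, _, _ => by simp
  | a :: L, A, B, C => by
      simp [list_sum_add3 L A B C]
      ring

lemma dseq_leibniz3 : ∀ (l : List DOp) {f g h : Pt → ℝ}, CDU f → CDU g → CDU h → ∀ p ∈ U,
    dseq l (fun q => f q * g q * h q) p
      = ((splits3 l).map (fun s => dseq s.1 f p * dseq s.2.1 g p * dseq s.2.2 h p)).sum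
  | [], f, g, h, hf, hg, hh, p, hp => by simp [splits3, dseq]
  | o :: l, f, g, h, hf, hg, hh, p, hp => by
      have hEq : Set.EqOn (dseq l (fun q => f q * g q * h q))
          (fun q => ((splits3 l).map
            (fun s => dseq s.1 f q * dseq s.2.1 g q * dseq s.2.2 h q)).sum) U :=
        fun q hq => dseq_leibniz3 l hf hg hh q hq
      have hT : ∀ s ∈ splits3 l, CDU (fun q => dseq s.1 f q * dseq s.2.1 g q * dseq s.2.2 h q) :=
        fun s _ => cdu_mul (cdu_mul (dseq_cdu s.1 hf) (dseq_cdu s.2.1 hg)) (dseq_cdu s.2.2 hh)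
      show o.D (dseq l (fun q => f q * g q * h q)) p = _
      rw [o.congr hEq p hp,
        o.listsum (splits3 l) (fun s q => dseq s.1 f q * dseq s.2.1 g q * dseq s.2.2 h q) hT p hp]
      have hterm : ∀ s ∈ splits3 l,
          o.D (fun q => dseq s.1 f q * dseq s.2.1 g q * dseq s.2.2 h q) p
            = o.D (dseq s.1 f) p * dseq s.2.1 g p * dseq s.2.2 h p
              + dseq s.1 f p * o.D (dseq s.2.1 g) p * dseq s.2.2 h p
              + dseq s.1 f p * dseq s.2.1 g p * o.D (dseq s.2.2 h) p := by
        intro s _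
        have h1 := o.mul (cdu_mul (dseq_cdu s.1 hf) (dseq_cdu s.2.1 hg)) (dseq_cdu s.2.2 hh) p hp
        have h2 := o.mul (dseq_cdu s.1 hf) (dseq_cdu s.2.1 hg) p hp
        rw [h1, h2]
        ring
      rw [List.map_congr_left hterm, list_sum_add3]
      simp only [splits3, List.map_append, List.map_map, List.sum_append]
      rfl

lemma dseq_append : ∀ (l₁ l₂ : List DOp) (f : Pt → ℝ), dseq (l₁ ++ l₂) f = dseq l₁ (dseq l₂ f)
  | [], l₂, f => rfl
  | o :: l₁, l₂, f => by
      show o.D (dseq (l₁ ++ l₂) f) = o.D (dseq l₁ (dseq l₂ f))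
      rw [dseq_append l₁ l₂ f]

end NF

namespace NF

def uu (a : Fin 2) : Pt → ℝ := fun p => p a.succ / p 0
def vv : Pt → ℝ := fun p => 1 / p 0

inductive Coef : (Pt → ℝ) → Prop
  | const (r : ℝ) : Coef (fun _ => r)
  | u (a : Fin 2) : Coef (uu a)
  | v : Coef vv
  | add {c₁ c₂ : Pt → ℝ} : Coef c₁ → Coef c₂ → Coef (fun p => c₁ p + c₂ p)
  | mul {c₁ c₂ : Pt → ℝ} : Coef c₁ → Coef c₂ → Coef (fun p => c₁ p * c₂ p)

lemma U_ne {p : Pt} (hp : p ∈ U) : p 0 ≠ 0 := ne_of_gt hp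

lemma cdu_uu (a : Fin 2) : CDU (uu a) :=
  (cdu_coord a.succ).div (cdu_coord 0) (fun _ hp => U_ne hp)

lemma cdu_vv : CDU vv := (cdu_const 1).div (cdu_coord 0) (fun _ hp => U_ne hp)

lemma coef_cdu {c : Pt → ℝ} (hc : Coef c) : CDU c := by
  induction hc with
  | const r => exact cdu_const r
  | u a => exact cdu_uu a
  | v => exact cdu_vv
  | add _ _ ih₁ ih₂ => exact cdu_add ih₁ ih₂
  | mul _ _ ih₁ ih₂ => exact cdu_mul ih₁ ih₂

lemma K_t {p : Pt} (hp : p ∈ coneK) : 1 < p 0 := by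
  have h0 : 0 ≤ rad p := Real.sqrt_nonneg _
  have h1 : rad p < p 0 - 1 := hp
  linarith

lemma K_abs_coord {p : Pt} (hp : p ∈ coneK) (j : Fin 3) (hj : j = 1 ∨ j = 2) :
    |p j| ≤ rad p := by
  have : |p j| = Real.sqrt ((p j)^2) := (Real.sqrt_sq_eq_abs _).symm
  rw [this]
  unfold rad
  apply Real.sqrt_le_sqrt
  rcases hj with h | h <;> subst h <;> nlinarith [sq_nonneg (p 1), sq_nonneg (p 2)]

lemma K_succ_le {p : Pt} (hp : p ∈ coneK) (a : Fin 2) : |p a.succ| ≤ p 0 := by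
  have h1 : rad p < p 0 - 1 := hp
  have h2 : |p a.succ| ≤ rad p := by
    apply K_abs_coord hp
    fin_cases a
    · left; rfl
    · right; rfl
  linarith

lemma coef_bound {c : Pt → ℝ} (hc : Coef c) : ∃ C : ℝ, 0 ≤ C ∧ ∀ p ∈ coneK, |c p| ≤ C := by
  induction hc with
  | const r => exact ⟨|r|, abs_nonneg r, fun p _ => le_refl _⟩
  | u a =>
      refine ⟨1, zero_le_one, fun p hp => ?_⟩
      have h0 : (0:ℝ) < p 0 := lt_trans zero_lt_one (K_t hp)
      have h1 := K_succ_le hp a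
      rw [show uu a p = p a.succ / p 0 from rfl, abs_div, abs_of_pos h0, div_le_one h0]
      exact h1
  | v =>
      refine ⟨1, zero_le_one, fun p hp => ?_⟩
      have h0 : (0:ℝ) < p 0 := lt_trans zero_lt_one (K_t hp)
      rw [show vv p = 1 / p 0 from rfl, abs_div, abs_one, abs_of_pos h0, div_le_one h0]
      linarith [K_t hp]
  | add _ _ ih₁ ih₂ =>
      obtain ⟨C₁, hC₁, h₁⟩ := ih₁
      obtain ⟨C₂, hC₂, h₂⟩ := ih₂
      exact ⟨C₁ + C₂, by linarith, fun p hp =>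
        le_trans (abs_add_le _ _) (add_le_add (h₁ p hp) (h₂ p hp))⟩
  | mul _ _ ih₁ ih₂ =>
      obtain ⟨C₁, hC₁, h₁⟩ := ih₁
      obtain ⟨C₂, hC₂, h₂⟩ := ih₂
      refine ⟨C₁ * C₂, mul_nonneg hC₁ hC₂, fun p hp => ?_⟩
      rw [abs_mul]
      exact mul_le_mul (h₁ p hp) (h₂ p hp) (abs_nonneg _) hC₁

lemma hasFDerivAt_coord (j : Fin 3) (p : Pt) :
    HasFDerivAt (fun q : Pt => q j) (ContinuousLinearMap.proj j : Pt →L[ℝ] ℝ) p :=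
  (ContinuousLinearMap.proj j : Pt →L[ℝ] ℝ).hasFDerivAt

lemma pd_uu (a : Fin 2) (i : Fin 3) {p : Pt} (hp : p ∈ U) :
    pd i (uu a) p = ((if i = a.succ then (1:ℝ) else 0) - uu a p * (if i = 0 then 1 else 0)) / p 0 := by
  have h0 : p 0 ≠ 0 := U_ne hp
  have hd : DifferentiableAt ℝ (uu a) p := cdu_diffAt (cdu_uu a) hp
  have hc0 : DifferentiableAt ℝ (fun q : Pt => q 0) p := (hasFDerivAt_coord 0 p).differentiableAt
  have hEq : Set.EqOn (fun q : Pt => q a.succ) (fun q => uu a q * q 0) U := by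
    intro q hq
    show q a.succ = q a.succ / q 0 * q 0
    rw [div_mul_cancel₀ _ (U_ne hq)]
  have h1 := pd_congr hEq hp i
  rw [pd_coord, pd_mul hd hc0 i, pd_coord] at h1
  rw [eq_div_iff h0]
  linarith [h1]

lemma pd_vv (i : Fin 3) {p : Pt} (hp : p ∈ U) :
    pd i vv p = -(vv p * (if i = 0 then 1 else 0)) / p 0 := by
  have h0 : p 0 ≠ 0 := U_ne hp
  have hd : DifferentiableAt ℝ vv p := cdu_diffAt cdu_vv hp
  have hc0 : DifferentiableAt ℝ (fun q : Pt => q 0) p := (hasFDerivAt_coord 0 p).differentiableAt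
  have hEq : Set.EqOn (fun _ : Pt => (1:ℝ)) (fun q => vv q * q 0) U := by
    intro q hq
    show (1:ℝ) = 1 / q 0 * q 0
    rw [div_mul_cancel₀ _ (U_ne hq)]
  have h1 := pd_congr hEq hp i
  rw [pd_const, pd_mul hd hc0 i, pd_coord] at h1
  rw [eq_div_iff h0]
  linarith [h1]

end NF

namespace NF

lemma coef_pd {c : Pt → ℝ} (hc : Coef c) (i : Fin 3) :
    ∃ c' : Pt → ℝ, Coef c' ∧ ∀ p ∈ U, pd i c p = vv p * c' p := by
  induction hc with
  | const r =>
      exact ⟨fun _ => 0, Coef.const 0, fun p hp => by rw [pd_const]; simp⟩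
  | u a =>
      refine ⟨fun p => (fun _ => if i = a.succ then (1:ℝ) else 0) p
        + ((-1) * uu a p) * (fun _ => if i = 0 then (1:ℝ) else 0) p,
        Coef.add (Coef.const _) (Coef.mul (Coef.mul (Coef.const (-1)) (Coef.u a)) (Coef.const _)),
        fun p hp => ?_⟩
      rw [pd_uu a i hp]
      show _ = vv p * ((if i = a.succ then (1:ℝ) else 0) + (-1) * uu a p * (if i = 0 then (1:ℝ) else 0))
      unfold vv
      field_simp [U_ne hp]
      split_ifs <;> ring
  | v =>
      refine ⟨fun p => ((-1) * vv p) * (fun _ => if i = 0 then (1:ℝ) else 0) p,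
        Coef.mul (Coef.mul (Coef.const (-1)) Coef.v) (Coef.const _), fun p hp => ?_⟩
      rw [pd_vv i hp]
      show _ = vv p * ((-1) * vv p * (if i = 0 then (1:ℝ) else 0))
      unfold vv
      field_simp [U_ne hp]
  | add h₁ h₂ ih₁ ih₂ =>
      obtain ⟨c₁', hc₁', he₁⟩ := ih₁
      obtain ⟨c₂', hc₂', he₂⟩ := ih₂
      refine ⟨fun p => c₁' p + c₂' p, Coef.add hc₁' hc₂', fun p hp => ?_⟩
      rw [pd_add (cdu_diffAt (coef_cdu h₁) hp) (cdu_diffAt (coef_cdu h₂) hp) i,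
        he₁ p hp, he₂ p hp]
      ring
  | mul h₁ h₂ ih₁ ih₂ =>
      rename_i c₁ c₂
      obtain ⟨c₁', hc₁', he₁⟩ := ih₁
      obtain ⟨c₂', hc₂', he₂⟩ := ih₂
      refine ⟨fun p => c₁' p * c₂ p + c₁ p * c₂' p,
        Coef.add (Coef.mul hc₁' h₂) (Coef.mul h₁ hc₂'), fun p hp => ?_⟩
      rw [pd_mul (cdu_diffAt (coef_cdu h₁) hp) (cdu_diffAt (coef_cdu h₂) hp) i,
        he₁ p hp, he₂ p hp]
      ring

lemma coef_boost {c : Pt → ℝ} (hc : Coef c) (a : Fin 2) :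
    ∃ c' : Pt → ℝ, Coef c' ∧ ∀ p ∈ U, boost a c p = c' p := by
  obtain ⟨c₀, hc₀, he₀⟩ := coef_pd hc 0
  obtain ⟨cₐ, hcₐ, heₐ⟩ := coef_pd hc a.succ
  refine ⟨fun p => uu a p * c₀ p + cₐ p,
    Coef.add (Coef.mul (Coef.u a) hc₀) hcₐ, fun p hp => ?_⟩
  unfold boost
  rw [he₀ p hp, heₐ p hp]
  unfold uu vv
  field_simp [U_ne hp]

lemma coef_boostSeq {c : Pt → ℝ} (hc : Coef c) : ∀ (J : List (Fin 2)),
    ∃ c' : Pt → ℝ, Coef c' ∧ ∀ p ∈ U, boostSeq J c p = c' p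
  | [] => ⟨c, hc, fun _ _ => rfl⟩
  | a :: J => by
      obtain ⟨c₁, hc₁, he₁⟩ := coef_boostSeq hc J
      obtain ⟨c₂, hc₂, he₂⟩ := coef_boost hc₁ a
      refine ⟨c₂, hc₂, fun p hp => ?_⟩
      show boost a (boostSeq J c) p = c₂ p
      rw [boost_congr (fun q hq => he₁ q hq) hp a, he₂ p hp]

lemma coef_seq {c : Pt → ℝ} (hc : Coef c) (J : List (Fin 2)) : ∀ (I : List (Fin 3)),
    ∃ c' : Pt → ℝ, Coef c' ∧ ∀ p ∈ U, pdSeq I (boostSeq J c) p = c' p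
  | [] => by
      obtain ⟨c₁, hc₁, he₁⟩ := coef_boostSeq hc J
      exact ⟨c₁, hc₁, fun p hp => he₁ p hp⟩
  | i :: I => by
      obtain ⟨c₁, hc₁, he₁⟩ := coef_seq hc J I
      obtain ⟨c₂, hc₂, he₂⟩ := coef_pd hc₁ i
      refine ⟨fun p => vv p * c₂ p, Coef.mul Coef.v hc₂, fun p hp => ?_⟩
      show pd i (pdSeq I (boostSeq J c)) p = vv p * c₂ p
      rw [pd_congr (fun q hq => he₁ q hq) hp i, he₂ p hp]

def wfun : Pt → ℝ := fun p => (1:ℝ) + (-1) * (uu 0 p * uu 0 p + uu 1 p * uu 1 p)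

lemma coef_wfun : Coef wfun :=
  Coef.add (Coef.const 1) (Coef.mul (Coef.const (-1))
    (Coef.add (Coef.mul (Coef.u 0) (Coef.u 0)) (Coef.mul (Coef.u 1) (Coef.u 1))))

lemma cdu_wfun : CDU wfun := coef_cdu coef_wfun

lemma pd_wfun (i : Fin 3) {p : Pt} (hp : p ∈ U) :
    pd i wfun p = (-1) * (uu 0 p * pd i (uu 0) p + pd i (uu 0) p * uu 0 p
      + (uu 1 p * pd i (uu 1) p + pd i (uu 1) p * uu 1 p)) := by
  have d0 : DifferentiableAt ℝ (uu 0) p := cdu_diffAt (cdu_uu 0) hp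
  have d1 : DifferentiableAt ℝ (uu 1) p := cdu_diffAt (cdu_uu 1) hp
  have dsq0 : DifferentiableAt ℝ (fun q => uu 0 q * uu 0 q) p := d0.mul d0
  have dsq1 : DifferentiableAt ℝ (fun q => uu 1 q * uu 1 q) p := d1.mul d1
  have dsum : DifferentiableAt ℝ (fun q => uu 0 q * uu 0 q + uu 1 q * uu 1 q) p := dsq0.add dsq1
  have dc : DifferentiableAt ℝ (fun _ : Pt => (-1:ℝ)) p := differentiableAt_const _
  unfold wfun
  rw [pd_add (g := fun q => (-1:ℝ) * (uu 0 q * uu 0 q + uu 1 q * uu 1 q)) (differentiableAt_const _) (dc.mul dsum) i, pd_const,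
    pd_mul dc dsum i, pd_const, pd_add dsq0 dsq1 i, pd_mul d0 d0 i, pd_mul d1 d1 i]
  ring

lemma boost_vv (a : Fin 2) {p : Pt} (hp : p ∈ U) :
    boost a vv p = vv p * ((-1) * uu a p) := by
  unfold boost
  rw [pd_vv 0 hp, pd_vv a.succ hp]
  simp [Fin.succ_ne_zero, (Fin.succ_ne_zero a).symm]
  unfold vv uu
  field_simp [U_ne hp]

lemma boost_wfun (a : Fin 2) {p : Pt} (hp : p ∈ U) :
    boost a wfun p = wfun p * ((-2) * uu a p) := by
  unfold boost
  rw [pd_wfun 0 hp, pd_wfun a.succ hp,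
    pd_uu 0 0 hp, pd_uu 1 0 hp, pd_uu 0 a.succ hp, pd_uu 1 a.succ hp]
  unfold wfun uu
  fin_cases a <;>
    · simp [Fin.succ_ne_zero, (Fin.succ_ne_zero _).symm, Fin.ext_iff]
      have h0 : p 0 ≠ 0 := U_ne hp
      field_simp
      ring

end NF

namespace NF

def WtRep (c : Pt → ℝ) : Prop :=
  ∃ c₁ c₂ : Pt → ℝ, Coef c₁ ∧ Coef c₂ ∧ ∀ p ∈ U, c p = vv p * c₁ p + wfun p * c₂ p

lemma wtrep_pd {c : Pt → ℝ} (h : WtRep c) (i : Fin 3) : WtRep (pd i c) := by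
  obtain ⟨c₁, c₂, hc₁, hc₂, he⟩ := h
  obtain ⟨v', hv', hev⟩ := coef_pd Coef.v i
  obtain ⟨c₁', hc₁', he₁⟩ := coef_pd hc₁ i
  obtain ⟨w', hw', hew⟩ := coef_pd coef_wfun i
  obtain ⟨c₂', hc₂', he₂⟩ := coef_pd hc₂ i
  refine ⟨fun p => v' p * c₁ p + vv p * c₁' p + w' p * c₂ p, fun p => vv p * c₂' p,
    Coef.add (Coef.add (Coef.mul hv' hc₁) (Coef.mul Coef.v hc₁')) (Coef.mul hw' hc₂),
    Coef.mul Coef.v hc₂', fun p hp => ?_⟩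
  have hEq : Set.EqOn c (fun q => vv q * c₁ q + wfun q * c₂ q) U := fun q hq => he q hq
  rw [pd_congr hEq hp i,
    pd_add (cdu_diffAt (cdu_mul cdu_vv (coef_cdu hc₁)) hp)
      (cdu_diffAt (cdu_mul cdu_wfun (coef_cdu hc₂)) hp) i,
    pd_mul (cdu_diffAt cdu_vv hp) (cdu_diffAt (coef_cdu hc₁) hp) i,
    pd_mul (cdu_diffAt cdu_wfun hp) (cdu_diffAt (coef_cdu hc₂) hp) i,
    hev p hp, he₁ p hp, hew p hp, he₂ p hp]
  ring

lemma wtrep_boost {c : Pt → ℝ} (h : WtRep c) (a : Fin 2) : WtRep (boost a c) := by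
  obtain ⟨c₁, c₂, hc₁, hc₂, he⟩ := h
  obtain ⟨e₁, he₁', hee₁⟩ := coef_boost hc₁ a
  obtain ⟨e₂, he₂', hee₂⟩ := coef_boost hc₂ a
  refine ⟨fun p => (-1) * uu a p * c₁ p + e₁ p, fun p => (-2) * uu a p * c₂ p + e₂ p,
    Coef.add (Coef.mul (Coef.mul (Coef.const (-1)) (Coef.u a)) hc₁) he₁',
    Coef.add (Coef.mul (Coef.mul (Coef.const (-2)) (Coef.u a)) hc₂) he₂', fun p hp => ?_⟩
  have hEq : Set.EqOn c (fun q => vv q * c₁ q + wfun q * c₂ q) U := fun q hq => he q hq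
  rw [boost_congr hEq hp a,
    boost_add (cdu_diffAt (cdu_mul cdu_vv (coef_cdu hc₁)) hp)
      (cdu_diffAt (cdu_mul cdu_wfun (coef_cdu hc₂)) hp) a,
    boost_mul (cdu_diffAt cdu_vv hp) (cdu_diffAt (coef_cdu hc₁) hp) a,
    boost_mul (cdu_diffAt cdu_wfun hp) (cdu_diffAt (coef_cdu hc₂) hp) a,
    boost_vv a hp, boost_wfun a hp, hee₁ p hp, hee₂ p hp]
  ring

lemma wtrep_boostSeq {c : Pt → ℝ} (h : WtRep c) : ∀ J : List (Fin 2), WtRep (boostSeq J c)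
  | [] => h
  | a :: J => wtrep_boost (wtrep_boostSeq h J) a

lemma wtrep_seq {c : Pt → ℝ} (h : WtRep c) (J : List (Fin 2)) :
    ∀ I : List (Fin 3), WtRep (pdSeq I (boostSeq J c))
  | [] => wtrep_boostSeq h J
  | i :: I => wtrep_pd (wtrep_seq h J I) i

lemma K_rad_sq {p : Pt} : (rad p)^2 = (p 1)^2 + (p 2)^2 :=
  Real.sq_sqrt (by positivity)

lemma K_wfun {p : Pt} (hp : p ∈ coneK) :
    0 ≤ wfun p ∧ vv p ≤ wfun p ∧ 0 ≤ vv p ∧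
      wfun p = (Real.sqrt ((p 0)^2 - (rad p)^2) / p 0)^2 := by
  have ht : 1 < p 0 := K_t hp
  have ht0 : p 0 ≠ 0 := by linarith
  have hr : rad p < p 0 - 1 := hp
  have hr0 : 0 ≤ rad p := Real.sqrt_nonneg _
  have hr2 : (rad p)^2 = (p 1)^2 + (p 2)^2 := K_rad_sq
  have hA : wfun p = ((p 0)^2 - (rad p)^2) / (p 0)^2 := by
    unfold wfun uu
    rw [hr2]
    have h1 : ((0 : Fin 2).succ : Fin 3) = 1 := rfl
    have h2 : ((1 : Fin 2).succ : Fin 3) = 2 := rfl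
    rw [h1, h2]
    field_simp
    ring
  have hpos : 0 ≤ (p 0)^2 - (rad p)^2 := by nlinarith
  have hB : (Real.sqrt ((p 0)^2 - (rad p)^2) / p 0)^2 = ((p 0)^2 - (rad p)^2) / (p 0)^2 := by
    rw [div_pow, Real.sq_sqrt hpos]
  refine ⟨?_, ?_, ?_, by rw [hA, hB]⟩
  · rw [hA]; positivity
  · rw [hA]
    show 1 / p 0 ≤ _
    rw [div_le_div_iff₀ (by linarith) (by positivity)]
    have h1 : rad p ^ 2 ≤ (p 0 - 1)^2 := by nlinarith
    have h3 : (rad p)^2 * p 0 ≤ (p 0 - 1)^2 * p 0 :=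
      mul_le_mul_of_nonneg_right h1 (by linarith)
    nlinarith [h3, ht]
  · show 0 ≤ 1 / p 0
    positivity

lemma wtrep_bound {c : Pt → ℝ} (h : WtRep c) :
    ∃ C : ℝ, 0 ≤ C ∧ ∀ p ∈ coneK,
      |c p| ≤ C * (Real.sqrt ((p 0)^2 - (rad p)^2) / p 0)^2 := by
  obtain ⟨c₁, c₂, hc₁, hc₂, he⟩ := h
  obtain ⟨C₁, hC₁, hb₁⟩ := coef_bound hc₁
  obtain ⟨C₂, hC₂, hb₂⟩ := coef_bound hc₂
  refine ⟨C₁ + C₂, by linarith, fun p hp => ?_⟩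
  obtain ⟨hw0, hvw, hv0, hweq⟩ := K_wfun hp
  rw [he p (coneK_subset_U hp), ← hweq]
  calc |vv p * c₁ p + wfun p * c₂ p|
      ≤ |vv p * c₁ p| + |wfun p * c₂ p| := abs_add_le _ _
    _ = vv p * |c₁ p| + wfun p * |c₂ p| := by
        rw [abs_mul, abs_mul, abs_of_nonneg hv0, abs_of_nonneg hw0]
    _ ≤ wfun p * C₁ + wfun p * C₂ := by
        have h1 : vv p * |c₁ p| ≤ wfun p * |c₁ p| := by
          apply mul_le_mul_of_nonneg_right hvw (abs_nonneg _)
        have h2 : wfun p * |c₁ p| ≤ wfun p * C₁ :=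
          mul_le_mul_of_nonneg_left (hb₁ p hp) hw0
        have h3 : wfun p * |c₂ p| ≤ wfun p * C₂ :=
          mul_le_mul_of_nonneg_left (hb₂ p hp) hw0
        linarith
    _ = (C₁ + C₂) * wfun p := by ring

end NF

namespace NF

def pair2 (φ ψ : Pt → ℝ) (p : Pt) {n1 n2 m1 m2 : ℕ} (I1 : Fin n1 → Fin 3) (I2 : Fin n2 → Fin 3)
    (J1 : Fin m1 → Fin 2) (J2 : Fin m2 → Fin 2) (a : Fin 2) (β : Fin 3) : ℝ :=
  |pdSeq (List.ofFn I1) (boostSeq (List.ofFn J1) (ubd a φ)) p| *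
      |pdSeq (List.ofFn I2) (boostSeq (List.ofFn J2) (ubar β ψ)) p|
    + |pdSeq (List.ofFn I1) (boostSeq (List.ofFn J1) (ubar β φ)) p| *
      |pdSeq (List.ofFn I2) (boostSeq (List.ofFn J2) (ubd a ψ)) p|

def S6 (φ ψ : Pt → ℝ) (p : Pt) {n1 n2 m1 m2 : ℕ} (I1 : Fin n1 → Fin 3) (I2 : Fin n2 → Fin 3)
    (J1 : Fin m1 → Fin 2) (J2 : Fin m2 → Fin 2) : ℝ :=
  ∑ a : Fin 2, ∑ β : Fin 3, pair2 φ ψ p I1 I2 J1 J2 a β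

def S5 (φ ψ : Pt → ℝ) (p : Pt) (n1 n2 m1 m2 : ℕ) : ℝ :=
  ∑ I1 : Fin n1 → Fin 3, ∑ I2 : Fin n2 → Fin 3,
  ∑ J1 : Fin m1 → Fin 2, ∑ J2 : Fin m2 → Fin 2, S6 φ ψ p I1 I2 J1 J2

lemma pair2_nonneg {φ ψ p n1 n2 m1 m2} (I1 : Fin n1 → Fin 3) (I2 : Fin n2 → Fin 3)
    (J1 : Fin m1 → Fin 2) (J2 : Fin m2 → Fin 2) (a : Fin 2) (β : Fin 3) :
    0 ≤ pair2 φ ψ p I1 I2 J1 J2 a β := by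
  unfold pair2; positivity

lemma S6_nonneg {φ ψ p n1 n2 m1 m2} (I1 : Fin n1 → Fin 3) (I2 : Fin n2 → Fin 3)
    (J1 : Fin m1 → Fin 2) (J2 : Fin m2 → Fin 2) : 0 ≤ S6 φ ψ p I1 I2 J1 J2 :=
  Finset.sum_nonneg fun a _ => Finset.sum_nonneg fun β _ => pair2_nonneg I1 I2 J1 J2 a β

lemma S5_nonneg {φ ψ p} (n1 n2 m1 m2 : ℕ) : 0 ≤ S5 φ ψ p n1 n2 m1 m2 :=
  Finset.sum_nonneg fun _ _ => Finset.sum_nonneg fun _ _ => Finset.sum_nonneg fun _ _ =>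
    Finset.sum_nonneg fun _ _ => S6_nonneg _ _ _ _

lemma ite_nonneg' {c : Prop} [Decidable c] {x : ℝ} (h : 0 ≤ x) : 0 ≤ if c then x else 0 := by
  split
  · exact h
  · exact le_refl 0

lemma nullSum2_eq (nI mJ : ℕ) (φ ψ : Pt → ℝ) (p : Pt) :
    nullSum2 nI mJ φ ψ p
      = ∑ n1 ∈ Finset.range (nI + 1), ∑ n2 ∈ Finset.range (nI + 1),
        ∑ m1 ∈ Finset.range (mJ + 1), ∑ m2 ∈ Finset.range (mJ + 1),
          if n1 + n2 ≤ nI ∧ m1 + m2 ≤ mJ then S5 φ ψ p n1 n2 m1 m2 else 0 := rfl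

lemma nullSum2_nonneg (nI mJ : ℕ) (φ ψ : Pt → ℝ) (p : Pt) : 0 ≤ nullSum2 nI mJ φ ψ p := by
  rw [nullSum2_eq]
  exact Finset.sum_nonneg fun _ _ => Finset.sum_nonneg fun _ _ => Finset.sum_nonneg fun _ _ =>
    Finset.sum_nonneg fun _ _ => ite_nonneg' (S5_nonneg _ _ _ _)

lemma S5_le_nullSum2 {nI mJ n1 n2 m1 m2 : ℕ} (h1 : n1 + n2 ≤ nI) (h2 : m1 + m2 ≤ mJ)
    (φ ψ : Pt → ℝ) (p : Pt) : S5 φ ψ p n1 n2 m1 m2 ≤ nullSum2 nI mJ φ ψ p := by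
  rw [nullSum2_eq]
  have e1 : S5 φ ψ p n1 n2 m1 m2
      = if n1 + n2 ≤ nI ∧ m1 + m2 ≤ mJ then S5 φ ψ p n1 n2 m1 m2 else 0 :=
    (if_pos ⟨h1, h2⟩).symm
  rw [e1]
  have nn4 : ∀ m2' ∈ Finset.range (mJ + 1),
      (0:ℝ) ≤ if n1 + n2 ≤ nI ∧ m1 + m2' ≤ mJ then S5 φ ψ p n1 n2 m1 m2' else 0 :=
    fun m2' _ => ite_nonneg' (S5_nonneg _ _ _ _)
  refine le_trans (Finset.single_le_sum nn4 (Finset.mem_range.mpr (by omega))) ?_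
  have nn3 : ∀ m1' ∈ Finset.range (mJ + 1), (0:ℝ) ≤ ∑ m2' ∈ Finset.range (mJ + 1),
      if n1 + n2 ≤ nI ∧ m1' + m2' ≤ mJ then S5 φ ψ p n1 n2 m1' m2' else 0 :=
    fun _ _ => Finset.sum_nonneg fun _ _ => ite_nonneg' (S5_nonneg _ _ _ _)
  refine le_trans (Finset.single_le_sum nn3 (Finset.mem_range.mpr (by omega))) ?_
  have nn2 : ∀ n2' ∈ Finset.range (nI + 1), (0:ℝ) ≤ ∑ m1' ∈ Finset.range (mJ + 1),
      ∑ m2' ∈ Finset.range (mJ + 1),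
      if n1 + n2' ≤ nI ∧ m1' + m2' ≤ mJ then S5 φ ψ p n1 n2' m1' m2' else 0 :=
    fun _ _ => Finset.sum_nonneg fun _ _ => Finset.sum_nonneg fun _ _ =>
      ite_nonneg' (S5_nonneg _ _ _ _)
  refine le_trans (Finset.single_le_sum nn2 (Finset.mem_range.mpr (by omega))) ?_
  have nn1 : ∀ n1' ∈ Finset.range (nI + 1), (0:ℝ) ≤ ∑ n2' ∈ Finset.range (nI + 1),
      ∑ m1' ∈ Finset.range (mJ + 1), ∑ m2' ∈ Finset.range (mJ + 1),
      if n1' + n2' ≤ nI ∧ m1' + m2' ≤ mJ then S5 φ ψ p n1' n2' m1' m2' else 0 :=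
    fun _ _ => Finset.sum_nonneg fun _ _ => Finset.sum_nonneg fun _ _ =>
      Finset.sum_nonneg fun _ _ => ite_nonneg' (S5_nonneg _ _ _ _)
  exact Finset.single_le_sum nn1 (Finset.mem_range.mpr (by omega))

lemma S6_le_S5 {φ ψ p n1 n2 m1 m2} (I1 : Fin n1 → Fin 3) (I2 : Fin n2 → Fin 3)
    (J1 : Fin m1 → Fin 2) (J2 : Fin m2 → Fin 2) :
    S6 φ ψ p I1 I2 J1 J2 ≤ S5 φ ψ p n1 n2 m1 m2 := by
  unfold S5
  have s4 : S6 φ ψ p I1 I2 J1 J2 ≤ ∑ J2' : Fin m2 → Fin 2, S6 φ ψ p I1 I2 J1 J2' :=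
    Finset.single_le_sum (fun x _ => S6_nonneg I1 I2 J1 x) (Finset.mem_univ J2)
  have s3 : ∑ J2' : Fin m2 → Fin 2, S6 φ ψ p I1 I2 J1 J2'
      ≤ ∑ J1' : Fin m1 → Fin 2, ∑ J2' : Fin m2 → Fin 2, S6 φ ψ p I1 I2 J1' J2' :=
    Finset.single_le_sum (fun x _ => Finset.sum_nonneg fun y _ => S6_nonneg I1 I2 x y)
      (Finset.mem_univ J1)
  have s2 : ∑ J1' : Fin m1 → Fin 2, ∑ J2' : Fin m2 → Fin 2, S6 φ ψ p I1 I2 J1' J2'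
      ≤ ∑ I2' : Fin n2 → Fin 3, ∑ J1' : Fin m1 → Fin 2, ∑ J2' : Fin m2 → Fin 2,
        S6 φ ψ p I1 I2' J1' J2' :=
    Finset.single_le_sum (fun x _ => Finset.sum_nonneg fun y _ => Finset.sum_nonneg fun z _ =>
      S6_nonneg I1 x y z) (Finset.mem_univ I2)
  have s1 : ∑ I2' : Fin n2 → Fin 3, ∑ J1' : Fin m1 → Fin 2, ∑ J2' : Fin m2 → Fin 2,
        S6 φ ψ p I1 I2' J1' J2'
      ≤ ∑ I1' : Fin n1 → Fin 3, ∑ I2' : Fin n2 → Fin 3, ∑ J1' : Fin m1 → Fin 2,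
        ∑ J2' : Fin m2 → Fin 2, S6 φ ψ p I1' I2' J1' J2' :=
    Finset.single_le_sum (fun x _ => Finset.sum_nonneg fun y _ => Finset.sum_nonneg fun z _ =>
      Finset.sum_nonneg fun w _ => S6_nonneg x y z w) (Finset.mem_univ I1)
  exact le_trans s4 (le_trans s3 (le_trans s2 s1))

lemma pair2_le_S6 {φ ψ p n1 n2 m1 m2} (I1 : Fin n1 → Fin 3) (I2 : Fin n2 → Fin 3)
    (J1 : Fin m1 → Fin 2) (J2 : Fin m2 → Fin 2) (a : Fin 2) (β : Fin 3) :
    pair2 φ ψ p I1 I2 J1 J2 a β ≤ S6 φ ψ p I1 I2 J1 J2 := by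
  unfold S6
  have t2 : pair2 φ ψ p I1 I2 J1 J2 a β ≤ ∑ β' : Fin 3, pair2 φ ψ p I1 I2 J1 J2 a β' :=
    Finset.single_le_sum (fun x _ => pair2_nonneg I1 I2 J1 J2 a x) (Finset.mem_univ β)
  have t1 : ∑ β' : Fin 3, pair2 φ ψ p I1 I2 J1 J2 a β'
      ≤ ∑ a' : Fin 2, ∑ β' : Fin 3, pair2 φ ψ p I1 I2 J1 J2 a' β' :=
    Finset.single_le_sum (fun x _ => Finset.sum_nonneg fun y _ => pair2_nonneg I1 I2 J1 J2 x y)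
      (Finset.mem_univ a)
  exact le_trans t2 t1

lemma le_nullSum2₁ {nI mJ n1 n2 m1 m2 : ℕ} (h1 : n1 + n2 ≤ nI) (h2 : m1 + m2 ≤ mJ)
    (I1 : Fin n1 → Fin 3) (I2 : Fin n2 → Fin 3) (J1 : Fin m1 → Fin 2) (J2 : Fin m2 → Fin 2)
    (a : Fin 2) (β : Fin 3) (φ ψ : Pt → ℝ) (p : Pt) :
    |pdSeq (List.ofFn I1) (boostSeq (List.ofFn J1) (ubd a φ)) p| *
        |pdSeq (List.ofFn I2) (boostSeq (List.ofFn J2) (ubar β ψ)) p|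
      ≤ nullSum2 nI mJ φ ψ p := by
  refine le_trans (le_trans (le_add_of_nonneg_right (by positivity))
    (pair2_le_S6 I1 I2 J1 J2 a β)) (le_trans (S6_le_S5 I1 I2 J1 J2) (S5_le_nullSum2 h1 h2 φ ψ p))

lemma le_nullSum2₂ {nI mJ n1 n2 m1 m2 : ℕ} (h1 : n1 + n2 ≤ nI) (h2 : m1 + m2 ≤ mJ)
    (I1 : Fin n1 → Fin 3) (I2 : Fin n2 → Fin 3) (J1 : Fin m1 → Fin 2) (J2 : Fin m2 → Fin 2)
    (a : Fin 2) (β : Fin 3) (φ ψ : Pt → ℝ) (p : Pt) :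
    |pdSeq (List.ofFn I1) (boostSeq (List.ofFn J1) (ubar β φ)) p| *
        |pdSeq (List.ofFn I2) (boostSeq (List.ofFn J2) (ubd a ψ)) p|
      ≤ nullSum2 nI mJ φ ψ p := by
  refine le_trans (le_trans (le_add_of_nonneg_left (by positivity))
    (pair2_le_S6 I1 I2 J1 J2 a β)) (le_trans (S6_le_S5 I1 I2 J1 J2) (S5_le_nullSum2 h1 h2 φ ψ p))

def T5 (φ ψ : Pt → ℝ) (p : Pt) (n1 n2 m1 m2 : ℕ) : ℝ :=
  ∑ I1 : Fin n1 → Fin 3, ∑ I2 : Fin n2 → Fin 3,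
  ∑ J1 : Fin m1 → Fin 2, ∑ J2 : Fin m2 → Fin 2,
    |pdSeq (List.ofFn I1) (boostSeq (List.ofFn J1) (pd 0 φ)) p| *
      |pdSeq (List.ofFn I2) (boostSeq (List.ofFn J2) (pd 0 ψ)) p|

lemma T5_nonneg {φ ψ p} (n1 n2 m1 m2 : ℕ) : 0 ≤ T5 φ ψ p n1 n2 m1 m2 :=
  Finset.sum_nonneg fun _ _ => Finset.sum_nonneg fun _ _ => Finset.sum_nonneg fun _ _ =>
    Finset.sum_nonneg fun _ _ => by positivity

lemma nullSum1_eq (nI mJ : ℕ) (φ ψ : Pt → ℝ) (p : Pt) :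
    nullSum1 nI mJ φ ψ p
      = ∑ n1 ∈ Finset.range (nI + 1), ∑ n2 ∈ Finset.range (nI + 1),
        ∑ m1 ∈ Finset.range (mJ + 1), ∑ m2 ∈ Finset.range (mJ + 1),
          if n1 + n2 ≤ nI ∧ m1 + m2 ≤ mJ then T5 φ ψ p n1 n2 m1 m2 else 0 := rfl

lemma nullSum1_nonneg (nI mJ : ℕ) (φ ψ : Pt → ℝ) (p : Pt) : 0 ≤ nullSum1 nI mJ φ ψ p := by
  rw [nullSum1_eq]
  exact Finset.sum_nonneg fun _ _ => Finset.sum_nonneg fun _ _ => Finset.sum_nonneg fun _ _ =>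
    Finset.sum_nonneg fun _ _ => ite_nonneg' (T5_nonneg _ _ _ _)

lemma T5_le_nullSum1 {nI mJ n1 n2 m1 m2 : ℕ} (h1 : n1 + n2 ≤ nI) (h2 : m1 + m2 ≤ mJ)
    (φ ψ : Pt → ℝ) (p : Pt) : T5 φ ψ p n1 n2 m1 m2 ≤ nullSum1 nI mJ φ ψ p := by
  rw [nullSum1_eq]
  have e1 : T5 φ ψ p n1 n2 m1 m2
      = if n1 + n2 ≤ nI ∧ m1 + m2 ≤ mJ then T5 φ ψ p n1 n2 m1 m2 else 0 :=
    (if_pos ⟨h1, h2⟩).symm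
  rw [e1]
  have nn4 : ∀ m2' ∈ Finset.range (mJ + 1),
      (0:ℝ) ≤ if n1 + n2 ≤ nI ∧ m1 + m2' ≤ mJ then T5 φ ψ p n1 n2 m1 m2' else 0 :=
    fun m2' _ => ite_nonneg' (T5_nonneg _ _ _ _)
  refine le_trans (Finset.single_le_sum nn4 (Finset.mem_range.mpr (by omega))) ?_
  have nn3 : ∀ m1' ∈ Finset.range (mJ + 1), (0:ℝ) ≤ ∑ m2' ∈ Finset.range (mJ + 1),
      if n1 + n2 ≤ nI ∧ m1' + m2' ≤ mJ then T5 φ ψ p n1 n2 m1' m2' else 0 :=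
    fun _ _ => Finset.sum_nonneg fun _ _ => ite_nonneg' (T5_nonneg _ _ _ _)
  refine le_trans (Finset.single_le_sum nn3 (Finset.mem_range.mpr (by omega))) ?_
  have nn2 : ∀ n2' ∈ Finset.range (nI + 1), (0:ℝ) ≤ ∑ m1' ∈ Finset.range (mJ + 1),
      ∑ m2' ∈ Finset.range (mJ + 1),
      if n1 + n2' ≤ nI ∧ m1' + m2' ≤ mJ then T5 φ ψ p n1 n2' m1' m2' else 0 :=
    fun _ _ => Finset.sum_nonneg fun _ _ => Finset.sum_nonneg fun _ _ =>
      ite_nonneg' (T5_nonneg _ _ _ _)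
  refine le_trans (Finset.single_le_sum nn2 (Finset.mem_range.mpr (by omega))) ?_
  have nn1 : ∀ n1' ∈ Finset.range (nI + 1), (0:ℝ) ≤ ∑ n2' ∈ Finset.range (nI + 1),
      ∑ m1' ∈ Finset.range (mJ + 1), ∑ m2' ∈ Finset.range (mJ + 1),
      if n1' + n2' ≤ nI ∧ m1' + m2' ≤ mJ then T5 φ ψ p n1' n2' m1' m2' else 0 :=
    fun _ _ => Finset.sum_nonneg fun _ _ => Finset.sum_nonneg fun _ _ =>
      Finset.sum_nonneg fun _ _ => ite_nonneg' (T5_nonneg _ _ _ _)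
  exact Finset.single_le_sum nn1 (Finset.mem_range.mpr (by omega))

lemma le_nullSum1 {nI mJ n1 n2 m1 m2 : ℕ} (h1 : n1 + n2 ≤ nI) (h2 : m1 + m2 ≤ mJ)
    (I1 : Fin n1 → Fin 3) (I2 : Fin n2 → Fin 3) (J1 : Fin m1 → Fin 2) (J2 : Fin m2 → Fin 2)
    (φ ψ : Pt → ℝ) (p : Pt) :
    |pdSeq (List.ofFn I1) (boostSeq (List.ofFn J1) (pd 0 φ)) p| *
        |pdSeq (List.ofFn I2) (boostSeq (List.ofFn J2) (pd 0 ψ)) p|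
      ≤ nullSum1 nI mJ φ ψ p := by
  have q4 : |pdSeq (List.ofFn I1) (boostSeq (List.ofFn J1) (pd 0 φ)) p| *
        |pdSeq (List.ofFn I2) (boostSeq (List.ofFn J2) (pd 0 ψ)) p|
      ≤ ∑ J2' : Fin m2 → Fin 2,
        |pdSeq (List.ofFn I1) (boostSeq (List.ofFn J1) (pd 0 φ)) p| *
          |pdSeq (List.ofFn I2) (boostSeq (List.ofFn J2') (pd 0 ψ)) p| :=
    Finset.single_le_sum (f := fun J2' : Fin m2 → Fin 2 =>
        |pdSeq (List.ofFn I1) (boostSeq (List.ofFn J1) (pd 0 φ)) p| *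
          |pdSeq (List.ofFn I2) (boostSeq (List.ofFn J2') (pd 0 ψ)) p|)
      (fun x _ => by positivity) (Finset.mem_univ J2)
  have q3 : (∑ J2' : Fin m2 → Fin 2,
        |pdSeq (List.ofFn I1) (boostSeq (List.ofFn J1) (pd 0 φ)) p| *
          |pdSeq (List.ofFn I2) (boostSeq (List.ofFn J2') (pd 0 ψ)) p|)
      ≤ ∑ J1'' : Fin m1 → Fin 2, ∑ J2' : Fin m2 → Fin 2,
        |pdSeq (List.ofFn I1) (boostSeq (List.ofFn J1'') (pd 0 φ)) p| *
          |pdSeq (List.ofFn I2) (boostSeq (List.ofFn J2') (pd 0 ψ)) p| :=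
    Finset.single_le_sum (f := fun J1'' : Fin m1 → Fin 2 => ∑ J2' : Fin m2 → Fin 2,
        |pdSeq (List.ofFn I1) (boostSeq (List.ofFn J1'') (pd 0 φ)) p| *
          |pdSeq (List.ofFn I2) (boostSeq (List.ofFn J2') (pd 0 ψ)) p|)
      (fun x _ => Finset.sum_nonneg fun y _ => by positivity) (Finset.mem_univ J1)
  have q2 : (∑ J1'' : Fin m1 → Fin 2, ∑ J2' : Fin m2 → Fin 2,
        |pdSeq (List.ofFn I1) (boostSeq (List.ofFn J1'') (pd 0 φ)) p| *
          |pdSeq (List.ofFn I2) (boostSeq (List.ofFn J2') (pd 0 ψ)) p|)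
      ≤ ∑ I2'' : Fin n2 → Fin 3, ∑ J1'' : Fin m1 → Fin 2, ∑ J2' : Fin m2 → Fin 2,
        |pdSeq (List.ofFn I1) (boostSeq (List.ofFn J1'') (pd 0 φ)) p| *
          |pdSeq (List.ofFn I2'') (boostSeq (List.ofFn J2') (pd 0 ψ)) p| :=
    Finset.single_le_sum (f := fun I2'' : Fin n2 → Fin 3 =>
        ∑ J1'' : Fin m1 → Fin 2, ∑ J2' : Fin m2 → Fin 2,
        |pdSeq (List.ofFn I1) (boostSeq (List.ofFn J1'') (pd 0 φ)) p| *
          |pdSeq (List.ofFn I2'') (boostSeq (List.ofFn J2') (pd 0 ψ)) p|)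
      (fun x _ => Finset.sum_nonneg fun y _ => Finset.sum_nonneg fun z _ => by positivity)
      (Finset.mem_univ I2)
  have q1 : (∑ I2'' : Fin n2 → Fin 3, ∑ J1'' : Fin m1 → Fin 2, ∑ J2' : Fin m2 → Fin 2,
        |pdSeq (List.ofFn I1) (boostSeq (List.ofFn J1'') (pd 0 φ)) p| *
          |pdSeq (List.ofFn I2'') (boostSeq (List.ofFn J2') (pd 0 ψ)) p|)
      ≤ T5 φ ψ p n1 n2 m1 m2 :=
    Finset.single_le_sum (f := fun I1'' : Fin n1 → Fin 3 =>
        ∑ I2'' : Fin n2 → Fin 3, ∑ J1'' : Fin m1 → Fin 2, ∑ J2' : Fin m2 → Fin 2,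
        |pdSeq (List.ofFn I1'') (boostSeq (List.ofFn J1'') (pd 0 φ)) p| *
          |pdSeq (List.ofFn I2'') (boostSeq (List.ofFn J2') (pd 0 ψ)) p|)
      (fun x _ => Finset.sum_nonneg fun y _ => Finset.sum_nonneg fun z _ =>
        Finset.sum_nonneg fun w _ => by positivity)
      (Finset.mem_univ I1)
  exact le_trans q4 (le_trans q3 (le_trans q2 (le_trans q1 (T5_le_nullSum1 h1 h2 φ ψ p))))

end NF

namespace NF

lemma cdu_pdSeq : ∀ (I : List (Fin 3)) {f : Pt → ℝ}, CDU f → CDU (pdSeq I f)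
  | [], _, hf => hf
  | i :: I, _, hf => cdu_pd (cdu_pdSeq I hf) i

lemma cdu_boostSeq : ∀ (J : List (Fin 2)) {f : Pt → ℝ}, CDU f → CDU (boostSeq J f)
  | [], _, hf => hf
  | a :: J, _, hf => cdu_boost (cdu_boostSeq J hf) a

lemma seq_congr {f g : Pt → ℝ} (h : Set.EqOn f g U) (I : List (Fin 3)) (J : List (Fin 2)) :
    Set.EqOn (pdSeq I (boostSeq J f)) (pdSeq I (boostSeq J g)) U := by
  rw [pdSeq_eq_dseq, pdSeq_eq_dseq, boostSeq_eq_dseq, boostSeq_eq_dseq, ← dseq_append,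
    ← dseq_append]
  exact dseq_congr _ h

lemma expand (I : List (Fin 3)) (J : List (Fin 2)) {c F G : Pt → ℝ}
    (hc : CDU c) (hF : CDU F) (hG : CDU G) : ∀ p ∈ U,
    pdSeq I (boostSeq J (fun q => c q * F q * G q)) p
      = ((splits3 J).map (fun sJ => ((splits3 I).map (fun sI =>
          pdSeq sI.1 (boostSeq sJ.1 c) p * pdSeq sI.2.1 (boostSeq sJ.2.1 F) p
            * pdSeq sI.2.2 (boostSeq sJ.2.2 G) p)).sum)).sum := by
  intro p hp
  have hinner : Set.EqOn (boostSeq J (fun q => c q * F q * G q))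
      (fun q => ((splits3 J).map (fun sJ =>
        boostSeq sJ.1 c q * boostSeq sJ.2.1 F q * boostSeq sJ.2.2 G q)).sum) U := by
    intro q hq
    rw [boostSeq_eq_dseq]
    rw [dseq_leibniz3 (J.map dBoost) hc hF hG q hq, splits3_map dBoost J, List.map_map]
    congr 1
    apply List.map_congr_left
    intro s _
    simp only [Function.comp]
    rw [← boostSeq_eq_dseq, ← boostSeq_eq_dseq, ← boostSeq_eq_dseq]
  have hT : ∀ sJ ∈ splits3 J,
      CDU (fun q => boostSeq sJ.1 c q * boostSeq sJ.2.1 F q * boostSeq sJ.2.2 G q) :=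
    fun sJ _ => cdu_mul (cdu_mul (cdu_boostSeq sJ.1 hc) (cdu_boostSeq sJ.2.1 hF))
      (cdu_boostSeq sJ.2.2 hG)
  rw [pdSeq_eq_dseq]
  rw [dseq_congr (I.map dPd) hinner hp]
  rw [dseq_listsum (I.map dPd) (splits3 J)
    (fun sJ q => boostSeq sJ.1 c q * boostSeq sJ.2.1 F q * boostSeq sJ.2.2 G q) hT p hp]
  congr 1
  apply List.map_congr_left
  intro sJ _
  rw [dseq_leibniz3 (I.map dPd) (cdu_boostSeq sJ.1 hc) (cdu_boostSeq sJ.2.1 hF)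
    (cdu_boostSeq sJ.2.2 hG) p hp, splits3_map dPd I, List.map_map]
  congr 1
  apply List.map_congr_left
  intro sI _
  simp only [Function.comp]
  rw [← pdSeq_eq_dseq, ← pdSeq_eq_dseq, ← pdSeq_eq_dseq]

lemma cdu_ubd (a : Fin 2) {φ : Pt → ℝ} (hφ : ContDiff ℝ (⊤ : ℕ∞) φ) : CDU (ubd a φ) := by
  unfold ubd
  exact cdu_add (cdu_mul (cdu_uu a) (cdu_pd hφ.contDiffOn 0)) (cdu_pd hφ.contDiffOn a.succ)

lemma cdu_ubar (β : Fin 3) {φ : Pt → ℝ} (hφ : ContDiff ℝ (⊤ : ℕ∞) φ) : CDU (ubar β φ) := by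
  unfold ubar
  by_cases h : β = 0
  · simp only [h, if_pos]
    exact cdu_pd hφ.contDiffOn 0
  · simp only [h, if_neg, if_false]
    exact cdu_add (cdu_mul ((cdu_coord β).div (cdu_coord 0) (fun _ hp => U_ne hp))
      (cdu_pd hφ.contDiffOn 0)) (cdu_pd hφ.contDiffOn β)

def Pb (B T : (Pt → ℝ) → (Pt → ℝ) → Pt → ℝ) : Prop :=
  ∃ C : ℝ, 0 ≤ C ∧ ∀ φ ψ : Pt → ℝ, ContDiff ℝ (⊤ : ℕ∞) φ → ContDiff ℝ (⊤ : ℕ∞) ψ →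
    ∀ p ∈ coneK, |T φ ψ p| ≤ C * B φ ψ p

lemma Pb_congr {B T T' : (Pt → ℝ) → (Pt → ℝ) → Pt → ℝ}
    (h : ∀ φ ψ : Pt → ℝ, ContDiff ℝ (⊤ : ℕ∞) φ → ContDiff ℝ (⊤ : ℕ∞) ψ →
      ∀ p ∈ coneK, T φ ψ p = T' φ ψ p) (h' : Pb B T') : Pb B T := by
  obtain ⟨C, hC, hb⟩ := h'
  exact ⟨C, hC, fun φ ψ hφ hψ p hp => by
    rw [h φ ψ hφ hψ p hp]; exact hb φ ψ hφ hψ p hp⟩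

lemma Pb_listsum {B : (Pt → ℝ) → (Pt → ℝ) → Pt → ℝ} {ι : Type} :
    ∀ (L : List ι) (T : ι → (Pt → ℝ) → (Pt → ℝ) → Pt → ℝ), (∀ i ∈ L, Pb B (T i)) →
    Pb B (fun φ ψ p => (L.map (fun i => T i φ ψ p)).sum)
  | [], T, _ => ⟨0, le_refl 0, fun φ ψ _ _ p _ => by simp⟩
  | a :: L, T, h => by
      obtain ⟨C₁, hC₁, hb₁⟩ := h a (by simp)
      obtain ⟨C₂, hC₂, hb₂⟩ := Pb_listsum L T (fun i hi => h i (by simp [hi]))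
      refine ⟨C₁ + C₂, by linarith, fun φ ψ hφ hψ p hp => ?_⟩
      have h1 := hb₁ φ ψ hφ hψ p hp
      have h2 := hb₂ φ ψ hφ hψ p hp
      calc |((a :: L).map (fun i => T i φ ψ p)).sum|
          = |T a φ ψ p + (L.map (fun i => T i φ ψ p)).sum| := by simp
        _ ≤ |T a φ ψ p| + |(L.map (fun i => T i φ ψ p)).sum| := abs_add_le _ _
        _ ≤ C₁ * B φ ψ p + C₂ * B φ ψ p := add_le_add h1 h2
        _ = (C₁ + C₂) * B φ ψ p := by ring

lemma core2₁ (I : List (Fin 3)) (J : List (Fin 2)) {c : Pt → ℝ} (hc : Coef c)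
    (a : Fin 2) (β : Fin 3) :
    Pb (fun φ ψ p => nullSum2 I.length J.length φ ψ p)
      (fun φ ψ p => pdSeq I (boostSeq J (fun q => c q * ubd a φ q * ubar β ψ q)) p) := by
  apply Pb_congr (T' := fun φ ψ p => ((splits3 J).map (fun sJ => ((splits3 I).map (fun sI =>
      pdSeq sI.1 (boostSeq sJ.1 c) p * pdSeq sI.2.1 (boostSeq sJ.2.1 (ubd a φ)) p
        * pdSeq sI.2.2 (boostSeq sJ.2.2 (ubar β ψ)) p)).sum)).sum)
  · intro φ ψ hφ hψ p hp
    exact expand I J (coef_cdu hc) (cdu_ubd a hφ) (cdu_ubar β hψ) p (coneK_subset_U hp)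
  · apply Pb_listsum
    intro sJ hsJ
    apply Pb_listsum
    intro sI hsI
    obtain ⟨c', hc', hce⟩ := coef_seq hc sJ.1 sI.1
    obtain ⟨Cc, hCc, hcb⟩ := coef_bound hc'
    refine ⟨Cc, hCc, fun φ ψ hφ hψ p hp => ?_⟩
    have hlenI := splits3_length I sI hsI
    have hlenJ := splits3_length J sJ hsJ
    have hU := coneK_subset_U hp
    rw [abs_mul, abs_mul, hce p hU]
    have hb1 : |pdSeq sI.2.1 (boostSeq sJ.2.1 (ubd a φ)) p| *
        |pdSeq sI.2.2 (boostSeq sJ.2.2 (ubar β ψ)) p| ≤ nullSum2 I.length J.length φ ψ p := by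
      have e1 : List.ofFn (sI.2.1.get) = sI.2.1 := List.ofFn_get _
      have e2 : List.ofFn (sI.2.2.get) = sI.2.2 := List.ofFn_get _
      have e3 : List.ofFn (sJ.2.1.get) = sJ.2.1 := List.ofFn_get _
      have e4 : List.ofFn (sJ.2.2.get) = sJ.2.2 := List.ofFn_get _
      rw [← e1, ← e2, ← e3, ← e4]
      exact le_nullSum2₁ (by omega) (by omega) _ _ _ _ a β φ ψ p
    calc |c' p| * |pdSeq sI.2.1 (boostSeq sJ.2.1 (ubd a φ)) p| *
          |pdSeq sI.2.2 (boostSeq sJ.2.2 (ubar β ψ)) p|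
        = |c' p| * (|pdSeq sI.2.1 (boostSeq sJ.2.1 (ubd a φ)) p| *
          |pdSeq sI.2.2 (boostSeq sJ.2.2 (ubar β ψ)) p|) := by ring
      _ ≤ Cc * nullSum2 I.length J.length φ ψ p :=
          mul_le_mul (hcb p hp) hb1 (by positivity) hCc

lemma core2₂ (I : List (Fin 3)) (J : List (Fin 2)) {c : Pt → ℝ} (hc : Coef c)
    (a : Fin 2) (β : Fin 3) :
    Pb (fun φ ψ p => nullSum2 I.length J.length φ ψ p)
      (fun φ ψ p => pdSeq I (boostSeq J (fun q => c q * ubar β φ q * ubd a ψ q)) p) := by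
  apply Pb_congr (T' := fun φ ψ p => ((splits3 J).map (fun sJ => ((splits3 I).map (fun sI =>
      pdSeq sI.1 (boostSeq sJ.1 c) p * pdSeq sI.2.1 (boostSeq sJ.2.1 (ubar β φ)) p
        * pdSeq sI.2.2 (boostSeq sJ.2.2 (ubd a ψ)) p)).sum)).sum)
  · intro φ ψ hφ hψ p hp
    exact expand I J (coef_cdu hc) (cdu_ubar β hφ) (cdu_ubd a hψ) p (coneK_subset_U hp)
  · apply Pb_listsum
    intro sJ hsJ
    apply Pb_listsum
    intro sI hsI
    obtain ⟨c', hc', hce⟩ := coef_seq hc sJ.1 sI.1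
    obtain ⟨Cc, hCc, hcb⟩ := coef_bound hc'
    refine ⟨Cc, hCc, fun φ ψ hφ hψ p hp => ?_⟩
    have hlenI := splits3_length I sI hsI
    have hlenJ := splits3_length J sJ hsJ
    have hU := coneK_subset_U hp
    rw [abs_mul, abs_mul, hce p hU]
    have hb1 : |pdSeq sI.2.1 (boostSeq sJ.2.1 (ubar β φ)) p| *
        |pdSeq sI.2.2 (boostSeq sJ.2.2 (ubd a ψ)) p| ≤ nullSum2 I.length J.length φ ψ p := by
      have e1 : List.ofFn (sI.2.1.get) = sI.2.1 := List.ofFn_get _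
      have e2 : List.ofFn (sI.2.2.get) = sI.2.2 := List.ofFn_get _
      have e3 : List.ofFn (sJ.2.1.get) = sJ.2.1 := List.ofFn_get _
      have e4 : List.ofFn (sJ.2.2.get) = sJ.2.2 := List.ofFn_get _
      rw [← e1, ← e2, ← e3, ← e4]
      exact le_nullSum2₂ (by omega) (by omega) _ _ _ _ a β φ ψ p
    calc |c' p| * |pdSeq sI.2.1 (boostSeq sJ.2.1 (ubar β φ)) p| *
          |pdSeq sI.2.2 (boostSeq sJ.2.2 (ubd a ψ)) p|
        = |c' p| * (|pdSeq sI.2.1 (boostSeq sJ.2.1 (ubar β φ)) p| *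
          |pdSeq sI.2.2 (boostSeq sJ.2.2 (ubd a ψ)) p|) := by ring
      _ ≤ Cc * nullSum2 I.length J.length φ ψ p :=
          mul_le_mul (hcb p hp) hb1 (by positivity) hCc

lemma core1 (I : List (Fin 3)) (J : List (Fin 2)) (cw : ℝ) :
    Pb (fun φ ψ p => (Real.sqrt ((p 0)^2 - (rad p)^2) / p 0)^2 * nullSum1 I.length J.length φ ψ p)
      (fun φ ψ p => pdSeq I (boostSeq J (fun q => (cw * wfun q) * pd 0 φ q * pd 0 ψ q)) p) := by
  apply Pb_congr (T' := fun φ ψ p => ((splits3 J).map (fun sJ => ((splits3 I).map (fun sI =>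
      pdSeq sI.1 (boostSeq sJ.1 (fun q => cw * wfun q)) p
        * pdSeq sI.2.1 (boostSeq sJ.2.1 (pd 0 φ)) p
        * pdSeq sI.2.2 (boostSeq sJ.2.2 (pd 0 ψ)) p)).sum)).sum)
  · intro φ ψ hφ hψ p hp
    exact expand I J (cdu_mul (cdu_const cw) cdu_wfun) (cdu_pd hφ.contDiffOn 0)
      (cdu_pd hψ.contDiffOn 0) p (coneK_subset_U hp)
  · apply Pb_listsum
    intro sJ hsJ
    apply Pb_listsum
    intro sI hsI
    have hwt : WtRep (fun q => cw * wfun q) :=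
      ⟨fun _ => 0, fun _ => cw, Coef.const 0, Coef.const cw, fun p _ => by ring⟩
    have hwt2 : WtRep (pdSeq sI.1 (boostSeq sJ.1 (fun q => cw * wfun q))) :=
      wtrep_seq hwt sJ.1 sI.1
    obtain ⟨Cw, hCw, hwb⟩ := wtrep_bound hwt2
    refine ⟨Cw, hCw, fun φ ψ hφ hψ p hp => ?_⟩
    have hlenI := splits3_length I sI hsI
    have hlenJ := splits3_length J sJ hsJ
    rw [abs_mul, abs_mul]
    have hb1 : |pdSeq sI.2.1 (boostSeq sJ.2.1 (pd 0 φ)) p| *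
        |pdSeq sI.2.2 (boostSeq sJ.2.2 (pd 0 ψ)) p| ≤ nullSum1 I.length J.length φ ψ p := by
      have e1 : List.ofFn (sI.2.1.get) = sI.2.1 := List.ofFn_get _
      have e2 : List.ofFn (sI.2.2.get) = sI.2.2 := List.ofFn_get _
      have e3 : List.ofFn (sJ.2.1.get) = sJ.2.1 := List.ofFn_get _
      have e4 : List.ofFn (sJ.2.2.get) = sJ.2.2 := List.ofFn_get _
      rw [← e1, ← e2, ← e3, ← e4]
      exact le_nullSum1 (by omega) (by omega) _ _ _ _ φ ψ p
    calc |pdSeq sI.1 (boostSeq sJ.1 (fun q => cw * wfun q)) p| *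
          |pdSeq sI.2.1 (boostSeq sJ.2.1 (pd 0 φ)) p| *
          |pdSeq sI.2.2 (boostSeq sJ.2.2 (pd 0 ψ)) p|
        = |pdSeq sI.1 (boostSeq sJ.1 (fun q => cw * wfun q)) p| *
          (|pdSeq sI.2.1 (boostSeq sJ.2.1 (pd 0 φ)) p| *
            |pdSeq sI.2.2 (boostSeq sJ.2.2 (pd 0 ψ)) p|) := by ring
      _ ≤ (Cw * (Real.sqrt ((p 0)^2 - (rad p)^2) / p 0)^2) *
            nullSum1 I.length J.length φ ψ p := by
          apply mul_le_mul (hwb p hp) hb1 (by positivity)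
          positivity
      _ = Cw * ((Real.sqrt ((p 0)^2 - (rad p)^2) / p 0)^2 *
            nullSum1 I.length J.length φ ψ p) := by ring

end NF

namespace NF

@[simp] lemma succ0 : ((0 : Fin 2).succ : Fin 3) = 1 := rfl
@[simp] lemma succ1 : ((1 : Fin 2).succ : Fin 3) = 2 := rfl
@[simp] lemma fin1ne0 : ((1 : Fin 3) = 0) = False := by decide
@[simp] lemma fin2ne0 : ((2 : Fin 3) = 0) = False := by decide
@[simp] lemma finmk0 (h : 0 < 3) : (⟨0, h⟩ : Fin 3) = (0 : Fin 3) := rfl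
@[simp] lemma finmk1 (h : 1 < 3) : (⟨1, h⟩ : Fin 3) = (1 : Fin 3) := rfl
@[simp] lemma finmk2 (h : 2 < 3) : (⟨2, h⟩ : Fin 3) = (2 : Fin 3) := rfl
@[simp] lemma finmk0' (h : 0 < 2) : (⟨0, h⟩ : Fin 2) = (0 : Fin 2) := rfl
@[simp] lemma finmk1' (h : 1 < 2) : (⟨1, h⟩ : Fin 2) = (1 : Fin 2) := rfl

lemma dseq_add : ∀ (l : List DOp) {f g : Pt → ℝ}, CDU f → CDU g → ∀ p ∈ U,
    dseq l (fun q => f q + g q) p = dseq l f p + dseq l g p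
  | [], f, g, _, _, p, _ => rfl
  | o :: l, f, g, hf, hg, p, hp => by
      have h1 : Set.EqOn (dseq l (fun q => f q + g q)) (fun q => dseq l f q + dseq l g q) U :=
        fun q hq => dseq_add l hf hg q hq
      show o.D (dseq l (fun q => f q + g q)) p = _
      rw [o.congr h1 p hp, o.add (dseq_cdu l hf) (dseq_cdu l hg) p hp]
      rfl

lemma seq_add {f g : Pt → ℝ} (hf : CDU f) (hg : CDU g) (I : List (Fin 3)) (J : List (Fin 2)) :
    ∀ p ∈ U, pdSeq I (boostSeq J (fun q => f q + g q)) p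
      = pdSeq I (boostSeq J f) p + pdSeq I (boostSeq J g) p := by
  intro p hp
  rw [pdSeq_eq_dseq, boostSeq_eq_dseq, ← dseq_append, pdSeq_eq_dseq, boostSeq_eq_dseq,
    ← dseq_append, pdSeq_eq_dseq, boostSeq_eq_dseq, ← dseq_append]
  exact dseq_add _ hf hg p hp

lemma seq_listsum (I : List (Fin 3)) (J : List (Fin 2)) {ι : Type} (L : List ι)
    (T : ι → Pt → ℝ) (h : ∀ i ∈ L, CDU (T i)) : ∀ p ∈ U,
    pdSeq I (boostSeq J (fun q => (L.map (fun i => T i q)).sum)) p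
      = (L.map (fun i => pdSeq I (boostSeq J (T i)) p)).sum := by
  intro p hp
  rw [pdSeq_eq_dseq, boostSeq_eq_dseq, ← dseq_append]
  rw [dseq_listsum _ L T h p hp]
  congr 1
  apply List.map_congr_left
  intro i _
  rw [pdSeq_eq_dseq, boostSeq_eq_dseq, ← dseq_append]

abbrev Desc : Type := (Pt → ℝ) × Fin 2 × Fin 3 × Bool

def dterm (d : Desc) (φ ψ : Pt → ℝ) (q : Pt) : ℝ :=
  if d.2.2.2 then d.1 q * ubd d.2.1 φ q * ubar d.2.2.1 ψ q
  else d.1 q * ubar d.2.2.1 φ q * ubd d.2.1 ψ q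

lemma cdu_dterm (d : Desc) {φ ψ : Pt → ℝ} (hφ : ContDiff ℝ (⊤ : ℕ∞) φ)
    (hψ : ContDiff ℝ (⊤ : ℕ∞) ψ) (hd : Coef d.1) : CDU (dterm d φ ψ) := by
  unfold dterm
  cases hb : d.2.2.2
  · simp only [Bool.false_eq_true, if_false]
    exact cdu_mul (cdu_mul (coef_cdu hd) (cdu_ubar d.2.2.1 hφ)) (cdu_ubd d.2.1 hψ)
  · simp only [if_true]
    exact cdu_mul (cdu_mul (coef_cdu hd) (cdu_ubd d.2.1 hφ)) (cdu_ubar d.2.2.1 hψ)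

lemma core2' (I : List (Fin 3)) (J : List (Fin 2)) (d : Desc) (hd : Coef d.1) :
    Pb (fun φ ψ p => nullSum2 I.length J.length φ ψ p)
      (fun φ ψ p => pdSeq I (boostSeq J (dterm d φ ψ)) p) := by
  cases hb : d.2.2.2
  · have he : ∀ φ ψ, dterm d φ ψ = fun q => d.1 q * ubar d.2.2.1 φ q * ubd d.2.1 ψ q := by
      intro φ ψ; funext q; simp [dterm, hb]
    simp only [he]
    exact core2₂ I J hd d.2.1 d.2.2.1
  · have he : ∀ φ ψ, dterm d φ ψ = fun q => d.1 q * ubd d.2.1 φ q * ubar d.2.2.1 ψ q := by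
      intro φ ψ; funext q; simp [dterm, hb]
    simp only [he]
    exact core2₁ I J hd d.2.1 d.2.2.1

lemma assemble (I : List (Fin 3)) (J : List (Fin 2)) (Q : (Pt → ℝ) → (Pt → ℝ) → Pt → ℝ)
    (cw : ℝ) (L : List Desc) (hL : ∀ d ∈ L, Coef d.1)
    (hdec : ∀ φ ψ : Pt → ℝ, ContDiff ℝ (⊤ : ℕ∞) φ → ContDiff ℝ (⊤ : ℕ∞) ψ → ∀ p ∈ U,
      Q φ ψ p = (cw * wfun p) * pd 0 φ p * pd 0 ψ p
        + (L.map (fun d => dterm d φ ψ p)).sum) :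
    ∃ C : ℝ, 0 < C ∧ ∀ φ ψ : Pt → ℝ, ContDiff ℝ (⊤ : ℕ∞) φ → ContDiff ℝ (⊤ : ℕ∞) ψ →
      ∀ p ∈ coneK,
        |pdSeq I (boostSeq J (Q φ ψ)) p|
          ≤ C * (Real.sqrt ((p 0)^2 - (rad p)^2) / p 0)^2 * nullSum1 I.length J.length φ ψ p
            + C * nullSum2 I.length J.length φ ψ p := by
  obtain ⟨C₁, hC₁, hb₁⟩ := core1 I J cw
  obtain ⟨C₂, hC₂, hb₂⟩ := Pb_listsum L
    (fun d φ ψ p => pdSeq I (boostSeq J (dterm d φ ψ)) p)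
    (fun d hd => core2' I J d (hL d hd))
  refine ⟨C₁ + C₂ + 1, by linarith, fun φ ψ hφ hψ p hp => ?_⟩
  have hU := coneK_subset_U hp
  have hA : CDU (fun q => (cw * wfun q) * pd 0 φ q * pd 0 ψ q) :=
    cdu_mul (cdu_mul (cdu_mul (cdu_const cw) cdu_wfun) (cdu_pd hφ.contDiffOn 0))
      (cdu_pd hψ.contDiffOn 0)
  have hB : CDU (fun q => (L.map (fun d => dterm d φ ψ q)).sum) :=
    cdu_listsum L (fun d => dterm d φ ψ) (fun d hd => cdu_dterm d hφ hψ (hL d hd))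
  have hEq : Set.EqOn (Q φ ψ) (fun q => (cw * wfun q) * pd 0 φ q * pd 0 ψ q
      + (L.map (fun d => dterm d φ ψ q)).sum) U := fun q hq => hdec φ ψ hφ hψ q hq
  have hsplit : pdSeq I (boostSeq J (Q φ ψ)) p
      = pdSeq I (boostSeq J (fun q => (cw * wfun q) * pd 0 φ q * pd 0 ψ q)) p
        + (L.map (fun d => pdSeq I (boostSeq J (dterm d φ ψ)) p)).sum := by
    rw [seq_congr hEq I J hU, seq_add hA hB I J p hU,
      seq_listsum I J L (fun d => dterm d φ ψ) (fun d hd => cdu_dterm d hφ hψ (hL d hd)) p hU]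
  rw [hsplit]
  have h1 := hb₁ φ ψ hφ hψ p hp
  have h2 := hb₂ φ ψ hφ hψ p hp
  have hns1 : 0 ≤ (Real.sqrt ((p 0)^2 - (rad p)^2) / p 0)^2 * nullSum1 I.length J.length φ ψ p :=
    mul_nonneg (by positivity) (nullSum1_nonneg _ _ _ _ _)
  have hns2 : 0 ≤ nullSum2 I.length J.length φ ψ p := nullSum2_nonneg _ _ _ _ _
  calc |pdSeq I (boostSeq J (fun q => (cw * wfun q) * pd 0 φ q * pd 0 ψ q)) p
        + (L.map (fun d => pdSeq I (boostSeq J (dterm d φ ψ)) p)).sum|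
      ≤ |pdSeq I (boostSeq J (fun q => (cw * wfun q) * pd 0 φ q * pd 0 ψ q)) p|
        + |(L.map (fun d => pdSeq I (boostSeq J (dterm d φ ψ)) p)).sum| := abs_add_le _ _
    _ ≤ C₁ * ((Real.sqrt ((p 0)^2 - (rad p)^2) / p 0)^2 * nullSum1 I.length J.length φ ψ p)
        + C₂ * nullSum2 I.length J.length φ ψ p := add_le_add h1 h2
    _ ≤ (C₁ + C₂ + 1) * ((Real.sqrt ((p 0)^2 - (rad p)^2) / p 0)^2
          * nullSum1 I.length J.length φ ψ p)
        + (C₁ + C₂ + 1) * nullSum2 I.length J.length φ ψ p := by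
        apply add_le_add
        · exact mul_le_mul_of_nonneg_right (by linarith) hns1
        · exact mul_le_mul_of_nonneg_right (by linarith) hns2
    _ = (C₁ + C₂ + 1) * (Real.sqrt ((p 0)^2 - (rad p)^2) / p 0)^2
          * nullSum1 I.length J.length φ ψ p
        + (C₁ + C₂ + 1) * nullSum2 I.length J.length φ ψ p := by ring

end NF

set_option maxHeartbeats 1000000 in
/-- **Null form estimate in the semi-hyperboloidal frame** (Lemma 4.5). Here `Q` is either
`Q₀(f,g) = η^{αβ}∂_αf∂_βg` or one of `Q_{μν}(f,g) = ∂_μf∂_νg − ∂_νf∂_μg`, and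
`s = √(t² − r²)`. -/
theorem null_form_estimate
    (Q : (Pt → ℝ) → (Pt → ℝ) → Pt → ℝ)
    (hQ : (Q = fun f g p => -(pd 0 f p * pd 0 g p) + pd 1 f p * pd 1 g p + pd 2 f p * pd 2 g p)
        ∨ (∃ μ ν : Fin 3, Q = fun f g p => pd μ f p * pd ν g p - pd ν f p * pd μ g p))
    (I : List (Fin 3)) (J : List (Fin 2)) :
    ∃ C : ℝ, 0 < C ∧
      ∀ φ ψ : Pt → ℝ, ContDiff ℝ (⊤ : ℕ∞) φ → ContDiff ℝ (⊤ : ℕ∞) ψ →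
        (∀ p, p ∉ coneK → φ p = 0) → (∀ p, p ∉ coneK → ψ p = 0) →
        ∀ p ∈ coneK,
          |pdSeq I (boostSeq J (Q φ ψ)) p|
            ≤ C * (Real.sqrt ((p 0)^2 - (rad p)^2) / p 0)^2 * nullSum1 I.length J.length φ ψ p
              + C * nullSum2 I.length J.length φ ψ p := by

  have wrap : (∃ C : ℝ, 0 < C ∧ ∀ φ ψ : Pt → ℝ,
      ContDiff ℝ (⊤ : ℕ∞) φ → ContDiff ℝ (⊤ : ℕ∞) ψ → ∀ p ∈ coneK,
        |pdSeq I (boostSeq J (Q φ ψ)) p|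
          ≤ C * (Real.sqrt ((p 0)^2 - (rad p)^2) / p 0)^2 * nullSum1 I.length J.length φ ψ p
            + C * nullSum2 I.length J.length φ ψ p) →
      (∃ C : ℝ, 0 < C ∧ ∀ φ ψ : Pt → ℝ,
        ContDiff ℝ (⊤ : ℕ∞) φ → ContDiff ℝ (⊤ : ℕ∞) ψ →
        (∀ p, p ∉ coneK → φ p = 0) → (∀ p, p ∉ coneK → ψ p = 0) → ∀ p ∈ coneK,
        |pdSeq I (boostSeq J (Q φ ψ)) p|
          ≤ C * (Real.sqrt ((p 0)^2 - (rad p)^2) / p 0)^2 * nullSum1 I.length J.length φ ψ p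
            + C * nullSum2 I.length J.length φ ψ p) := by
    rintro ⟨C, hC, h⟩
    exact ⟨C, hC, fun φ ψ hφ hψ _ _ p hp => h φ ψ hφ hψ p hp⟩
  rcases hQ with hQ | ⟨μ, ν, hQ⟩
  · subst hQ
    apply wrap
    apply NF.assemble I J _ (-1)
      [((fun _ => (1:ℝ)), 0, 1, true),
       ((fun _ => (1:ℝ)), 1, 2, true),
       ((fun p => (-1) * NF.uu 0 p), 0, 0, true),
       ((fun p => (-1) * NF.uu 1 p), 1, 0, true),
       ((fun p => (-1) * NF.uu 0 p), 0, 0, false),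
       ((fun p => (-1) * NF.uu 1 p), 1, 0, false)]
    · intro d hd
      simp only [List.mem_cons, List.not_mem_nil, or_false] at hd
      rcases hd with rfl | rfl | rfl | rfl | rfl | rfl <;>
        first
          | exact NF.Coef.const _
          | exact NF.Coef.mul (NF.Coef.const (-1)) (NF.Coef.u _)
    · intro φ ψ hφ hψ p hp
      have h0 : p 0 ≠ 0 := NF.U_ne hp
      simp only [NF.dterm, List.map_cons, List.map_nil, List.sum_cons, List.sum_nil,
        if_true, Bool.false_eq_true, if_false, ubd, ubar, NF.wfun, NF.uu, NF.succ0, NF.succ1,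
        NF.fin1ne0, NF.fin2ne0, NF.finmk0, NF.finmk1, NF.finmk2, NF.finmk0', NF.finmk1']
      norm_num
      field_simp
      ring
  · subst hQ
    apply wrap
    fin_cases μ <;> fin_cases ν
    -- (0,0)
    · refine NF.assemble I J _ 0 [] (fun d hd => absurd hd List.not_mem_nil) ?_
      intro φ ψ hφ hψ p hp
      simp only [List.map_nil, List.sum_nil, NF.finmk0, NF.finmk1, NF.finmk2]
      ring
    -- (0,1)
    · refine NF.assemble I J _ 0
        [((fun _ => (1:ℝ)), 0, 0, false), ((fun _ => (-1:ℝ)), 0, 0, true)] ?_ ?_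
      · intro d hd
        simp only [List.mem_cons, List.not_mem_nil, or_false] at hd
        rcases hd with rfl | rfl <;> exact NF.Coef.const _
      · intro φ ψ hφ hψ p hp
        have h0 : p 0 ≠ 0 := NF.U_ne hp
        simp only [NF.dterm, List.map_cons, List.map_nil, List.sum_cons, List.sum_nil,
          if_true, Bool.false_eq_true, if_false, ubd, ubar, NF.wfun, NF.uu, NF.succ0, NF.succ1,
          NF.fin1ne0, NF.fin2ne0, NF.finmk0, NF.finmk1, NF.finmk2, NF.finmk0', NF.finmk1']
        norm_num
        field_simp
        ring
    -- (0,2)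
    · refine NF.assemble I J _ 0
        [((fun _ => (1:ℝ)), 1, 0, false), ((fun _ => (-1:ℝ)), 1, 0, true)] ?_ ?_
      · intro d hd
        simp only [List.mem_cons, List.not_mem_nil, or_false] at hd
        rcases hd with rfl | rfl <;> exact NF.Coef.const _
      · intro φ ψ hφ hψ p hp
        have h0 : p 0 ≠ 0 := NF.U_ne hp
        simp only [NF.dterm, List.map_cons, List.map_nil, List.sum_cons, List.sum_nil,
          if_true, Bool.false_eq_true, if_false, ubd, ubar, NF.wfun, NF.uu, NF.succ0, NF.succ1,
          NF.fin1ne0, NF.fin2ne0, NF.finmk0, NF.finmk1, NF.finmk2, NF.finmk0', NF.finmk1']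
        norm_num
        field_simp
        ring
    -- (1,0)
    · refine NF.assemble I J _ 0
        [((fun _ => (-1:ℝ)), 0, 0, false), ((fun _ => (1:ℝ)), 0, 0, true)] ?_ ?_
      · intro d hd
        simp only [List.mem_cons, List.not_mem_nil, or_false] at hd
        rcases hd with rfl | rfl <;> exact NF.Coef.const _
      · intro φ ψ hφ hψ p hp
        have h0 : p 0 ≠ 0 := NF.U_ne hp
        simp only [NF.dterm, List.map_cons, List.map_nil, List.sum_cons, List.sum_nil,
          if_true, Bool.false_eq_true, if_false, ubd, ubar, NF.wfun, NF.uu, NF.succ0, NF.succ1,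
          NF.fin1ne0, NF.fin2ne0, NF.finmk0, NF.finmk1, NF.finmk2, NF.finmk0', NF.finmk1']
        norm_num
        field_simp
        ring
    -- (1,1)
    · refine NF.assemble I J _ 0 [] (fun d hd => absurd hd List.not_mem_nil) ?_
      intro φ ψ hφ hψ p hp
      simp only [List.map_nil, List.sum_nil, NF.finmk0, NF.finmk1, NF.finmk2]
      ring
    -- (1,2)
    · refine NF.assemble I J _ 0
        [((fun _ => (1:ℝ)), 0, 2, true),
         ((fun _ => (-1:ℝ)), 1, 1, true),
         ((fun p => (-1) * NF.uu 1 p), 0, 0, true),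
         ((fun p => NF.uu 0 p), 1, 0, true),
         ((fun p => (-1) * NF.uu 0 p), 1, 0, false),
         ((fun p => NF.uu 1 p), 0, 0, false)] ?_ ?_
      · intro d hd
        simp only [List.mem_cons, List.not_mem_nil, or_false] at hd
        rcases hd with rfl | rfl | rfl | rfl | rfl | rfl <;>
          first
            | exact NF.Coef.const _
            | exact NF.Coef.mul (NF.Coef.const (-1)) (NF.Coef.u _)
            | exact NF.Coef.u _
      · intro φ ψ hφ hψ p hp
        have h0 : p 0 ≠ 0 := NF.U_ne hp
        simp only [NF.dterm, List.map_cons, List.map_nil, List.sum_cons, List.sum_nil,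
          if_true, Bool.false_eq_true, if_false, ubd, ubar, NF.wfun, NF.uu, NF.succ0, NF.succ1,
          NF.fin1ne0, NF.fin2ne0, NF.finmk0, NF.finmk1, NF.finmk2, NF.finmk0', NF.finmk1']
        norm_num
        field_simp
        ring
    -- (2,0)
    · refine NF.assemble I J _ 0
        [((fun _ => (-1:ℝ)), 1, 0, false), ((fun _ => (1:ℝ)), 1, 0, true)] ?_ ?_
      · intro d hd
        simp only [List.mem_cons, List.not_mem_nil, or_false] at hd
        rcases hd with rfl | rfl <;> exact NF.Coef.const _
      · intro φ ψ hφ hψ p hp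
        have h0 : p 0 ≠ 0 := NF.U_ne hp
        simp only [NF.dterm, List.map_cons, List.map_nil, List.sum_cons, List.sum_nil,
          if_true, Bool.false_eq_true, if_false, ubd, ubar, NF.wfun, NF.uu, NF.succ0, NF.succ1,
          NF.fin1ne0, NF.fin2ne0, NF.finmk0, NF.finmk1, NF.finmk2, NF.finmk0', NF.finmk1']
        norm_num
        field_simp
        ring
    -- (2,1)
    · refine NF.assemble I J _ 0
        [((fun _ => (1:ℝ)), 1, 1, true),
         ((fun _ => (-1:ℝ)), 0, 2, true),
         ((fun p => (-1) * NF.uu 0 p), 1, 0, true),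
         ((fun p => NF.uu 1 p), 0, 0, true),
         ((fun p => (-1) * NF.uu 1 p), 0, 0, false),
         ((fun p => NF.uu 0 p), 1, 0, false)] ?_ ?_
      · intro d hd
        simp only [List.mem_cons, List.not_mem_nil, or_false] at hd
        rcases hd with rfl | rfl | rfl | rfl | rfl | rfl <;>
          first
            | exact NF.Coef.const _
            | exact NF.Coef.mul (NF.Coef.const (-1)) (NF.Coef.u _)
            | exact NF.Coef.u _
      · intro φ ψ hφ hψ p hp
        have h0 : p 0 ≠ 0 := NF.U_ne hp
        simp only [NF.dterm, List.map_cons, List.map_nil, List.sum_cons, List.sum_nil,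
          if_true, Bool.false_eq_true, if_false, ubd, ubar, NF.wfun, NF.uu, NF.succ0, NF.succ1,
          NF.fin1ne0, NF.fin2ne0, NF.finmk0, NF.finmk1, NF.finmk2, NF.finmk0', NF.finmk1']
        norm_num
        field_simp
        ring
    -- (2,2)
    · refine NF.assemble I J _ 0 [] (fun d hd => absurd hd List.not_mem_nil) ?_
      intro φ ψ hφ hψ p hp
      simp only [List.map_nil, List.sum_nil, NF.finmk0, NF.finmk1, NF.finmk2]
      ring
end
end
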